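/- arXiv:math/0410113 — 7 statements merged into one kernel-verified Lean document; each statement's English description precedes it below -/
import Mathlib

section
/- Let λ ∈ ℝ, let G be the generator of a strongly continuous, positive, λ-contractive semigroup on C(E), let α, β ∈ C(E) with α ≥ 0, let T > 0 and f ∈ D(G). Suppose u : [0,T] → C(E) is continuously differentiable with u_0 = f, u_t ∈ D(G) for all t ∈ [0,T], and ∂u_t/∂t = G u_t + β u_t − α u_t² for all t ∈ [0,T]; and suppose ũ : [0,T] → C(E) is continuously differentiable with ũ_t ∈ D(G) for all t ∈ [0,T], ∂ũ_t/∂t ≤ G ũ_t + β ũ_t − α ũ_t² (pointwise on E) for all t ∈ [0,T], and ũ_0 ≤ f. Then ũ_T ≤ u_T. The same conclusion with the reversed inequality (ũ_T ≥ u_T) holds if instead ∂ũ_t/∂t ≥ G ũ_t + β ũ_t − α ũ_t² for all t ∈ [0,T] and ũ_0 ≥ f. -/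
open Filter Topology Set MeasureTheory

variable {E : Type*} [TopologicalSpace E] [CompactSpace E] [TopologicalSpace.MetrizableSpace E] [Nonempty E]

/-- `S` is a semigroup of bounded linear operators on `C(E, ℝ)`:
`S 0 = id` and `S (s+t) = S s ∘ S t` for `s, t ≥ 0`. -/
def IsSemigroupOn (S : ℝ → C(E, ℝ) →L[ℝ] C(E, ℝ)) : Prop :=
  S 0 = ContinuousLinearMap.id ℝ C(E, ℝ) ∧
    ∀ s t : ℝ, 0 ≤ s → 0 ≤ t → S (s + t) = (S s).comp (S t)

/-- Strong continuity: `‖S t f - f‖ → 0` as `t ↓ 0`, for every `f`. -/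
def StronglyContinuousSG (S : ℝ → C(E, ℝ) →L[ℝ] C(E, ℝ)) : Prop :=
  ∀ f : C(E, ℝ), Tendsto (fun t : ℝ => S t f) (𝓝[>] (0 : ℝ)) (𝓝 f)

/-- Positivity: `f ≥ 0` implies `S t f ≥ 0` for all `t ≥ 0`. -/
def PositiveSG (S : ℝ → C(E, ℝ) →L[ℝ] C(E, ℝ)) : Prop :=
  ∀ t : ℝ, 0 ≤ t → ∀ f : C(E, ℝ), 0 ≤ f → 0 ≤ S t f

/-- `l`-contractivity: `‖S t f‖ ≤ exp (l * t) * ‖f‖` for all `t ≥ 0`. -/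
def ContractiveSG (l : ℝ) (S : ℝ → C(E, ℝ) →L[ℝ] C(E, ℝ)) : Prop :=
  ∀ t : ℝ, 0 ≤ t → ∀ f : C(E, ℝ), ‖S t f‖ ≤ Real.exp (l * t) * ‖f‖

/-- `(D, G)` is the generator of `S`: for `f ∈ D`, `t⁻¹ • (S t f - f) → G f` as `t ↓ 0`
(in supremum norm), and `D` consists exactly of those `f` for which this limit exists. -/
def IsGeneratorOf (S : ℝ → C(E, ℝ) →L[ℝ] C(E, ℝ)) (D : Set C(E, ℝ))
    (G : C(E, ℝ) → C(E, ℝ)) : Prop :=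
  (∀ f ∈ D, Tendsto (fun t : ℝ => t⁻¹ • (S t f - f)) (𝓝[>] (0 : ℝ)) (𝓝 (G f))) ∧
    ∀ f : C(E, ℝ),
      (∃ g : C(E, ℝ), Tendsto (fun t : ℝ => t⁻¹ • (S t f - f)) (𝓝[>] (0 : ℝ)) (𝓝 g)) → f ∈ D

/-- A Feller semigroup: strongly continuous positive semigroup with `S t 1 = 1`. -/
def IsFellerSG (S : ℝ → C(E, ℝ) →L[ℝ] C(E, ℝ)) : Prop :=
  IsSemigroupOn S ∧ StronglyContinuousSG S ∧ PositiveSG S ∧ ∀ t : ℝ, 0 ≤ t → S t 1 = 1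

/-- A mild solution of `∂u/∂t = G u + b u - a u²`, `u 0 = f`, relative to the semigroup `S`:
a continuous map `u : [0,∞) → C(E,ℝ)` with
`u t = S t f + ∫₀ᵗ S (t-s) (b * u s - a * (u s)²) ds` for all `t ≥ 0`. -/
def IsMildSolution (S : ℝ → C(E, ℝ) →L[ℝ] C(E, ℝ)) (a b f : C(E, ℝ))
    (u : ℝ → C(E, ℝ)) : Prop :=
  ContinuousOn u (Ici 0) ∧
    ∀ t : ℝ, 0 ≤ t → u t = S t f + ∫ s in (0 : ℝ)..t, S (t - s) (b * u s - a * u s ^ 2)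

set_option linter.unusedSectionVars false
set_option maxHeartbeats 1000000

/-- positive part sup norm -/
noncomputable def posSup (g : C(E,ℝ)) : ℝ := ‖g ⊔ 0‖

lemma posSup_nonneg (g : C(E,ℝ)) : 0 ≤ posSup g := norm_nonneg _

lemma apply_le_posSup (g : C(E,ℝ)) (x : E) : g x ≤ posSup g := by
  have h1 : g x ≤ (g ⊔ 0) x := by simp [ContinuousMap.sup_apply, le_max_left]
  refine h1.trans ?_
  have := ContinuousMap.norm_coe_le_norm (g ⊔ 0) x
  exact (le_abs_self _).trans this

lemma posSup_eq_zero_of_le (g : C(E,ℝ)) (h : g ≤ 0) : posSup g = 0 := by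
  have : g ⊔ 0 = 0 := sup_eq_right.2 h
  simp [posSup, this]

lemma le_zero_of_posSup_le (g : C(E,ℝ)) (h : posSup g ≤ 0) : g ≤ 0 := by
  have h0 : ‖g ⊔ 0‖ = 0 := le_antisymm h (norm_nonneg _)
  have : g ⊔ 0 = 0 := norm_eq_zero.1 h0
  intro x
  have := le_sup_left (a := g) (b := (0 : C(E,ℝ))) x
  simpa [this] using this.trans_eq (by rw [‹g ⊔ 0 = 0›]; rfl)

lemma abs_posSup_sub_le (g h : C(E,ℝ)) : |posSup g - posSup h| ≤ ‖g - h‖ := by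
  have key : ‖(g ⊔ 0) - (h ⊔ 0)‖ ≤ ‖g - h‖ := by
    refine (ContinuousMap.norm_le _ (norm_nonneg _)).2 fun x => ?_
    have : |max (g x) 0 - max (h x) 0| ≤ |g x - h x| := abs_max_sub_max_le_abs _ _ _
    simpa [ContinuousMap.sup_apply, Real.norm_eq_abs] using
      this.trans (ContinuousMap.norm_coe_le_norm (g - h) x)
  calc |posSup g - posSup h| = |‖g ⊔ 0‖ - ‖h ⊔ 0‖| := rfl
    _ ≤ ‖(g ⊔ 0) - (h ⊔ 0)‖ := abs_norm_sub_norm_le _ _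
    _ ≤ ‖g - h‖ := key

lemma lipschitz_posSup : LipschitzWith 1 (posSup (E := E)) := by
  refine LipschitzWith.of_dist_le_mul fun g h => ?_
  rw [Real.dist_eq, dist_eq_norm]
  simpa using abs_posSup_sub_le g h

lemma posSup_eq_of_max (g : C(E,ℝ)) (x : E) (hmax : ∀ y, g y ≤ g x) (h0 : 0 ≤ g x) :
    posSup g = g x := by
  refine le_antisymm ?_ (apply_le_posSup g x)
  refine (ContinuousMap.norm_le _ h0).2 fun y => ?_
  simp only [ContinuousMap.sup_apply, ContinuousMap.zero_apply, Real.norm_eq_abs]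
  rw [abs_of_nonneg (le_max_right _ _)]
  exact max_le (hmax y) h0

lemma exists_posSup_attained (g : C(E,ℝ)) (hpos : 0 < posSup g) :
    ∃ x, g x = posSup g := by
  obtain ⟨x, -, hx'⟩ := isCompact_univ.exists_isMaxOn univ_nonempty
    (f := fun y => |(g ⊔ 0) y|) (continuous_abs.comp (g ⊔ 0).continuous).continuousOn
  have hx : ∀ y, |(g ⊔ 0) y| ≤ |(g ⊔ 0) x| := fun y => hx' (mem_univ y)
  have hnorm : ‖g ⊔ 0‖ = |(g ⊔ 0) x| := by
    refine le_antisymm ((ContinuousMap.norm_le _ (abs_nonneg _)).2 fun y => ?_)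
      (ContinuousMap.norm_coe_le_norm (g ⊔ 0) x)
    simpa using hx y
  refine ⟨x, ?_⟩
  have habs : |(g ⊔ 0) x| = (g ⊔ 0) x := abs_of_nonneg (by
    simp [ContinuousMap.sup_apply, le_max_right])
  have : posSup g = max (g x) 0 := by
    rw [posSup, hnorm, habs]; simp [ContinuousMap.sup_apply]
  rw [this]
  rcases le_or_gt (g x) 0 with h | h
  · exfalso; rw [this, max_eq_right h] at hpos; exact lt_irrefl _ hpos
  · rw [max_eq_left h.le]


lemma gen_sub {S : ℝ → C(E, ℝ) →L[ℝ] C(E, ℝ)} {D : Set C(E, ℝ)} {G : C(E, ℝ) → C(E, ℝ)}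
    (hgen : IsGeneratorOf S D G) {f g : C(E,ℝ)} (hf : f ∈ D) (hg : g ∈ D) :
    f - g ∈ D ∧ G (f - g) = G f - G g := by
  have h : Tendsto (fun t : ℝ => t⁻¹ • (S t (f - g) - (f - g))) (𝓝[>] (0:ℝ)) (𝓝 (G f - G g)) := by
    have h2 := (hgen.1 f hf).sub (hgen.1 g hg)
    refine h2.congr fun t => ?_
    rw [map_sub]
    rw [← smul_sub]
    congr 1
    abel
  have hmem : f - g ∈ D := hgen.2 _ ⟨_, h⟩
  exact ⟨hmem, tendsto_nhds_unique (hgen.1 _ hmem) h⟩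

/-- Positive maximum principle -/
lemma max_principle {l : ℝ} {S : ℝ → C(E, ℝ) →L[ℝ] C(E, ℝ)} {D : Set C(E, ℝ)}
    {G : C(E, ℝ) → C(E, ℝ)} (hpos : PositiveSG S) (hcon : ContractiveSG l S)
    (hgen : IsGeneratorOf S D G) {g : C(E,ℝ)} (hg : g ∈ D) (x : E)
    (hmax : ∀ y, g y ≤ g x) (h0 : 0 ≤ g x) : G g x ≤ l * g x := by
  have hub : ∀ᶠ t in 𝓝[>] (0:ℝ),
      (t⁻¹ • (S t g - g)) x ≤ t⁻¹ * (Real.exp (l * t) - 1) * g x := by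
    filter_upwards [self_mem_nhdsWithin] with t (ht : 0 < t)
    have hle : S t g ≤ S t (g ⊔ 0) := by
      have hd : (0:C(E,ℝ)) ≤ g ⊔ 0 - g := by
        intro y; simp [ContinuousMap.sup_apply, le_max_left]
      have := hpos t ht.le _ hd
      have h2 : S t (g ⊔ 0) - S t g = S t (g ⊔ 0 - g) := by rw [map_sub]
      intro y
      have := this y
      rw [← h2] at this
      simpa [sub_nonneg] using this
    have h1 : (S t g) x ≤ Real.exp (l * t) * g x := by
      refine (hle x).trans ?_
      have h2 : (S t (g ⊔ 0)) x ≤ ‖S t (g ⊔ 0)‖ := by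
        refine (le_abs_self _).trans ?_
        rw [← Real.norm_eq_abs]
        exact ContinuousMap.norm_coe_le_norm _ x
      refine h2.trans ((hcon t ht.le _).trans ?_)
      have hps : ‖g ⊔ 0‖ = g x := posSup_eq_of_max g x hmax h0
      rw [hps]
    have : (t⁻¹ • (S t g - g)) x = t⁻¹ * ((S t g) x - g x) := by
      simp [ContinuousMap.smul_apply]
    rw [this]
    rw [mul_assoc]
    refine mul_le_mul_of_nonneg_left ?_ (inv_nonneg.2 ht.le)
    calc (S t g) x - g x ≤ Real.exp (l * t) * g x - g x := by linarith
      _ = (Real.exp (l * t) - 1) * g x := by ring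
  have hL : Tendsto (fun t : ℝ => (t⁻¹ • (S t g - g)) x) (𝓝[>] (0:ℝ)) (𝓝 (G g x)) := by
    exact ((ContinuousEvalConst.continuous_eval_const x).tendsto _).comp (hgen.1 g hg)
  have hR : Tendsto (fun t : ℝ => t⁻¹ * (Real.exp (l * t) - 1) * g x) (𝓝[>] (0:ℝ))
      (𝓝 (l * g x)) := by
    have hexp : HasDerivAt (fun t : ℝ => Real.exp (l * t)) (l * Real.exp (l * 0) * 1) 0 := by
      simpa [Function.comp_def] using ((Real.hasDerivAt_exp (l * 0)).comp 0 ((hasDerivAt_id 0).const_mul l))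
    have hslope : Tendsto (fun t : ℝ => (Real.exp (l * t) - Real.exp (l * 0)) / (t - 0))
        (𝓝[≠] (0:ℝ)) (𝓝 l) := by
      have h := hasDerivAt_iff_tendsto_slope.1 hexp
      have he : l * Real.exp (l * 0) * 1 = l := by simp
      rw [he] at h
      refine h.congr fun t => ?_
      rw [slope_def_field]
    have h2 : Tendsto (fun t : ℝ => (Real.exp (l * t) - 1) / t) (𝓝[>] (0:ℝ)) (𝓝 l) := by
      refine (hslope.mono_left (nhdsWithin_mono _ fun t ht => ne_of_gt ht)).congr fun t => by
        rw [mul_zero, Real.exp_zero, sub_zero]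
    have h3 := h2.mul_const (g x)
    refine h3.congr fun t => by ring
  exact le_of_tendsto_of_tendsto hL hR hub


lemma comparison {l : ℝ} {S : ℝ → C(E, ℝ) →L[ℝ] C(E, ℝ)} {D : Set C(E, ℝ)}
    {G : C(E, ℝ) → C(E, ℝ)} (hpos : PositiveSG S) (hcon : ContractiveSG l S)
    (hgen : IsGeneratorOf S D G) (α β : C(E,ℝ)) {T : ℝ} (hT : 0 < T)
    (a b a' b' : ℝ → C(E,ℝ))
    (haD : ∀ t ∈ Icc (0:ℝ) T, a t ∈ D) (hbD : ∀ t ∈ Icc (0:ℝ) T, b t ∈ D)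
    (ha : ∀ t ∈ Icc (0:ℝ) T, HasDerivWithinAt a (a' t) (Icc 0 T) t)
    (hb : ∀ t ∈ Icc (0:ℝ) T, HasDerivWithinAt b (b' t) (Icc 0 T) t)
    (hsub : ∀ t ∈ Icc (0:ℝ) T, a' t ≤ G (a t) + β * a t - α * a t ^ 2)
    (hsup : ∀ t ∈ Icc (0:ℝ) T, G (b t) + β * b t - α * b t ^ 2 ≤ b' t)
    (h0 : a 0 ≤ b 0) : a T ≤ b T := by
  set w : ℝ → C(E,ℝ) := fun t => a t - b t with hw_def
  set w' : ℝ → C(E,ℝ) := fun t => a' t - b' t with hw'_def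
  have hw : ∀ t ∈ Icc (0:ℝ) T, HasDerivWithinAt w (w' t) (Icc 0 T) t :=
    fun t ht => (ha t ht).sub (hb t ht)
  have hwc : ContinuousOn w (Icc 0 T) := fun t ht => (hw t ht).continuousWithinAt
  set ψ : ℝ → ℝ := fun t => posSup (w t) with hψ_def
  have hψc : ContinuousOn ψ (Icc 0 T) :=
    lipschitz_posSup.continuous.comp_continuousOn hwc
  have hψ0 : ∀ t, 0 ≤ ψ t := fun t => posSup_nonneg _
  -- bound on solutions
  have hac : ContinuousOn a (Icc 0 T) := fun t ht => (ha t ht).continuousWithinAt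
  have hbc : ContinuousOn b (Icc 0 T) := fun t ht => (hb t ht).continuousWithinAt
  have hnc : ContinuousOn (fun t => ‖a t‖ + ‖b t‖) (Icc 0 T) :=
    (continuous_norm.comp_continuousOn hac).add (continuous_norm.comp_continuousOn hbc)
  obtain ⟨t₀, ht₀, hmax₀⟩ := isCompact_Icc.exists_isMaxOn (f := fun t => ‖a t‖ + ‖b t‖)
    (nonempty_Icc.2 hT.le) hnc
  set B : ℝ := ‖a t₀‖ + ‖b t₀‖ with hB_def
  have hB : ∀ t ∈ Icc (0:ℝ) T, ‖a t‖ + ‖b t‖ ≤ B := fun t ht => hmax₀ ht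
  have hB0 : 0 ≤ B := le_trans (by positivity) (hB 0 (left_mem_Icc.2 hT.le))
  set K : ℝ := |l| + (‖β‖ + ‖α‖ * B) with hK_def
  have hK0 : 0 ≤ K := by positivity
  -- coefficient bound
  have hcoef : ∀ t ∈ Icc (0:ℝ) T, ∀ x : E,
      |β x - α x * (a t x + b t x)| ≤ ‖β‖ + ‖α‖ * B := by
    intro t ht x
    have h1 : |β x| ≤ ‖β‖ := by
      rw [← Real.norm_eq_abs]; exact ContinuousMap.norm_coe_le_norm β x
    have h2 : |α x| ≤ ‖α‖ := by
      rw [← Real.norm_eq_abs]; exact ContinuousMap.norm_coe_le_norm α x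
    have h3 : |a t x + b t x| ≤ B := by
      refine le_trans (abs_add_le _ _) (le_trans ?_ (hB t ht))
      gcongr
      · rw [← Real.norm_eq_abs]; exact ContinuousMap.norm_coe_le_norm (a t) x
      · rw [← Real.norm_eq_abs]; exact ContinuousMap.norm_coe_le_norm (b t) x
    calc |β x - α x * (a t x + b t x)| ≤ |β x| + |α x| * |a t x + b t x| := by
          refine le_trans (abs_sub _ _) ?_
          rw [abs_mul]
      _ ≤ ‖β‖ + ‖α‖ * B := by gcongr
  -- Gronwall
  have key : ∀ s ∈ Icc (0:ℝ) T, ψ s ≤ gronwallBound 0 K 0 (s - 0) := by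
    refine le_gronwallBound_of_liminf_deriv_right_le (f' := fun s => K * ψ s) hψc ?_ ?_
      (fun s _ => le_of_eq (add_zero _).symm)
    swap
    · have hw0 : w 0 ≤ 0 := by
        intro x; simpa [hw_def, sub_nonpos] using h0 x
      exact le_of_eq (posSup_eq_zero_of_le _ hw0)
    intro t ht r hr
    by_contra hcon'
    have hev : ∀ᶠ z in 𝓝[>] t, r ≤ (z - t)⁻¹ * (ψ z - ψ t) := by
      simpa [not_lt] using (not_frequently.1 hcon')
    have htIcc : t ∈ Icc (0:ℝ) T := ⟨ht.1, ht.2.le⟩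
    have hr0 : 0 < r := lt_of_le_of_lt (mul_nonneg hK0 (hψ0 t)) hr
    -- the sequence z n ↓ t
    set z : ℕ → ℝ := fun n => t + (T - t) * (1 / (n + 1)) with hz_def
    have hTt : 0 < T - t := sub_pos.2 ht.2
    have hzgt : ∀ n : ℕ, t < z n := by
      intro n
      have h : (0:ℝ) < (T - t) * (1 / (n + 1)) := by positivity
      simp only [hz_def]
      linarith
    have hzle : ∀ n : ℕ, z n ≤ T := by
      intro n
      have h1 : (1:ℝ) / (n + 1) ≤ 1 := by
        rw [div_le_one (by positivity)]; simp
      have : (T - t) * (1 / (n + 1)) ≤ (T - t) * 1 := by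
        exact mul_le_mul_of_nonneg_left h1 hTt.le
      simp only [hz_def]; linarith
    have hzIcc : ∀ n, z n ∈ Icc (0:ℝ) T := fun n => ⟨ht.1.trans (hzgt n).le, hzle n⟩
    have hznet : Tendsto z atTop (𝓝 t) := by
      have h1 : Tendsto (fun n : ℕ => (T - t) * (1 / (n + 1))) atTop (𝓝 ((T - t) * 0)) :=
        tendsto_const_nhds.mul tendsto_one_div_add_atTop_nhds_zero_nat
      have h2 := h1.const_add t
      rw [mul_zero, add_zero] at h2
      exact h2
    have hzgt' : Tendsto z atTop (𝓝[>] t) :=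
      tendsto_nhdsWithin_of_tendsto_nhds_of_eventually_within _ hznet
        (Eventually.of_forall fun n => hzgt n)
    have hzIcc' : Tendsto z atTop (𝓝[Icc 0 T \ {t}] t) :=
      tendsto_nhdsWithin_of_tendsto_nhds_of_eventually_within _ hznet
        (Eventually.of_forall fun n => ⟨hzIcc n, (hzgt n).ne'⟩)
    have hzIcc'' : Tendsto z atTop (𝓝[Icc 0 T] t) :=
      tendsto_nhdsWithin_of_tendsto_nhds_of_eventually_within _ hznet
        (Eventually.of_forall fun n => hzIcc n)
    -- slope convergence
    have hsl : Tendsto (fun n => (z n - t)⁻¹ • (w (z n) - w t)) atTop (𝓝 (w' t)) := by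
      have h1 := (hasDerivWithinAt_iff_tendsto_slope.1 (hw t htIcc)).comp hzIcc'
      refine h1.congr fun n => ?_
      rw [Function.comp_apply, slope_def_module]
    set δ : ℕ → ℝ := fun n => ‖(z n - t)⁻¹ • (w (z n) - w t) - w' t‖ with hδ_def
    have hδ0 : Tendsto δ atTop (𝓝 0) := by
      rw [tendsto_iff_norm_sub_tendsto_zero] at hsl
      exact hsl
    -- eventually: points attaining the max
    have hrn : ∀ᶠ n in atTop, r ≤ (z n - t)⁻¹ * (ψ (z n) - ψ t) := hzgt'.eventually hev
    have hψpos : ∀ n, r ≤ (z n - t)⁻¹ * (ψ (z n) - ψ t) → 0 < ψ (z n) := by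
      intro n hn
      have h1 : 0 < z n - t := sub_pos.2 (hzgt n)
      have h2 : r * (z n - t) ≤ ψ (z n) - ψ t := by
        rw [inv_mul_eq_div, le_div_iff₀ h1] at hn
        exact hn
      nlinarith [hψ0 t, mul_pos hr0 h1]
    classical
    set x : ℕ → E := fun n =>
      if h : 0 < ψ (z n) then (exists_posSup_attained _ h).choose else Classical.arbitrary E
      with hx_def
    have hxn : ∀ n, 0 < ψ (z n) → w (z n) (x n) = ψ (z n) := by
      intro n h
      simp only [hx_def, dif_pos h]
      exact (exists_posSup_attained _ h).choose_spec
    -- convergent subsequence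
    obtain ⟨x0, -, φ, hφ, hxconv⟩ :=
      isCompact_univ.tendsto_subseq (fun n => mem_univ (x n))
    -- limits needed
    have hψz : Tendsto (fun n => ψ (z n)) atTop (𝓝 (ψ t)) :=
      (hψc t htIcc).tendsto.comp hzIcc''
    have hwz : Tendsto (fun n => ‖w (z n) - w t‖) atTop (𝓝 0) := by
      have h1 : Tendsto (fun n => w (z n)) atTop (𝓝 (w t)) :=
        (hwc t htIcc).tendsto.comp hzIcc''
      rw [tendsto_iff_norm_sub_tendsto_zero] at h1
      exact h1
    -- key eventual inequality: r ≤ w' t (x n) + δ n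
    have hkey : ∀ᶠ n in atTop, r ≤ w' t (x n) + δ n := by
      filter_upwards [hrn] with n hn
      have hψp := hψpos n hn
      have hzt : 0 < z n - t := sub_pos.2 (hzgt n)
      have e1 : ψ (z n) - ψ t ≤ w (z n) (x n) - w t (x n) := by
        have := apply_le_posSup (w t) (x n)
        have h2 := hxn n hψp
        simp only [hψ_def] at this ⊢
        linarith [h2]
      have e2 : r ≤ (z n - t)⁻¹ * (w (z n) (x n) - w t (x n)) := by
        refine hn.trans ?_
        exact mul_le_mul_of_nonneg_left e1 (inv_nonneg.2 hzt.le)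
      have e3 : (z n - t)⁻¹ * (w (z n) (x n) - w t (x n)) =
          ((z n - t)⁻¹ • (w (z n) - w t)) (x n) := by
        simp [ContinuousMap.smul_apply]
      have e4 : ((z n - t)⁻¹ • (w (z n) - w t)) (x n) ≤ w' t (x n) + δ n := by
        have h5 : ((z n - t)⁻¹ • (w (z n) - w t)) (x n) - w' t (x n) ≤ δ n := by
          refine (le_abs_self _).trans ?_
          rw [← Real.norm_eq_abs]
          have : ((z n - t)⁻¹ • (w (z n) - w t)) (x n) - w' t (x n) =
              ((z n - t)⁻¹ • (w (z n) - w t) - w' t) (x n) := by simp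
          rw [this]
          exact ContinuousMap.norm_coe_le_norm _ _
        linarith
      linarith [e2, e3 ▸ e2, e4, e3.symm ▸ e4]
    -- pass to the limit along the subsequence
    have hφat : Tendsto φ atTop atTop := hφ.tendsto_atTop
    have hlim1 : Tendsto (fun k => w' t (x (φ k)) + δ (φ k)) atTop (𝓝 (w' t x0 + 0)) := by
      refine Tendsto.add ?_ (hδ0.comp hφat)
      exact ((w' t).continuous.tendsto x0).comp hxconv
    have hrle : r ≤ w' t x0 := by
      have := ge_of_tendsto hlim1 ((hφat.eventually hkey).mono fun k hk => hk)
      linarith [this]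
    -- x0 is a maximizer of w t with value ψ t
    have hwtx0 : w t x0 = ψ t := by
      refine le_antisymm (apply_le_posSup _ _) ?_
      have hev2 : ∀ᶠ n in atTop, ψ (z n) - ‖w (z n) - w t‖ ≤ w t (x n) := by
        filter_upwards [hrn] with n hn
        have hψp := hψpos n hn
        have h2 := hxn n hψp
        have h3 : w (z n) (x n) - w t (x n) ≤ ‖w (z n) - w t‖ := by
          refine (le_abs_self _).trans ?_
          rw [← Real.norm_eq_abs]
          have : w (z n) (x n) - w t (x n) = (w (z n) - w t) (x n) := by simp
          rw [this]
          exact ContinuousMap.norm_coe_le_norm _ _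
        linarith
      have hlow : Tendsto (fun k => ψ (z (φ k)) - ‖w (z (φ k)) - w t‖) atTop (𝓝 (ψ t - 0)) :=
        ((hψz.comp hφat).sub (hwz.comp hφat))
      have hup : Tendsto (fun k => w t (x (φ k))) atTop (𝓝 (w t x0)) :=
        ((w t).continuous.tendsto x0).comp hxconv
      have := le_of_tendsto_of_tendsto hlow hup
        ((hφat.eventually hev2).mono fun k hk => hk)
      linarith [this]
    have hmaxx0 : ∀ y, w t y ≤ w t x0 := fun y => (apply_le_posSup (w t) y).trans hwtx0.ge
    have hx0nn : 0 ≤ w t x0 := hwtx0 ▸ hψ0 t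
    -- generator and maximum principle
    obtain ⟨hwD, hGw⟩ := gen_sub hgen (haD t htIcc) (hbD t htIcc)
    have hmp : G (w t) x0 ≤ l * w t x0 :=
      max_principle hpos hcon hgen hwD x0 hmaxx0 hx0nn
    -- differential inequality at x0
    have hdi : w' t x0 ≤ G (w t) x0 + (β x0 - α x0 * (a t x0 + b t x0)) * ψ t := by
      have h1 : a' t x0 ≤ G (a t) x0 + β x0 * a t x0 - α x0 * (a t x0) ^ 2 := by
        simpa using hsub t htIcc x0
      have h2 : G (b t) x0 + β x0 * b t x0 - α x0 * (b t x0) ^ 2 ≤ b' t x0 := by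
        simpa using hsup t htIcc x0
      have h3 : G (w t) x0 = G (a t) x0 - G (b t) x0 := by rw [hGw]; simp
      have h4 : w t x0 = a t x0 - b t x0 := by simp [hw_def]
      have h5 : w' t x0 = a' t x0 - b' t x0 := by simp [hw'_def]
      rw [h5, h3, ← hwtx0, h4]
      nlinarith [h1, h2]
    have hfinal : w' t x0 ≤ K * ψ t := by
      have hc := hcoef t htIcc x0
      have h6 : (β x0 - α x0 * (a t x0 + b t x0)) * ψ t ≤ (‖β‖ + ‖α‖ * B) * ψ t :=
        mul_le_mul_of_nonneg_right ((le_abs_self _).trans hc) (hψ0 t)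
      have h7 : l * w t x0 ≤ |l| * ψ t := by
        rw [hwtx0]
        exact mul_le_mul_of_nonneg_right (le_abs_self l) (hψ0 t)
      calc w' t x0 ≤ G (w t) x0 + (β x0 - α x0 * (a t x0 + b t x0)) * ψ t := hdi
        _ ≤ l * w t x0 + (‖β‖ + ‖α‖ * B) * ψ t := by linarith
        _ ≤ |l| * ψ t + (‖β‖ + ‖α‖ * B) * ψ t := by linarith
        _ = K * ψ t := by rw [hK_def]; ring
    exact absurd (hrle.trans hfinal) (not_le.2 hr)
  -- conclude
  have hT' : T ∈ Icc (0:ℝ) T := right_mem_Icc.2 hT.le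
  have := key T hT'
  rw [sub_zero, gronwallBound_ε0_δ0] at this
  have hle : w T ≤ 0 := le_zero_of_posSup_le _ this
  intro y
  have := hle y
  simpa [hw_def, sub_nonpos] using this


/-- Lemma 25 (Sub- and supersolutions): comparison of classical sub/supersolutions of
`∂u/∂t = G u + β u - α u²` on `[0, T]` with a classical solution `u` with `u 0 = f ∈ D(G)`. -/
theorem statement2 (l : ℝ) (S : ℝ → C(E, ℝ) →L[ℝ] C(E, ℝ))
    (D : Set C(E, ℝ)) (G : C(E, ℝ) → C(E, ℝ))
    (hsg : IsSemigroupOn S) (hsc : StronglyContinuousSG S) (hpos : PositiveSG S)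
    (hcon : ContractiveSG l S) (hgen : IsGeneratorOf S D G)
    (α β : C(E, ℝ)) (hα : 0 ≤ α)
    (T : ℝ) (hT : 0 < T) (f : C(E, ℝ)) (hf : f ∈ D)
    -- `u` is a classical solution on `[0, T]` with `u 0 = f`
    (u : ℝ → C(E, ℝ)) (hu0 : u 0 = f) (huD : ∀ t ∈ Icc (0 : ℝ) T, u t ∈ D)
    (hu' : ∀ t ∈ Icc (0 : ℝ) T,
      HasDerivWithinAt u (G (u t) + β * u t - α * u t ^ 2) (Icc 0 T) t)
    (hucont : ContinuousOn (fun t => G (u t) + β * u t - α * u t ^ 2) (Icc 0 T)) :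
    -- subsolutions stay below `u`
    (∀ v v' : ℝ → C(E, ℝ),
      (∀ t ∈ Icc (0 : ℝ) T, v t ∈ D) →
      ContinuousOn v' (Icc 0 T) →
      (∀ t ∈ Icc (0 : ℝ) T, HasDerivWithinAt v (v' t) (Icc 0 T) t) →
      (∀ t ∈ Icc (0 : ℝ) T, v' t ≤ G (v t) + β * v t - α * v t ^ 2) →
      v 0 ≤ f → v T ≤ u T) ∧
    -- supersolutions stay above `u`
    (∀ v v' : ℝ → C(E, ℝ),
      (∀ t ∈ Icc (0 : ℝ) T, v t ∈ D) →
      ContinuousOn v' (Icc 0 T) →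
      (∀ t ∈ Icc (0 : ℝ) T, HasDerivWithinAt v (v' t) (Icc 0 T) t) →
      (∀ t ∈ Icc (0 : ℝ) T, G (v t) + β * v t - α * v t ^ 2 ≤ v' t) →
      f ≤ v 0 → u T ≤ v T) := by
  have huSub : ∀ t ∈ Icc (0 : ℝ) T,
      (fun s => G (u s) + β * u s - α * u s ^ 2) t ≤ G (u t) + β * u t - α * u t ^ 2 :=
    fun t _ => le_refl _
  constructor
  · intro v v' hvD hv'c hv' hvsub hv0
    have h0 : v 0 ≤ u 0 := by rw [hu0]; exact hv0
    exact comparison hpos hcon hgen α β hT v u v' (fun s => G (u s) + β * u s - α * u s ^ 2)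
      hvD huD hv' hu' hvsub (fun t _ => le_refl _) h0
  · intro v v' hvD hv'c hv' hvsup hv0
    have h0 : u 0 ≤ v 0 := by rw [hu0]; exact hv0
    exact comparison hpos hcon hgen α β hT u v (fun s => G (u s) + β * u s - α * u s ^ 2) v'
      huD hvD hu' hv' (fun t _ => le_refl _) hvsup h0
end

section
/- Let λ ∈ ℝ, let S be a strongly continuous, positive, λ-contractive semigroup on C(E) with generator G, and let h ∈ D(G) satisfy h(x) > 0 for all x ∈ E. Define S̃_t f := (1/h)·S_t(h·f) for f ∈ C(E) and t ≥ 0 (pointwise product and quotient). Then (S̃_t)_{t≥0} is a strongly continuous, positive, λ̃-contractive semigroup on C(E), where λ̃ := ‖(Gh)/h‖, and its generator G̃ is given by G̃f = (1/h)·G(h·f) with domain D(G̃) = {f ∈ C(E) : h·f ∈ D(G)}. -/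
open Filter Topology Set MeasureTheory

variable {E : Type*} [TopologicalSpace E] [CompactSpace E] [TopologicalSpace.MetrizableSpace E] [Nonempty E]

set_option maxHeartbeats 1000000 in
/-- Lemma 28 (h-transformed semigroup): if `h ∈ D(G)` with `h > 0`, then
`S̃ t f := (1/h) ⬝ S t (h ⬝ f)` defines a strongly continuous, positive,
`‖(Gh)/h‖`-contractive semigroup on `C(E)` with generator
`G̃ f = (1/h) ⬝ G (h ⬝ f)` on domain `{f : h ⬝ f ∈ D(G)}`. -/
theorem statement5 (l : ℝ) (S : ℝ → C(E, ℝ) →L[ℝ] C(E, ℝ))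
    (D : Set C(E, ℝ)) (G : C(E, ℝ) → C(E, ℝ))
    (hsg : IsSemigroupOn S) (hsc : StronglyContinuousSG S) (hpos : PositiveSG S)
    (hcon : ContractiveSG l S) (hgen : IsGeneratorOf S D G)
    (h : C(E, ℝ)) (hD : h ∈ D) (hpos' : ∀ x : E, 0 < h x) :
    ∃ (S' : ℝ → C(E, ℝ) →L[ℝ] C(E, ℝ)) (G' : C(E, ℝ) → C(E, ℝ)),
      -- `S'` is the weighted semigroup `S̃ t f = (1/h) ⬝ S t (h ⬝ f)`
      (∀ t : ℝ, 0 ≤ t → ∀ f : C(E, ℝ), ∀ x : E, S' t f x = S t (h * f) x / h x) ∧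
      IsSemigroupOn S' ∧ StronglyContinuousSG S' ∧ PositiveSG S' ∧
      -- `S'` is `λ̃`-contractive with `λ̃ = ‖(Gh)/h‖`
      ContractiveSG (‖ContinuousMap.mk (fun x : E => G h x / h x)
        ((G h).continuous.div h.continuous fun x => (hpos' x).ne')‖) S' ∧
      -- its generator is `G̃ f = (1/h) ⬝ G (h ⬝ f)` with domain `{f : h ⬝ f ∈ D}`
      IsGeneratorOf S' {f : C(E, ℝ) | h * f ∈ D} G' ∧
      ∀ f : C(E, ℝ), h * f ∈ D → ∀ x : E, G' f x = G (h * f) x / h x := by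
  classical
  set hinv : C(E, ℝ) := ⟨fun x => (h x)⁻¹, h.continuous.inv₀ fun x => (hpos' x).ne'⟩
    with hinv_def
  have hinv_apply : ∀ x : E, hinv x = (h x)⁻¹ := fun _ => rfl
  set M : C(E, ℝ) → C(E, ℝ) →L[ℝ] C(E, ℝ) :=
    fun g => ContinuousLinearMap.mul ℝ C(E, ℝ) g with M_def
  have M_apply : ∀ g f : C(E, ℝ), M g f = g * f := fun _ _ => rfl
  set S' : ℝ → C(E, ℝ) →L[ℝ] C(E, ℝ) :=
    fun t => (M hinv).comp ((S t).comp (M h)) with S'_def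
  have S'_apply : ∀ (t : ℝ) (f : C(E, ℝ)), S' t f = hinv * S t (h * f) := fun _ _ => rfl
  have hcancel : ∀ y : C(E, ℝ), h * (hinv * y) = y := by
    intro y; ext x
    simp [hinv_apply, mul_inv_cancel_left₀ (hpos' x).ne']
  have hcancel' : ∀ y : C(E, ℝ), hinv * (h * y) = y := by
    intro y; ext x
    simp [hinv_apply, inv_mul_cancel_left₀ (hpos' x).ne']
  -- monotonicity of S t
  have Smono : ∀ t : ℝ, 0 ≤ t → ∀ g g' : C(E, ℝ), g ≤ g' → S t g ≤ S t g' := by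
    intro t ht g g' hle
    have := hpos t ht (g' - g) (by simpa [sub_nonneg] using hle)
    rw [map_sub] at this
    simpa [sub_nonneg] using this
  set k : C(E, ℝ) := ContinuousMap.mk (fun x : E => G h x / h x)
      ((G h).continuous.div h.continuous fun x => (hpos' x).ne') with k_def
  set lam : ℝ := ‖k‖ with lam_def
  have hGh : ∀ x : E, G h x ≤ lam * h x := by
    intro x
    have h1 : G h x / h x ≤ lam := le_trans (le_abs_self _) (k.norm_coe_le_norm x)
    exact (div_le_iff₀ (hpos' x)).mp h1
  -- minimum of h
  obtain ⟨x0, -, hx0⟩ := isCompact_univ.exists_isMinOn univ_nonempty h.continuous.continuousOn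
  set m : ℝ := h x0 with m_def
  have hm : 0 < m := hpos' x0
  have hmle : ∀ x : E, m ≤ h x := fun x => hx0 (mem_univ x)
  -- Key small-time estimate
  have keyA : ∀ ε : ℝ, 0 < ε → ∃ δ : ℝ, 0 < δ ∧ ∀ t : ℝ, 0 < t → t ≤ δ →
      ∀ x : E, S t h x ≤ Real.exp ((lam + ε) * t) * h x := by
    intro ε hε
    have htend := hgen.1 h hD
    have hev : ∀ᶠ t in 𝓝[>] (0 : ℝ), ‖t⁻¹ • (S t h - h) - G h‖ < ε * m := by
      have := htend (Metric.ball_mem_nhds (G h) (mul_pos hε hm))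
      filter_upwards [this] with t ht
      simpa [Metric.mem_ball, dist_eq_norm] using ht
    obtain ⟨δ, hδ, hδ'⟩ := Metric.mem_nhdsWithin_iff.mp hev
    refine ⟨δ / 2, by positivity, fun t ht htδ x => ?_⟩
    have hmem : t ∈ Metric.ball (0 : ℝ) δ ∩ Ioi 0 := by
      constructor
      · simp only [Metric.mem_ball, Real.dist_eq, sub_zero]
        rw [abs_of_pos ht]; linarith
      · exact ht
    have hb := hδ' hmem
    simp only [mem_setOf_eq] at hb
    have hx : |t⁻¹ * (S t h x - h x) - G h x| ≤ ε * m := by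
      have := ((t⁻¹ • (S t h - h) - G h)).norm_coe_le_norm x
      have heq : (t⁻¹ • (S t h - h) - G h) x = t⁻¹ * (S t h x - h x) - G h x := by
        simp
      rw [heq] at this
      calc |t⁻¹ * (S t h x - h x) - G h x| ≤ ‖t⁻¹ • (S t h - h) - G h‖ := this
        _ ≤ ε * m := le_of_lt hb
    have h2 : t⁻¹ * (S t h x - h x) ≤ G h x + ε * m := by
      have := (abs_le.mp hx).2; linarith
    have h3 : S t h x ≤ h x + t * (lam * h x + ε * h x) := by
      have h4 : S t h x - h x ≤ t * (G h x + ε * m) := by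
        have := mul_le_mul_of_nonneg_left h2 (le_of_lt ht)
        rwa [mul_inv_cancel_left₀ ht.ne'] at this
      have h5 : G h x + ε * m ≤ lam * h x + ε * h x := by
        have := hGh x
        have := hmle x
        nlinarith
      nlinarith
    have h6 : (1 + (lam + ε) * t) * h x ≤ Real.exp ((lam + ε) * t) * h x := by
      apply mul_le_mul_of_nonneg_right _ (le_of_lt (hpos' x))
      have := Real.add_one_le_exp ((lam + ε) * t)
      linarith
    calc S t h x ≤ (1 + (lam + ε) * t) * h x := by nlinarith
      _ ≤ Real.exp ((lam + ε) * t) * h x := h6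
  -- Full-time estimate
  have keyB : ∀ t : ℝ, 0 ≤ t → ∀ x : E, S t h x ≤ Real.exp (lam * t) * h x := by
    intro t ht x
    rcases eq_or_lt_of_le ht with rfl | htpos
    · simp [hsg.1]
    have keyε : ∀ ε : ℝ, 0 < ε → S t h x ≤ Real.exp ((lam + ε) * t) * h x := by
      intro ε hε
      obtain ⟨δ, hδ, hA⟩ := keyA ε hε
      obtain ⟨n, hn⟩ := exists_nat_ge (t / δ)
      set N : ℕ := max n 1 with N_def
      have hN1 : 1 ≤ N := le_max_right n 1
      have hNpos : (0 : ℝ) < N := by exact_mod_cast Nat.lt_of_lt_of_le Nat.zero_lt_one hN1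
      set s : ℝ := t / N with s_def
      have hspos : 0 < s := div_pos htpos hNpos
      have hsδ : s ≤ δ := by
        rw [s_def, div_le_iff₀ hNpos]
        have hn' : t / δ ≤ (N : ℝ) := le_trans hn (by exact_mod_cast le_max_left n 1)
        calc t = (t / δ) * δ := by field_simp
          _ ≤ (N : ℝ) * δ := mul_le_mul_of_nonneg_right hn' (le_of_lt hδ)
          _ = δ * N := mul_comm _ _
      have claim : ∀ j : ℕ, ∀ y : E,
          S ((j : ℝ) * s) h y ≤ Real.exp ((lam + ε) * ((j : ℝ) * s)) * h y := by
        intro j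
        induction j with
        | zero => intro y; simp [hsg.1]
        | succ j ih =>
          intro y
          have hstep : S (((j : ℝ) + 1) * s) = (S s).comp (S ((j : ℝ) * s)) := by
            have : ((j : ℝ) + 1) * s = s + (j : ℝ) * s := by ring
            rw [this]
            exact hsg.2 s ((j : ℝ) * s) (le_of_lt hspos)
              (mul_nonneg (Nat.cast_nonneg j) (le_of_lt hspos))
          set c : ℝ := Real.exp ((lam + ε) * ((j : ℝ) * s)) with c_def
          have hcpos : 0 < c := Real.exp_pos _
          have hle : S ((j : ℝ) * s) h ≤ c • h := by
            rw [ContinuousMap.le_def]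
            intro z
            simpa using ih z
          have h7 : S s (S ((j : ℝ) * s) h) ≤ S s (c • h) :=
            Smono s (le_of_lt hspos) _ _ hle
          have h8 : S s (c • h) y = c * S s h y := by rw [_root_.map_smul]; rfl
          have h9 : S s h y ≤ Real.exp ((lam + ε) * s) * h y := hA s hspos hsδ y
          have h10 := ContinuousMap.le_def.mp h7 y
          push_cast
          rw [hstep]
          calc (S s).comp (S ((j : ℝ) * s)) h y = S s (S ((j : ℝ) * s) h) y := rfl
            _ ≤ S s (c • h) y := h10
            _ = c * S s h y := h8
            _ ≤ c * (Real.exp ((lam + ε) * s) * h y) :=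
                mul_le_mul_of_nonneg_left h9 (le_of_lt hcpos)
            _ = Real.exp ((lam + ε) * (((j : ℝ) + 1) * s)) * h y := by
                rw [c_def, ← mul_assoc, ← Real.exp_add]; ring_nf
      have hts : (N : ℝ) * s = t := by
        rw [s_def]; field_simp
      have := claim N x
      rwa [hts] at this
    have htends : Tendsto (fun ε : ℝ => Real.exp ((lam + ε) * t) * h x) (𝓝[>] 0)
        (𝓝 (Real.exp (lam * t) * h x)) := by
      have hc : Continuous (fun ε : ℝ => Real.exp ((lam + ε) * t) * h x) :=
        (Real.continuous_exp.comp ((continuous_const.add continuous_id).mul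
          continuous_const)).mul continuous_const
      have := hc.tendsto 0
      simp only [add_zero] at this
      exact this.mono_left nhdsWithin_le_nhds
    exact ge_of_tendsto htends (eventually_nhdsWithin_of_forall fun ε hε => keyε ε hε)
  -- the transformed quantities
  refine ⟨S', fun f => hinv * G (h * f), ?_, ?_, ?_, ?_, ?_, ?_, ?_⟩
  · -- formula
    intro t ht f x
    rw [S'_apply]
    simp [hinv_apply, inv_mul_eq_div]
  · -- semigroup
    constructor
    · ext f x
      simp [S'_def, M_apply, hsg.1, hinv_apply, inv_mul_cancel_left₀ (hpos' x).ne']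
    · intro s t hs ht
      ext f x
      have h1 : S (s + t) (h * f) = S s (S t (h * f)) := by rw [hsg.2 s t hs ht]; rfl
      have h2 : h * (hinv * S t (h * f)) = S t (h * f) := hcancel _
      simp only [S'_def, ContinuousLinearMap.comp_apply, M_apply]
      rw [h1, h2]
  · -- strong continuity
    intro f
    have h1 : Tendsto (fun t : ℝ => M hinv (S t (h * f))) (𝓝[>] 0) (𝓝 (M hinv (h * f))) :=
      ((M hinv).continuous.tendsto _).comp (hsc (h * f))
    have h2 : M hinv (h * f) = f := by rw [M_apply]; exact hcancel' f
    rw [h2] at h1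
    exact h1
  · -- positivity
    intro t ht f hf
    rw [ContinuousMap.le_def]
    intro x
    have h1 : (0 : C(E, ℝ)) ≤ h * f := by
      rw [ContinuousMap.le_def]
      intro y
      have := ContinuousMap.le_def.mp hf y
      simp only [ContinuousMap.zero_apply, ContinuousMap.mul_apply] at *
      exact mul_nonneg (le_of_lt (hpos' y)) this
    have h2 := ContinuousMap.le_def.mp (hpos t ht (h * f) h1) x
    simp only [ContinuousMap.zero_apply] at h2 ⊢
    rw [S'_apply]
    simp only [ContinuousMap.mul_apply, hinv_apply]
    exact mul_nonneg (inv_nonneg.mpr (hpos' x).le) h2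
  · -- contractivity
    intro t ht f
    rw [ContinuousMap.norm_le _ (mul_nonneg (Real.exp_pos _).le (norm_nonneg f))]
    intro x
    have hb1 : h * f ≤ ‖f‖ • h := by
      rw [ContinuousMap.le_def]; intro y
      have h1 : |f y| ≤ ‖f‖ := f.norm_coe_le_norm y
      have h2 := (abs_le.mp h1).2
      have := hpos' y
      simp only [ContinuousMap.mul_apply, ContinuousMap.smul_apply, smul_eq_mul]
      nlinarith
    have hb2 : -(‖f‖ • h) ≤ h * f := by
      rw [ContinuousMap.le_def]; intro y
      have h1 : |f y| ≤ ‖f‖ := f.norm_coe_le_norm y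
      have h2 := (abs_le.mp h1).1
      have := hpos' y
      simp only [ContinuousMap.mul_apply, ContinuousMap.smul_apply, smul_eq_mul,
        ContinuousMap.neg_apply]
      nlinarith
    have hub := ContinuousMap.le_def.mp (Smono t ht _ _ hb1) x
    have hlb := ContinuousMap.le_def.mp (Smono t ht _ _ hb2) x
    rw [_root_.map_smul] at hub
    have hlb' : S t (-(‖f‖ • h)) = -(‖f‖ • S t h) := by rw [map_neg, _root_.map_smul]
    rw [hlb'] at hlb
    simp only [ContinuousMap.smul_apply, smul_eq_mul, ContinuousMap.neg_apply] at hub hlb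
    have hSh := keyB t ht x
    have habs : |S t (h * f) x| ≤ ‖f‖ * (Real.exp (lam * t) * h x) := by
      rw [abs_le]
      constructor
      · have : ‖f‖ * S t h x ≤ ‖f‖ * (Real.exp (lam * t) * h x) :=
          mul_le_mul_of_nonneg_left hSh (norm_nonneg f)
        linarith
      · calc S t (h * f) x ≤ ‖f‖ * S t h x := hub
          _ ≤ ‖f‖ * (Real.exp (lam * t) * h x) :=
            mul_le_mul_of_nonneg_left hSh (norm_nonneg f)
    rw [S'_apply]
    simp only [ContinuousMap.mul_apply, hinv_apply, Real.norm_eq_abs]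
    rw [abs_mul, abs_inv, abs_of_pos (hpos' x)]
    rw [inv_mul_le_iff₀ (hpos' x)]
    calc |S t (h * f) x| ≤ ‖f‖ * (Real.exp (lam * t) * h x) := habs
      _ = h x * (Real.exp (lam * t) * ‖f‖) := by ring
  · -- generator
    constructor
    · intro f hf
      simp only [mem_setOf_eq] at hf
      have heq : (fun t : ℝ => t⁻¹ • (S' t f - f)) =
          fun t : ℝ => M hinv (t⁻¹ • (S t (h * f) - h * f)) := by
        funext t
        rw [_root_.map_smul, map_sub, M_apply, M_apply, ← S'_apply, hcancel']
      rw [heq]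
      exact ((M hinv).continuous.tendsto _).comp (hgen.1 (h * f) hf)
    · intro f ⟨g, hg⟩
      simp only [mem_setOf_eq]
      apply hgen.2 (h * f)
      refine ⟨h * g, ?_⟩
      have heq : (fun t : ℝ => t⁻¹ • (S t (h * f) - h * f)) =
          fun t : ℝ => M h (t⁻¹ • (S' t f - f)) := by
        funext t
        rw [_root_.map_smul, map_sub, M_apply, M_apply, S'_apply, hcancel]
      rw [heq]
      exact ((M h).continuous.tendsto _).comp hg
  · -- formula for the generator
    intro f hf x
    simp [hinv_apply, inv_mul_eq_div]
end

section
/- Let λ ∈ ℝ, let S be a strongly continuous, positive, λ-contractive semigroup on C(E) with generator G, and let h ∈ D(G) satisfy h(x) > 0 for all x ∈ E. Then S_t h ≤ e^{t‖(Gh)/h‖} h pointwise on E, for all t ≥ 0. -/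
open Filter Topology Set MeasureTheory

variable {E : Type*} [TopologicalSpace E] [CompactSpace E] [TopologicalSpace.MetrizableSpace E] [Nonempty E]

set_option linter.unusedSectionVars false

-- continuity of orbit
lemma sg_contOn (l : ℝ) (S : ℝ → C(E, ℝ) →L[ℝ] C(E, ℝ))
    (hsg : IsSemigroupOn S)
    (hsc : ∀ f : C(E, ℝ), Tendsto (fun t : ℝ => S t f) (𝓝[>] (0 : ℝ)) (𝓝 f))
    (hcon : ∀ t : ℝ, 0 ≤ t → ∀ f : C(E, ℝ), ‖S t f‖ ≤ Real.exp (l * t) * ‖f‖)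
    (f : C(E, ℝ)) : ContinuousOn (fun t => S t f) (Ici 0) := by
  intro t ht
  have ht0 : (0:ℝ) ≤ t := ht
  -- g tends to 0 on 𝓝[Ici 0] 0
  have hg : Tendsto (fun s : ℝ => ‖S s f - f‖) (𝓝[Ici 0] 0) (𝓝 0) := by
    rw [← Set.Ioi_insert, nhdsWithin_insert, tendsto_sup]
    constructor
    · have h0 : ‖S (0:ℝ) f - f‖ = 0 := by rw [hsg.1]; simp
      have h1 : Tendsto (fun s : ℝ => ‖S s f - f‖) (pure (0:ℝ)) (𝓝 ‖S (0:ℝ) f - f‖) :=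
        tendsto_pure_nhds _ 0
      rwa [h0] at h1
    · have h1 : Tendsto (fun s : ℝ => S s f - f) (𝓝[>] (0:ℝ)) (𝓝 0) := by
        have := (hsc f).sub_const f
        rwa [sub_self] at this
      simpa using h1.norm
  have habs : Tendsto (fun u : ℝ => |u - t|) (𝓝[Ici 0] t) (𝓝[Ici 0] 0) := by
    apply tendsto_nhdsWithin_of_tendsto_nhds_of_eventually_within
    · have : Tendsto (fun u : ℝ => |u - t|) (𝓝 t) (𝓝 |t - t|) :=
        ((continuous_id.sub continuous_const).abs.tendsto t)
      simpa using this.mono_left nhdsWithin_le_nhds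
    · filter_upwards with u using mem_Ici.2 (abs_nonneg _)
  have hlim : Tendsto (fun u : ℝ => Real.exp (|l| * (t+1)) * ‖S (|u - t|) f - f‖)
      (𝓝[Ici 0] t) (𝓝 0) := by
    have h1 := (hg.comp habs).const_mul (Real.exp (|l| * (t+1)))
    rwa [mul_zero] at h1
  have key : ∀ᶠ u in 𝓝[Ici 0] t, ‖S u f - S t f‖ ≤
      Real.exp (|l| * (t+1)) * ‖S (|u - t|) f - f‖ := by
    have hmem : Icc (t-1) (t+1) ∈ 𝓝[Ici 0] t :=
      nhdsWithin_le_nhds (Icc_mem_nhds (by linarith) (by linarith))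
    filter_upwards [hmem, self_mem_nhdsWithin] with u hu1 hu0
    have hu : (0:ℝ) ≤ u := hu0
    rcases le_total t u with hle | hle
    · have h1 : S u f - S t f = S t (S (u - t) f - f) := by
        have h2 := hsg.2 t (u - t) ht0 (by linarith)
        rw [show t + (u - t) = u by ring] at h2
        rw [map_sub, h2, ContinuousLinearMap.comp_apply]
      rw [h1, abs_of_nonneg (by linarith : (0:ℝ) ≤ u - t)]
      calc ‖S t (S (u-t) f - f)‖ ≤ Real.exp (l * t) * ‖S (u-t) f - f‖ := hcon t ht0 _
        _ ≤ Real.exp (|l| * (t+1)) * ‖S (u-t) f - f‖ := by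
            have : l * t ≤ |l| * (t+1) := by nlinarith [le_abs_self l, abs_nonneg l]
            exact mul_le_mul_of_nonneg_right (Real.exp_le_exp.2 this) (norm_nonneg _)
    · have h1 : S t f - S u f = S u (S (t - u) f - f) := by
        have h2 := hsg.2 u (t - u) hu (by linarith)
        rw [show u + (t - u) = t by ring] at h2
        rw [map_sub, h2, ContinuousLinearMap.comp_apply]
      rw [← norm_sub_rev, h1, abs_of_nonpos (by linarith : u - t ≤ 0),
        show -(u - t) = t - u by ring]
      have hu1' : u ≤ t + 1 := by linarith [hu1.2]
      calc ‖S u (S (t-u) f - f)‖ ≤ Real.exp (l * u) * ‖S (t-u) f - f‖ := hcon u hu _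
        _ ≤ Real.exp (|l| * (t+1)) * ‖S (t-u) f - f‖ := by
            have : l * u ≤ |l| * (t+1) := by nlinarith [le_abs_self l, abs_nonneg l]
            exact mul_le_mul_of_nonneg_right (Real.exp_le_exp.2 this) (norm_nonneg _)
  have := squeeze_zero_norm' key hlim
  have h2 : Tendsto (fun u => S u f) (𝓝[Ici 0] t) (𝓝 (S t f)) := by
    have := this.add_const (S t f)
    simpa using this
  exact h2

-- right derivative of orbit evaluated at a point
lemma sg_deriv (S : ℝ → C(E, ℝ) →L[ℝ] C(E, ℝ)) (hsg : IsSemigroupOn S)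
    (h g : C(E, ℝ))
    (hgen : Tendsto (fun s : ℝ => s⁻¹ • (S s h - h)) (𝓝[>] (0:ℝ)) (𝓝 g))
    (x : E) (t : ℝ) (ht : 0 ≤ t) :
    HasDerivWithinAt (fun u : ℝ => (S u h : C(E, ℝ)) x) ((S t g : C(E, ℝ)) x) (Ici t) t := by
  rw [hasDerivWithinAt_iff_tendsto_slope, Set.Ici_sdiff_left]
  have hsub : Tendsto (fun z : ℝ => z - t) (𝓝[>] t) (𝓝[>] (0:ℝ)) := by
    apply tendsto_nhdsWithin_of_tendsto_nhds_of_eventually_within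
    · have : Tendsto (fun z : ℝ => z - t) (𝓝 t) (𝓝 (t - t)) :=
        (continuous_id.sub continuous_const).tendsto t
      simpa using this.mono_left nhdsWithin_le_nhds
    · filter_upwards [self_mem_nhdsWithin] with z hz
      exact sub_pos.2 (mem_Ioi.1 hz)
  have hcontev : Continuous fun v : C(E,ℝ) => (S t v : C(E,ℝ)) x :=
    (continuous_eval_const x).comp (S t).continuous
  have h2 : Tendsto (fun z : ℝ => (S t ((z - t)⁻¹ • (S (z - t) h - h)) : C(E,ℝ)) x)
      (𝓝[>] t) (𝓝 ((S t g : C(E,ℝ)) x)) :=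
    (hcontev.tendsto g).comp (hgen.comp hsub)
  refine h2.congr' ?_
  filter_upwards [self_mem_nhdsWithin] with z hz
  have hz' : t < z := hz
  have hzt : (0:ℝ) < z - t := sub_pos.2 hz'
  have hS : S z h = S t (S (z - t) h) := by
    have h2 := hsg.2 t (z - t) ht hzt.le
    rw [show t + (z - t) = z by ring] at h2
    rw [h2, ContinuousLinearMap.comp_apply]
  rw [slope_def_field]
  rw [(S t).map_smul, (S t).map_sub, ContinuousMap.smul_apply, ContinuousMap.sub_apply, ← hS,
    smul_eq_mul, div_eq_inv_mul]

/-- From the proof of Lemma 28: if `h ∈ D(G)` with `h > 0`, then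
`S t h ≤ exp (t ‖(Gh)/h‖) ⬝ h` pointwise, for all `t ≥ 0`. -/
theorem statement6 (l : ℝ) (S : ℝ → C(E, ℝ) →L[ℝ] C(E, ℝ))
    (D : Set C(E, ℝ)) (G : C(E, ℝ) → C(E, ℝ))
    (hsg : IsSemigroupOn S) (hsc : StronglyContinuousSG S) (hpos : PositiveSG S)
    (hcon : ContractiveSG l S) (hgen : IsGeneratorOf S D G)
    (h : C(E, ℝ)) (hD : h ∈ D) (hpos' : ∀ x : E, 0 < h x) :
    ∀ t : ℝ, 0 ≤ t → ∀ x : E,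
      S t h x ≤ Real.exp (t * ‖ContinuousMap.mk (fun x : E => G h x / h x)
        ((G h).continuous.div h.continuous fun x => (hpos' x).ne')‖) * h x := by
  intro T hT x
  set q : C(E, ℝ) := ContinuousMap.mk (fun x : E => G h x / h x)
      ((G h).continuous.div h.continuous fun x => (hpos' x).ne') with hq
  set c : ℝ := ‖q‖ with hc
  have hGle : (0 : C(E, ℝ)) ≤ c • h - G h := by
    rw [ContinuousMap.le_def]
    intro y
    simp only [ContinuousMap.zero_apply, ContinuousMap.sub_apply, ContinuousMap.smul_apply,
      smul_eq_mul]
    have h1 : |q y| ≤ c := q.norm_coe_le_norm y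
    have h3 : G h y = q y * h y := by
      show G h y = (G h y / h y) * h y
      rw [div_mul_cancel₀ _ (hpos' y).ne']
    have h4 := (hpos' y).le
    nlinarith [le_abs_self (q y)]
  have hkey : ∀ t : ℝ, 0 ≤ t → (S t (G h) : C(E, ℝ)) x ≤ c * (S t h : C(E, ℝ)) x := by
    intro t ht
    have h1 := hpos t ht _ hGle
    have h2 : (S t (c • h - G h) : C(E, ℝ)) x
        = c * (S t h : C(E, ℝ)) x - (S t (G h) : C(E, ℝ)) x := by
      rw [map_sub, (S t).map_smul, ContinuousMap.sub_apply, ContinuousMap.smul_apply, smul_eq_mul]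
    have h3 : (0 : ℝ) ≤ (S t (c • h - G h) : C(E, ℝ)) x := by
      have h5 := ContinuousMap.le_def.1 h1 x
      simpa using h5
    rw [h2] at h3
    linarith
  have hcont : ContinuousOn (fun u : ℝ => (S u h : C(E, ℝ)) x) (Ici 0) :=
    (continuous_eval_const x).comp_continuousOn (sg_contOn l S hsg hsc hcon h)
  have hderiv : ∀ t : ℝ, 0 ≤ t →
      HasDerivWithinAt (fun u : ℝ => (S u h : C(E, ℝ)) x) ((S t (G h) : C(E, ℝ)) x) (Ici t) t :=
    fun t ht => sg_deriv S hsg h (G h) (hgen.1 h hD) x t ht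
  set φ : ℝ → ℝ := fun u => Real.exp (-c * u) * (S u h : C(E, ℝ)) x with hφ
  set φ' : ℝ → ℝ := fun u => (-c * Real.exp (-c * u)) * (S u h : C(E, ℝ)) x
      + Real.exp (-c * u) * (S u (G h) : C(E, ℝ)) x with hφ'
  have hφd : ∀ t ∈ Ico (0 : ℝ) T, HasDerivWithinAt φ (φ' t) (Ici t) t := by
    intro t ht
    have hexp : HasDerivWithinAt (fun u : ℝ => Real.exp (-c * u)) (-c * Real.exp (-c * t))
        (Ici t) t := by
      have h1 : HasDerivAt (fun u : ℝ => Real.exp (-c * u)) (Real.exp (-c * t) * (-c)) t := by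
        have h2 := ((hasDerivAt_id t).const_mul (-c)).exp
        simpa using h2
      have h3 : Real.exp (-c * t) * (-c) = -c * Real.exp (-c * t) := by ring
      rw [h3] at h1
      exact h1.hasDerivWithinAt
    exact hexp.mul (hderiv t ht.1)
  have hφc : ContinuousOn φ (Icc 0 T) := by
    apply ContinuousOn.mul
    · exact (Real.continuous_exp.comp (continuous_const.mul continuous_id)).continuousOn
    · exact hcont.mono Icc_subset_Ici_self
  have ha : φ 0 ≤ h x := by
    have h0 : (S (0:ℝ)) h = h := by rw [hsg.1]; rfl
    simp [hφ, h0]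
  have hbound : ∀ t ∈ Ico (0 : ℝ) T, φ' t ≤ 0 := by
    intro t ht
    have h1 := hkey t ht.1
    have h2 := (Real.exp_pos (-c * t)).le
    simp only [hφ']
    nlinarith
  have hmvt : φ T ≤ h x := by
    have h6 := image_le_of_deriv_right_le_deriv_boundary (f := φ) (f' := φ')
      (a := 0) (b := T) (B := fun _ => h x) (B' := fun _ => 0) hφc hφd ha
      continuousOn_const (fun t _ => hasDerivWithinAt_const t _ _) hbound
    exact h6 (right_mem_Icc.2 hT)
  have hmulexp : Real.exp (-c * T) * Real.exp (T * c) = 1 := by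
    rw [← Real.exp_add, show -c * T + T * c = 0 by ring, Real.exp_zero]
  calc (S T h : C(E, ℝ)) x
      = Real.exp (T * c) * (Real.exp (-c * T) * (S T h : C(E, ℝ)) x) := by
        rw [← mul_assoc, mul_comm (Real.exp (T * c)), hmulexp, one_mul]
    _ ≤ Real.exp (T * c) * h x :=
        mul_le_mul_of_nonneg_left hmvt (Real.exp_pos _).le
end

section
/- Let G be the generator of a Feller semigroup on C(E) and let h ∈ D(G) satisfy h(x) > 0 for all x ∈ E. Then the operator G^h f := (1/h)·(G(h·f) − (Gh)·f), with domain D(G^h) := {f ∈ C(E) : h·f ∈ D(G)}, is the generator of a Feller semigroup on C(E), i.e., of a strongly continuous, positive semigroup (P^h_t)_{t≥0} with P^h_t 1 = 1 for all t ≥ 0. -/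
open Filter Topology Set MeasureTheory

variable {E : Type*} [TopologicalSpace E] [CompactSpace E] [TopologicalSpace.MetrizableSpace E] [Nonempty E]

set_option maxHeartbeats 1000000

namespace Aux8

set_option linter.unusedSectionVars false

/-- A (clamped) contraction semigroup on `C(E,ℝ)`: identity for `t ≤ 0`. -/
structure SGData (P : ℝ → C(E, ℝ) →L[ℝ] C(E, ℝ)) : Prop where
  idnp : ∀ t ≤ (0:ℝ), P t = ContinuousLinearMap.id ℝ C(E, ℝ)
  comp : ∀ s t : ℝ, 0 ≤ s → 0 ≤ t → P (s + t) = (P s).comp (P t)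
  norm_le' : ∀ (t : ℝ) (f : C(E,ℝ)), ‖P t f‖ ≤ ‖f‖
  pos : ∀ (t : ℝ) (f : C(E,ℝ)), 0 ≤ f → 0 ≤ P t f
  cont : ∀ f : C(E,ℝ), Continuous fun t => P t f

variable {P : ℝ → C(E, ℝ) →L[ℝ] C(E, ℝ)} {W : C(E,ℝ)}

theorem SGData.id_apply (hP : SGData P) {t : ℝ} (ht : t ≤ 0) (f : C(E,ℝ)) : P t f = f := by
  rw [hP.idnp t ht]; rfl

theorem SGData.comp_apply (hP : SGData P) {s t : ℝ} (hs : 0 ≤ s) (ht : 0 ≤ t) (f : C(E,ℝ)) :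
    P (s + t) f = P s (P t f) := by rw [hP.comp s t hs ht]; rfl

/-- Joint continuity of `(t, g) ↦ P t g`. -/
theorem SGData.jointCont (hP : SGData P) :
    Continuous fun p : ℝ × C(E,ℝ) => P p.1 p.2 := by
  rw [continuous_iff_continuousAt]
  rintro ⟨t₀, g₀⟩
  have key : (fun p : ℝ × C(E,ℝ) => P p.1 p.2)
      = fun p => P p.1 (p.2 - g₀) + P p.1 g₀ := by
    funext p; rw [← map_add, sub_add_cancel]
  rw [key]
  have h1 : Tendsto (fun p : ℝ × C(E,ℝ) => P p.1 (p.2 - g₀)) (𝓝 (t₀, g₀)) (𝓝 (0:C(E,ℝ))) := by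
    rw [tendsto_zero_iff_norm_tendsto_zero]
    have hn : Tendsto (fun p : ℝ × C(E,ℝ) => ‖p.2 - g₀‖) (𝓝 (t₀, g₀)) (𝓝 (0:ℝ)) := by
      have : Tendsto (fun p : ℝ × C(E,ℝ) => p.2 - g₀) (𝓝 (t₀, g₀)) (𝓝 (g₀ - g₀)) :=
        (continuous_snd.sub continuous_const).tendsto _
      simpa using this.norm
    exact squeeze_zero (fun p => norm_nonneg _) (fun p => hP.norm_le' p.1 (p.2 - g₀)) hn
  have h2 : Tendsto (fun p : ℝ × C(E,ℝ) => P p.1 g₀) (𝓝 (t₀, g₀)) (𝓝 (P t₀ g₀)) :=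
    ((hP.cont g₀).comp continuous_fst).tendsto _
  have h3 := h1.add h2
  rw [zero_add] at h3
  show Tendsto _ _ (𝓝 (P t₀ (g₀ - g₀) + P t₀ g₀))
  rw [sub_self, map_zero, zero_add]
  exact h3

/-- Picard/Dyson iterates for the perturbed semigroup. -/
noncomputable def picard (P : ℝ → C(E, ℝ) →L[ℝ] C(E, ℝ)) (W : C(E,ℝ)) :
    ℕ → ℝ → C(E,ℝ) → C(E,ℝ)
  | 0, t, f => P t f
  | (n+1), t, f => ∫ s in (0:ℝ)..t, P (t - s) (W * picard P W n s f)

theorem picard_zero (t : ℝ) (f : C(E,ℝ)) : picard P W 0 t f = P t f := rfl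

theorem picard_succ (n : ℕ) (t : ℝ) (f : C(E,ℝ)) :
    picard P W (n+1) t f = ∫ s in (0:ℝ)..t, P (t - s) (W * picard P W n s f) := rfl

theorem integrandCont (hP : SGData P) (W : C(E,ℝ)) {u : ℝ → C(E,ℝ)} (hu : Continuous u)
    (t : ℝ) : Continuous fun s => P (t - s) (W * u s) :=
  hP.jointCont.comp ((continuous_const.sub continuous_id).prodMk (continuous_const.mul hu))

theorem picard_cont (hP : SGData P) (W : C(E,ℝ)) (n : ℕ) (f : C(E,ℝ)) :
    Continuous fun t => picard P W n t f := by
  induction n with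
  | zero => exact hP.cont f
  | succ n ih =>
    have hjoint : Continuous (Function.uncurry fun t s => P (t - s) (W * picard P W n s f)) :=
      hP.jointCont.comp ((continuous_fst.sub continuous_snd).prodMk
        (continuous_const.mul (ih.comp continuous_snd)))
    exact intervalIntegral.continuous_parametric_intervalIntegral_of_continuous hjoint
      continuous_id

/-- The basic norm estimate for one Picard step. -/
theorem step_bound (hP : SGData P) {u : ℝ → C(E,ℝ)} (hu : Continuous u) {K t : ℝ}
    (hK : 0 ≤ K) (ht : 0 ≤ t) (n : ℕ)
    (hb : ∀ s ∈ Icc (0:ℝ) t, ‖u s‖ ≤ K * (‖W‖ ^ n * s ^ n / n.factorial)) :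
    ‖∫ s in (0:ℝ)..t, P (t - s) (W * u s)‖
      ≤ K * (‖W‖ ^ (n+1) * t ^ (n+1) / (n+1).factorial) := by
  have hIb : IntervalIntegrable (fun s => K * ‖W‖ ^ (n+1) / n.factorial * s ^ n) volume 0 t :=
    (Continuous.intervalIntegrable (by continuity) 0 t)
  have h1 : ‖∫ s in (0:ℝ)..t, P (t - s) (W * u s)‖
      ≤ |∫ s in (0:ℝ)..t, K * ‖W‖ ^ (n+1) / n.factorial * s ^ n| := by
    apply intervalIntegral.norm_integral_le_abs_of_norm_le _ hIb
    rw [uIoc_of_le ht]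
    filter_upwards [ae_restrict_mem measurableSet_Ioc] with s hs
    have hs' : s ∈ Icc (0:ℝ) t := ⟨le_of_lt hs.1, hs.2⟩
    calc ‖P (t - s) (W * u s)‖ ≤ ‖W * u s‖ := hP.norm_le' _ _
      _ ≤ ‖W‖ * ‖u s‖ := norm_mul_le _ _
      _ ≤ ‖W‖ * (K * (‖W‖ ^ n * s ^ n / n.factorial)) := by
          apply mul_le_mul_of_nonneg_left (hb s hs') (norm_nonneg W)
      _ = K * ‖W‖ ^ (n+1) / n.factorial * s ^ n := by ring
  have h2 : (∫ s in (0:ℝ)..t, K * ‖W‖ ^ (n+1) / n.factorial * s ^ n)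
      = K * (‖W‖ ^ (n+1) * t ^ (n+1) / (n+1).factorial) := by
    rw [intervalIntegral.integral_const_mul, integral_pow]
    have hfact : ((n+1).factorial : ℝ) = (n+1) * n.factorial := by
      rw [Nat.factorial_succ]; push_cast; ring
    rw [hfact]
    have hn0 : (n.factorial : ℝ) ≠ 0 := Nat.cast_ne_zero.mpr n.factorial_ne_zero
    have hn1 : ((n:ℝ)+1) ≠ 0 := by positivity
    field_simp
    ring
  rw [h2] at h1
  rwa [abs_of_nonneg (mul_nonneg hK (by positivity))] at h1

theorem picard_norm_le (hP : SGData P) (f : C(E,ℝ)) (n : ℕ) :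
    ∀ {t : ℝ}, 0 ≤ t → ‖picard P W n t f‖ ≤ ‖f‖ * (‖W‖ ^ n * t ^ n / n.factorial) := by
  induction n with
  | zero =>
    intro t ht
    simpa [picard_zero] using hP.norm_le' t f
  | succ n ih =>
    intro t ht
    rw [picard_succ]
    exact step_bound hP (picard_cont hP W n f) (norm_nonneg f) ht n fun s hs => ih hs.1

theorem integrandInt (hP : SGData P) (W : C(E,ℝ)) {u : ℝ → C(E,ℝ)} (hu : Continuous u)
    (t a b : ℝ) : IntervalIntegrable (fun s => P (t - s) (W * u s)) volume a b :=
  (integrandCont hP W hu t).intervalIntegrable a b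

theorem picard_add (hP : SGData P) (n : ℕ) (t : ℝ) (f g : C(E,ℝ)) :
    picard P W n t (f + g) = picard P W n t f + picard P W n t g := by
  induction n generalizing t with
  | zero => simp only [picard_zero, map_add]
  | succ n ih =>
    rw [picard_succ, picard_succ, picard_succ,
      ← intervalIntegral.integral_add (integrandInt hP W (picard_cont hP W n f) t 0 t)
        (integrandInt hP W (picard_cont hP W n g) t 0 t)]
    apply intervalIntegral.integral_congr
    intro s hs
    dsimp only
    rw [ih, mul_add, map_add]

theorem picard_smul (hP : SGData P) (n : ℕ) (t : ℝ) (c : ℝ) (f : C(E,ℝ)) :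
    picard P W n t (c • f) = c • picard P W n t f := by
  induction n generalizing t with
  | zero => simp only [picard_zero, ContinuousLinearMap.map_smul]
  | succ n ih =>
    rw [picard_succ, picard_succ, ← intervalIntegral.integral_smul]
    apply intervalIntegral.integral_congr
    intro s hs
    dsimp only
    rw [ih, mul_smul_comm, ContinuousLinearMap.map_smul]

/-- Interval integrals of nonnegative continuous-function-valued maps are nonnegative. -/
theorem integral_nonneg_cm {u : ℝ → C(E,ℝ)} (hu : Continuous u) {t : ℝ} (ht : 0 ≤ t)
    (h : ∀ s ∈ Icc (0:ℝ) t, 0 ≤ u s) : 0 ≤ ∫ s in (0:ℝ)..t, u s := by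
  rw [ContinuousMap.le_def]
  intro x
  have hint : IntervalIntegrable u volume 0 t := hu.intervalIntegrable 0 t
  have hcomm := (ContinuousMap.evalCLM ℝ x).intervalIntegral_comp_comm hint
  show (0:C(E,ℝ)) x ≤ (∫ s in (0:ℝ)..t, u s) x
  rw [ContinuousMap.zero_apply]
  change (0:ℝ) ≤ (ContinuousMap.evalCLM ℝ x) (∫ s in (0:ℝ)..t, u s)
  rw [← hcomm]
  apply intervalIntegral.integral_nonneg ht
  intro s hs
  have := ContinuousMap.le_def.mp (h s hs) x
  simpa using this

theorem mul_nonneg_cm {f g : C(E,ℝ)} (hf : 0 ≤ f) (hg : 0 ≤ g) : 0 ≤ f * g := by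
  rw [ContinuousMap.le_def]
  intro x
  have h1 := ContinuousMap.le_def.mp hf x
  have h2 := ContinuousMap.le_def.mp hg x
  simp only [ContinuousMap.zero_apply] at h1 h2 ⊢
  rw [ContinuousMap.mul_apply]
  exact mul_nonneg h1 h2

theorem picard_nonneg (hP : SGData P) (hW : 0 ≤ W) {f : C(E,ℝ)} (hf : 0 ≤ f) (n : ℕ) :
    ∀ {t : ℝ}, 0 ≤ t → 0 ≤ picard P W n t f := by
  induction n with
  | zero => intro t ht; exact hP.pos t f hf
  | succ n ih =>
    intro t ht
    rw [picard_succ]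
    refine integral_nonneg_cm (integrandCont hP W (picard_cont hP W n f) t) ht fun s hs => ?_
    exact hP.pos _ _ (mul_nonneg_cm hW (ih hs.1))

theorem summable_bound (W f : C(E,ℝ)) (t : ℝ) :
    Summable (fun n => ‖f‖ * (‖W‖ ^ n * t ^ n / n.factorial)) :=
  ((Real.summable_pow_div_factorial (‖W‖ * t)).mul_left ‖f‖).congr fun n => by rw [mul_pow]

theorem summable_picard_norm (hP : SGData P) (f : C(E,ℝ)) {t : ℝ} (ht : 0 ≤ t) :
    Summable fun n => ‖picard P W n t f‖ :=
  Summable.of_nonneg_of_le (fun n => norm_nonneg _) (fun n => picard_norm_le hP f n ht)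
    (summable_bound W f t)

theorem summable_picard (hP : SGData P) (f : C(E,ℝ)) {t : ℝ} (ht : 0 ≤ t) :
    Summable fun n => picard P W n t f :=
  Summable.of_norm_bounded (summable_bound W f t) fun n => picard_norm_le hP f n ht

/-- The perturbed semigroup (time clamped to `t ≥ 0`). -/
noncomputable def Qop (P : ℝ → C(E, ℝ) →L[ℝ] C(E, ℝ)) (W : C(E,ℝ)) (t : ℝ) (f : C(E,ℝ)) :
    C(E,ℝ) := ∑' n, picard P W n (max t 0) f

theorem Qop_eq {t : ℝ} (ht : 0 ≤ t) (f : C(E,ℝ)) :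
    Qop P W t f = ∑' n, picard P W n t f := by rw [Qop, max_eq_left ht]

theorem hasSum_picard (hP : SGData P) (f : C(E,ℝ)) {t : ℝ} (ht : 0 ≤ t) :
    HasSum (fun n => picard P W n t f) (Qop P W t f) := by
  rw [Qop_eq ht]
  exact (summable_picard hP f ht).hasSum

theorem Qop_of_nonpos (hP : SGData P) {t : ℝ} (ht : t ≤ 0) (f : C(E,ℝ)) : Qop P W t f = f := by
  rw [Qop, max_eq_right ht]
  rw [tsum_eq_single 0]
  · exact hP.id_apply le_rfl f
  · intro n hn
    match n, hn with
    | (n+1), _ => rw [picard_succ, intervalIntegral.integral_same]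

theorem Qop_zero (hP : SGData P) (f : C(E,ℝ)) : Qop P W 0 f = f := Qop_of_nonpos hP le_rfl f

theorem Qop_norm_le (hP : SGData P) (t : ℝ) (f : C(E,ℝ)) :
    ‖Qop P W t f‖ ≤ Real.exp (‖W‖ * max t 0) * ‖f‖ := by
  have hm : 0 ≤ max t 0 := le_max_right t 0
  rw [Qop]
  calc ‖∑' n, picard P W n (max t 0) f‖ ≤ ∑' n, ‖picard P W n (max t 0) f‖ :=
        norm_tsum_le_tsum_norm (summable_picard_norm hP f hm)
    _ ≤ ∑' n, ‖f‖ * ((‖W‖ * max t 0) ^ n / n.factorial) := by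
        apply Summable.tsum_le_tsum _ (summable_picard_norm hP f hm)
          ((Real.summable_pow_div_factorial _).mul_left ‖f‖)
        intro n
        rw [mul_pow]
        exact picard_norm_le hP f n hm
    _ = Real.exp (‖W‖ * max t 0) * ‖f‖ := by
        rw [tsum_mul_left, Real.exp_eq_exp_ℝ, NormedSpace.exp_eq_tsum_div]
        ring

theorem Qop_add (hP : SGData P) (t : ℝ) (f g : C(E,ℝ)) :
    Qop P W t (f + g) = Qop P W t f + Qop P W t g := by
  have hm : 0 ≤ max t 0 := le_max_right t 0
  rw [Qop, Qop, Qop]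
  rw [← Summable.tsum_add (summable_picard hP f hm) (summable_picard hP g hm)]
  exact tsum_congr fun n => picard_add hP n _ f g

theorem Qop_smul (hP : SGData P) (t : ℝ) (c : ℝ) (f : C(E,ℝ)) :
    Qop P W t (c • f) = c • Qop P W t f := by
  have hm : 0 ≤ max t 0 := le_max_right t 0
  rw [Qop, Qop, ← ((summable_picard hP f hm).hasSum.const_smul c).tsum_eq]
  exact tsum_congr fun n => picard_smul hP n _ c f

theorem Qop_nonneg (hP : SGData P) (hW : 0 ≤ W) (t : ℝ) {f : C(E,ℝ)} (hf : 0 ≤ f) :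
    0 ≤ Qop P W t f := by
  have hm : 0 ≤ max t 0 := le_max_right t 0
  rw [Qop, ContinuousMap.le_def]
  intro x
  have hsum := summable_picard hP f hm (W := W)
  have hcomm := (ContinuousMap.evalCLM ℝ x).map_tsum hsum
  show (0:C(E,ℝ)) x ≤ _
  rw [ContinuousMap.zero_apply]
  change (0:ℝ) ≤ (ContinuousMap.evalCLM ℝ x) (∑' n, picard P W n (max t 0) f)
  rw [hcomm]
  apply tsum_nonneg
  intro n
  have := ContinuousMap.le_def.mp (picard_nonneg hP hW hf n hm) x
  simpa using this

theorem Qop_cont (hP : SGData P) (f : C(E,ℝ)) : Continuous fun t => Qop P W t f := by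
  rw [continuous_iff_continuousAt]
  intro t₀
  set T : ℝ := |t₀| + 1 with hT
  have hT0 : 0 ≤ T := by positivity
  apply ContinuousOn.continuousAt _ (Metric.ball_mem_nhds t₀ one_pos)
  have hTU : TendstoUniformlyOn
      (fun (N : Finset ℕ) (t : ℝ) => ∑ n ∈ N, picard P W n (max t 0) f)
      (fun t => Qop P W t f) atTop (Metric.ball t₀ 1) := by
    apply tendstoUniformlyOn_tsum (summable_bound W f T)
    intro n t ht
    have hmem : max t 0 ∈ Icc (0:ℝ) T := by
      constructor
      · exact le_max_right t 0
      · rw [Metric.mem_ball, Real.dist_eq] at ht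
        have h1 : t ≤ T := by
          have := abs_sub_abs_le_abs_sub t t₀
          have h2 : |t| - |t₀| ≤ 1 := le_of_lt (lt_of_le_of_lt this ht)
          have h3 : t ≤ |t| := le_abs_self t
          rw [hT]; linarith
        exact max_le h1 hT0
    calc ‖picard P W n (max t 0) f‖
        ≤ ‖f‖ * (‖W‖ ^ n * (max t 0) ^ n / n.factorial) := picard_norm_le hP f n hmem.1
      _ ≤ ‖f‖ * (‖W‖ ^ n * T ^ n / n.factorial) := by
          have hpow : (max t 0) ^ n ≤ T ^ n := pow_le_pow_left₀ hmem.1 hmem.2 n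
          gcongr
  apply hTU.continuousOn
  apply Eventually.frequently
  filter_upwards with N
  apply Continuous.continuousOn
  apply continuous_finset_sum
  intro n _
  exact (picard_cont hP W n f).comp (continuous_id.max continuous_const)

/-- The Volterra integral equation for `Qop`. -/
theorem volterra (hP : SGData P) (f : C(E,ℝ)) {t : ℝ} (ht : 0 ≤ t) :
    Qop P W t f = P t f + ∫ s in (0:ℝ)..t, P (t - s) (W * Qop P W s f) := by
  have hQc : Continuous fun s => Qop P W s f := Qop_cont hP f
  -- the partial sums of the integrand
  set F : ℕ → ℝ → C(E,ℝ) :=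
    fun N s => ∑ n ∈ Finset.range N, P (t - s) (W * picard P W n s f) with hF
  have hFcont : ∀ N, Continuous (F N) := by
    intro N
    apply continuous_finset_sum
    intro n _
    exact integrandCont hP W (picard_cont hP W n f) t
  -- Step 1 : dominated convergence
  have hstep1 : Tendsto (fun N => ∫ s in (0:ℝ)..t, F N s) atTop
      (𝓝 (∫ s in (0:ℝ)..t, P (t - s) (W * Qop P W s f))) := by
    apply intervalIntegral.tendsto_integral_filter_of_dominated_convergence
      (fun _ => ‖W‖ * Real.exp (‖W‖ * t) * ‖f‖)
    · filter_upwards with N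
      exact ((hFcont N).aestronglyMeasurable)
    · filter_upwards with N
      filter_upwards with s hs
      rw [uIoc_of_le ht] at hs
      have hs0 : (0:ℝ) ≤ s := le_of_lt hs.1
      calc ‖F N s‖ ≤ ∑ n ∈ Finset.range N, ‖P (t - s) (W * picard P W n s f)‖ :=
            norm_sum_le _ _
        _ ≤ ∑ n ∈ Finset.range N, ‖W‖ * (‖f‖ * ((‖W‖ * s) ^ n / n.factorial)) := by
            apply Finset.sum_le_sum
            intro n _
            calc ‖P (t - s) (W * picard P W n s f)‖ ≤ ‖W * picard P W n s f‖ := hP.norm_le' _ _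
              _ ≤ ‖W‖ * ‖picard P W n s f‖ := norm_mul_le _ _
              _ ≤ ‖W‖ * (‖f‖ * ((‖W‖ * s) ^ n / n.factorial)) := by
                  apply mul_le_mul_of_nonneg_left _ (norm_nonneg W)
                  rw [mul_pow]
                  exact picard_norm_le hP f n hs0
        _ ≤ ∑' n, ‖W‖ * (‖f‖ * ((‖W‖ * s) ^ n / n.factorial)) := by
            apply Summable.sum_le_tsum
            · intro n _; positivity
            · exact (((Real.summable_pow_div_factorial _).mul_left ‖f‖).mul_left ‖W‖)
        _ = ‖W‖ * Real.exp (‖W‖ * s) * ‖f‖ := by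
            rw [tsum_mul_left, tsum_mul_left, Real.exp_eq_exp_ℝ, NormedSpace.exp_eq_tsum_div]
            ring
        _ ≤ ‖W‖ * Real.exp (‖W‖ * t) * ‖f‖ := by
            have : Real.exp (‖W‖ * s) ≤ Real.exp (‖W‖ * t) :=
              Real.exp_le_exp.mpr (mul_le_mul_of_nonneg_left hs.2 (norm_nonneg W))
            gcongr
    · exact intervalIntegrable_const
    · filter_upwards with s hs
      rw [uIoc_of_le ht] at hs
      have hs0 : (0:ℝ) ≤ s := le_of_lt hs.1
      have hsum := hasSum_picard hP f hs0 (W := W)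
      set L : C(E,ℝ) →L[ℝ] C(E,ℝ) :=
        (P (t - s)).comp (ContinuousLinearMap.mul ℝ C(E,ℝ) W) with hL
      have := (L.hasSum hsum).tendsto_sum_nat
      convert this using 2 with N
      all_goals rfl
  -- Step 2 : partial-sum integrals
  have hstep2 : ∀ N, (∫ s in (0:ℝ)..t, F N s)
      = ∑ n ∈ Finset.range N, picard P W (n+1) t f := by
    intro N
    rw [hF]
    rw [intervalIntegral.integral_finset_sum]
    · apply Finset.sum_congr rfl
      intro n _
      rw [picard_succ]
    · intro n _
      exact integrandInt hP W (picard_cont hP W n f) t 0 t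
  -- Step 3 : the shifted series sums to Qop minus the leading term
  have hsummable := summable_picard hP f ht (W := W)
  have hshift : Summable fun n => picard P W (n+1) t f := by
    rw [← summable_nat_add_iff 1] at hsummable
    exact hsummable
  have hstep3 : Tendsto (fun N => ∑ n ∈ Finset.range N, picard P W (n+1) t f) atTop
      (𝓝 (∑' n, picard P W (n+1) t f)) := hshift.hasSum.tendsto_sum_nat
  have heq : (∫ s in (0:ℝ)..t, P (t - s) (W * Qop P W s f)) = ∑' n, picard P W (n+1) t f := by
    apply tendsto_nhds_unique _ hstep3
    rw [show (fun N => ∑ n ∈ Finset.range N, picard P W (n+1) t f)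
        = fun N => ∫ s in (0:ℝ)..t, F N s from funext fun N => (hstep2 N).symm]
    exact hstep1
  rw [Qop_eq ht, Summable.tsum_eq_zero_add (summable_picard hP f ht), picard_zero, heq]

/-- Gronwall-type uniqueness for the homogeneous Volterra equation. -/
theorem gronwall (hP : SGData P) {u : ℝ → C(E,ℝ)} (hu : Continuous u) {T : ℝ} (hT : 0 ≤ T)
    (heq : ∀ t ∈ Icc (0:ℝ) T, u t = ∫ s in (0:ℝ)..t, P (t - s) (W * u s)) :
    ∀ t ∈ Icc (0:ℝ) T, u t = 0 := by
  obtain ⟨C, hC⟩ := (isCompact_Icc (a := (0:ℝ)) (b := T)).exists_bound_of_continuousOn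
    hu.continuousOn
  set K := max C 0 with hK
  have hb : ∀ n : ℕ, ∀ t ∈ Icc (0:ℝ) T, ‖u t‖ ≤ K * (‖W‖ ^ n * t ^ n / n.factorial) := by
    intro n
    induction n with
    | zero =>
      intro t htt
      calc ‖u t‖ ≤ K := (hC t htt).trans (le_max_left C 0)
        _ = K * (‖W‖ ^ 0 * t ^ 0 / (Nat.factorial 0)) := by norm_num
    | succ n ih =>
      intro t htt
      rw [heq t htt]
      exact step_bound hP hu (le_max_right C 0) htt.1 n
        (fun s hs => ih s ⟨hs.1, hs.2.trans htt.2⟩)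
  intro t htt
  have h0 : Tendsto (fun n : ℕ => K * (‖W‖ ^ n * t ^ n / n.factorial)) atTop (𝓝 0) := by
    have h1 : Tendsto (fun n : ℕ => (‖W‖ * t) ^ n / n.factorial) atTop (𝓝 (0:ℝ)) :=
      (Real.summable_pow_div_factorial (‖W‖ * t)).tendsto_atTop_zero
    have h2 := h1.const_mul K
    rw [mul_zero] at h2
    apply h2.congr
    intro n
    rw [mul_pow]
  have hle : ‖u t‖ ≤ 0 := ge_of_tendsto h0 (Eventually.of_forall fun n => hb n t htt)
  simpa using norm_le_zero_iff.mp hle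

/-- Semigroup property of `Qop`. -/
theorem Qop_comp (hP : SGData P) (f : C(E,ℝ)) {s t : ℝ} (hs : 0 ≤ s) (ht : 0 ≤ t) :
    Qop P W (s + t) f = Qop P W s (Qop P W t f) := by
  set q := Qop P W t f with hq
  have hQc : Continuous fun r => Qop P W r f := Qop_cont hP f
  have hint : ∀ T a b : ℝ, IntervalIntegrable
      (fun s' => P (T - s') (W * Qop P W s' f)) volume a b :=
    fun T a b => integrandInt hP W hQc T a b
  -- the shifted function satisfies the Volterra equation with initial datum `q`
  have hw : ∀ r : ℝ, 0 ≤ r → Qop P W (t + r) f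
      = P r q + ∫ σ in (0:ℝ)..r, P (r - σ) (W * Qop P W (t + σ) f) := by
    intro r hr
    have h1 := volterra hP f (t := t + r) (W := W) (by linarith)
    have hsplit : (∫ s' in (0:ℝ)..(t+r), P (t + r - s') (W * Qop P W s' f))
        = (∫ s' in (0:ℝ)..t, P (t + r - s') (W * Qop P W s' f))
          + ∫ s' in t..(t+r), P (t + r - s') (W * Qop P W s' f) :=
      (intervalIntegral.integral_add_adjacent_intervals (hint (t+r) 0 t)
        (hint (t+r) t (t+r))).symm
    have h2 : (∫ s' in t..(t+r), P (t + r - s') (W * Qop P W s' f))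
        = ∫ σ in (0:ℝ)..r, P (r - σ) (W * Qop P W (t + σ) f) := by
      have hcal := intervalIntegral.integral_comp_add_left (a := (0:ℝ)) (b := r)
        (f := fun s' => P (t + r - s') (W * Qop P W s' f)) t
      rw [add_zero] at hcal
      rw [← hcal]
      apply intervalIntegral.integral_congr
      intro σ hσ
      dsimp only
      have : t + r - (t + σ) = r - σ := by ring
      rw [this]
    have h3 : (∫ s' in (0:ℝ)..t, P (t + r - s') (W * Qop P W s' f))
        = P r (∫ s' in (0:ℝ)..t, P (t - s') (W * Qop P W s' f)) := by
      rw [← ContinuousLinearMap.intervalIntegral_comp_comm _ (hint t 0 t)]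
      apply intervalIntegral.integral_congr
      intro s' hs'
      rw [uIcc_of_le ht] at hs'
      dsimp only
      have he : t + r - s' = r + (t - s') := by ring
      rw [he, hP.comp_apply hr (by linarith [hs'.2])]
    have h4 : P (t + r) f = P r (P t f) := by
      have : t + r = r + t := by ring
      rw [this, hP.comp_apply hr ht]
    rw [h1, hsplit, h2, h3, h4]
    have h5 : q = P t f + ∫ s' in (0:ℝ)..t, P (t - s') (W * Qop P W s' f) :=
      volterra hP f ht
    rw [h5, map_add]
    abel
  -- the unshifted function satisfies it as well
  have hv : ∀ r : ℝ, 0 ≤ r → Qop P W r q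
      = P r q + ∫ σ in (0:ℝ)..r, P (r - σ) (W * Qop P W σ q) :=
    fun r hr => volterra hP q hr
  -- the difference satisfies the homogeneous equation
  set z : ℝ → C(E,ℝ) := fun r => Qop P W (t + r) f - Qop P W r q with hz
  have hzc : Continuous z :=
    (hQc.comp (continuous_const.add continuous_id)).sub (Qop_cont hP q)
  have hzeq : ∀ r ∈ Icc (0:ℝ) s, z r = ∫ σ in (0:ℝ)..r, P (r - σ) (W * z σ) := by
    intro r hr
    have e1 := hw r hr.1
    have e2 := hv r hr.1
    have : z r = (∫ σ in (0:ℝ)..r, P (r - σ) (W * Qop P W (t + σ) f))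
        - ∫ σ in (0:ℝ)..r, P (r - σ) (W * Qop P W σ q) := by
      rw [hz]; dsimp only; rw [e1, e2]; abel
    have hui : Continuous fun σ : ℝ => Qop P W (t + σ) f :=
      hQc.comp (continuous_const.add continuous_id)
    have h1i : IntervalIntegrable (fun σ => P (r - σ) (W * Qop P W (t + σ) f)) volume 0 r :=
      (integrandCont hP W hui r).intervalIntegrable 0 r
    have h2i : IntervalIntegrable (fun σ => P (r - σ) (W * Qop P W σ q)) volume 0 r :=
      (integrandCont hP W (Qop_cont hP q) r).intervalIntegrable 0 r
    rw [this, ← intervalIntegral.integral_sub h1i h2i]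
    apply intervalIntegral.integral_congr
    intro σ hσ
    dsimp only
    rw [mul_sub, map_sub]
  have := gronwall hP hzc hs hzeq s ⟨hs, le_rfl⟩
  have hfin : Qop P W (t + s) f = Qop P W s q := by
    have h6 : z s = 0 := by simpa using this
    rw [hz] at h6
    dsimp only at h6
    exact sub_eq_zero.mp h6
  rw [show s + t = t + s from by ring, hfin]

/-- Right differentiability of the original semigroup on domain elements. -/
theorem deriv_right (hP : SGData P) {h₀ g₀ : C(E,ℝ)}
    (hg : Tendsto (fun ε : ℝ => ε⁻¹ • (P ε h₀ - h₀)) (𝓝[>] (0:ℝ)) (𝓝 g₀)) {t : ℝ}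
    (ht : 0 ≤ t) : HasDerivWithinAt (fun r => P r h₀) (P t g₀) (Ioi t) t := by
  rw [hasDerivWithinAt_iff_tendsto_slope, diff_singleton_eq_self notMem_Ioi_self]
  have hmap : Tendsto (fun t' => t' - t) (𝓝[>] t) (𝓝[>] (0:ℝ)) := by
    apply tendsto_nhdsWithin_of_tendsto_nhds_of_eventually_within
    · have h' := ((continuous_id.sub (continuous_const (y := t))).tendsto t).mono_left
        (nhdsWithin_le_nhds (s := Ioi t))
      simpa [Pi.sub_def] using h'
    · filter_upwards [self_mem_nhdsWithin] with x hx
      exact mem_Ioi.mpr (sub_pos.mpr (mem_Ioi.mp hx))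
  have hcomp := ((P t).continuous.tendsto g₀).comp (hg.comp hmap)
  apply hcomp.congr'
  filter_upwards [self_mem_nhdsWithin] with t' ht'
  have hd : (0:ℝ) < t' - t := sub_pos.mpr ht'
  show P t ((t' - t)⁻¹ • (P (t' - t) h₀ - h₀)) = slope (fun r => P r h₀) t t'
  have hkey : P t (P (t' - t) h₀) = P t' h₀ := by
    rw [← hP.comp_apply ht (le_of_lt hd)]
    congr 1
    ring
  rw [slope_def_module, ← hkey, ← map_sub, ← ContinuousLinearMap.map_smul]

/-- If `W * h₀ = c • h₀ - g₀` where `g₀` is the generator value at `h₀`, then `h₀` is an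
"eigenfunction" for the perturbed semigroup: `Qop t h₀ = exp (c t) • h₀`. -/
theorem Qop_fixed (hP : SGData P) {h₀ g₀ : C(E,ℝ)} {c : ℝ}
    (hg : Tendsto (fun ε : ℝ => ε⁻¹ • (P ε h₀ - h₀)) (𝓝[>] (0:ℝ)) (𝓝 g₀))
    (hWh : W * h₀ = c • h₀ - g₀) {t : ℝ} (ht : 0 ≤ t) :
    Qop P W t h₀ = Real.exp (c * t) • h₀ := by
  set χ : ℝ → C(E,ℝ) := fun τ => Real.exp (-(c * τ)) • P τ (c • h₀ - g₀) with hχ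
  have hχc : Continuous χ := by
    refine Continuous.smul (f := fun τ => Real.exp (-(c * τ))) (g := fun τ => P τ (c • h₀ - g₀)) ?_ ?_
    · exact Real.continuous_exp.comp (continuous_const.mul continuous_id).neg
    · exact hP.cont _
  have hη : ∀ r : ℝ, 0 ≤ r →
      (∫ τ in (0:ℝ)..r, χ τ) = h₀ - Real.exp (-(c * r)) • P r h₀ := by
    intro r hr
    have hFTC := intervalIntegral.integral_eq_sub_of_hasDeriv_right_of_le hr
      (f := fun τ => -(Real.exp (-(c * τ)) • P τ h₀)) (f' := χ)
      (by
        apply Continuous.continuousOn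
        exact ((Real.continuous_exp.comp (continuous_const.mul continuous_id).neg).smul
          (hP.cont h₀)).neg)
      (by
        intro τ hτ
        have hPd : HasDerivWithinAt (fun r => P r h₀) (P τ g₀) (Ioi τ) τ :=
          deriv_right hP hg (le_of_lt hτ.1)
        have h1 : HasDerivAt (fun τ : ℝ => -(c * τ)) (-c) τ := by
          simpa [Pi.neg_def] using ((hasDerivAt_id τ).const_mul c).neg
        have hexp : HasDerivWithinAt (fun τ : ℝ => Real.exp (-(c * τ)))
            (Real.exp (-(c * τ)) * (-c)) (Ioi τ) τ :=
          HasDerivAt.hasDerivWithinAt (by simpa [Function.comp_def] using (Real.hasDerivAt_exp (-(c * τ))).comp τ h1)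
        have hs := (hexp.smul hPd).neg
        convert hs using 1
        show Real.exp (-(c * τ)) • P τ (c • h₀ - g₀) = _
        rw [map_sub, ContinuousLinearMap.map_smul]
        module
        rfl)
      (hχc.intervalIntegrable 0 r)
    rw [hFTC]
    rw [show P (0:ℝ) h₀ = h₀ from hP.id_apply le_rfl h₀]
    rw [mul_zero, neg_zero, Real.exp_zero, one_smul]
    abel
  -- the exponential solves the Volterra equation
  have hsol : ∀ r : ℝ, 0 ≤ r → Real.exp (c * r) • h₀
      = P r h₀ + ∫ σ in (0:ℝ)..r, P (r - σ) (W * (Real.exp (c * σ) • h₀)) := by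
    intro r hr
    have e1 : ∀ σ : ℝ, P (r - σ) (W * (Real.exp (c * σ) • h₀))
        = Real.exp (c * r) • χ (r - σ) := by
      intro σ
      simp only [hχ]
      rw [mul_smul_comm, hWh, ContinuousLinearMap.map_smul, smul_smul, ← Real.exp_add]
      congr 2
      ring
    have e2 : (∫ σ in (0:ℝ)..r, P (r - σ) (W * (Real.exp (c * σ) • h₀)))
        = ∫ σ in (0:ℝ)..r, Real.exp (c * r) • χ (r - σ) :=
      intervalIntegral.integral_congr fun σ _ => e1 σ
    have e3 : (∫ σ in (0:ℝ)..r, χ (r - σ)) = ∫ τ in (0:ℝ)..r, χ τ := by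
      have hcs := intervalIntegral.integral_comp_sub_left (a := (0:ℝ)) (b := r) χ r
      rw [sub_zero, sub_self] at hcs
      exact hcs
    rw [e2, intervalIntegral.integral_smul, e3, hη r hr, smul_sub, smul_smul, ← Real.exp_add]
    rw [show c * r + -(c * r) = 0 from by ring, Real.exp_zero, one_smul]
    abel
  -- uniqueness
  set z : ℝ → C(E,ℝ) := fun r => Qop P W r h₀ - Real.exp (c * r) • h₀ with hz
  have hec : Continuous fun r : ℝ => Real.exp (c * r) • h₀ :=
    (Real.continuous_exp.comp (continuous_const.mul continuous_id)).smul continuous_const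
  have hzc : Continuous z := (Qop_cont hP h₀).sub hec
  have hzeq : ∀ r ∈ Icc (0:ℝ) t, z r = ∫ σ in (0:ℝ)..r, P (r - σ) (W * z σ) := by
    intro r hr
    have e4 := volterra hP h₀ hr.1 (W := W)
    have e5 := hsol r hr.1
    have h1i : IntervalIntegrable (fun σ => P (r - σ) (W * Qop P W σ h₀)) volume 0 r :=
      (integrandCont hP W (Qop_cont hP h₀) r).intervalIntegrable 0 r
    have h2i : IntervalIntegrable
        (fun σ => P (r - σ) (W * (Real.exp (c * σ) • h₀))) volume 0 r :=
      (integrandCont hP W hec r).intervalIntegrable 0 r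
    have : z r = (∫ σ in (0:ℝ)..r, P (r - σ) (W * Qop P W σ h₀))
        - ∫ σ in (0:ℝ)..r, P (r - σ) (W * (Real.exp (c * σ) • h₀)) := by
      rw [hz]
      dsimp only
      rw [e4, e5]
      abel
    rw [this, ← intervalIntegral.integral_sub h1i h2i]
    apply intervalIntegral.integral_congr
    intro σ hσ
    dsimp only
    rw [mul_sub, map_sub]
  have hend := gronwall hP hzc ht hzeq t ⟨ht, le_rfl⟩
  have h6 : z t = 0 := by simpa using hend
  rw [hz] at h6
  dsimp only at h6
  exact sub_eq_zero.mp h6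

/-- The integral term in the Volterra equation has derivative `W * f` at `0⁺`. -/
theorem Qop_deriv_zero (hP : SGData P) (f : C(E,ℝ)) :
    Tendsto (fun t : ℝ => t⁻¹ • ∫ s in (0:ℝ)..t, P (t - s) (W * Qop P W s f))
      (𝓝[>] (0:ℝ)) (𝓝 (W * f)) := by
  have hgc : Continuous fun p : ℝ × ℝ => P (p.1 - p.2) (W * Qop P W p.2 f) :=
    hP.jointCont.comp ((continuous_fst.sub continuous_snd).prodMk
      (continuous_const.mul ((Qop_cont hP f).comp continuous_snd)))
  have hval : P ((0:ℝ) - 0) (W * Qop P W 0 f) = W * f := by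
    rw [sub_zero, Qop_zero hP, hP.id_apply le_rfl]
  rw [Metric.tendsto_nhdsWithin_nhds]
  intro ε hε
  have hcont := hgc.continuousAt (x := ((0:ℝ), (0:ℝ)))
  rw [Metric.continuousAt_iff] at hcont
  obtain ⟨δ, hδ, hd⟩ := hcont (ε/2) (by linarith)
  refine ⟨min δ 1, by positivity, ?_⟩
  intro t htIoi htd
  rw [mem_Ioi] at htIoi
  rw [Real.dist_eq, sub_zero, abs_of_pos htIoi] at htd
  have htδ : t < δ := lt_of_lt_of_le htd (min_le_left δ 1)
  have hig : IntervalIntegrable (fun s => P (t - s) (W * Qop P W s f)) volume 0 t :=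
    integrandInt hP W (Qop_cont hP f) t 0 t
  rw [dist_eq_norm]
  have hconst : (∫ _ in (0:ℝ)..t, (W * f : C(E,ℝ))) = t • (W * f) := by
    rw [intervalIntegral.integral_const, sub_zero]
  have hsplit : (t⁻¹ • ∫ s in (0:ℝ)..t, P (t - s) (W * Qop P W s f)) - W * f
      = t⁻¹ • ((∫ s in (0:ℝ)..t, P (t - s) (W * Qop P W s f))
          - ∫ _ in (0:ℝ)..t, (W * f : C(E,ℝ))) := by
    rw [hconst, smul_sub, smul_smul, inv_mul_cancel₀ (ne_of_gt htIoi), one_smul]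
  rw [hsplit, ← intervalIntegral.integral_sub hig intervalIntegrable_const]
  have hb : ∀ s ∈ Set.uIoc (0:ℝ) t, ‖P (t - s) (W * Qop P W s f) - W * f‖ ≤ ε/2 := by
    intro s hs
    rw [uIoc_of_le (le_of_lt htIoi)] at hs
    have hdist : dist ((t, s) : ℝ × ℝ) ((0:ℝ), (0:ℝ)) < δ := by
      rw [Prod.dist_eq]
      apply max_lt
      · rw [Real.dist_eq, sub_zero, abs_of_pos htIoi]; exact htδ
      · rw [Real.dist_eq, sub_zero, abs_of_pos hs.1]
        exact lt_of_le_of_lt hs.2 htδ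
    have := hd hdist
    rw [hval, dist_eq_norm] at this
    exact le_of_lt this
  calc ‖t⁻¹ • ∫ s in (0:ℝ)..t, (P (t - s) (W * Qop P W s f) - W * f)‖
      = |t⁻¹| * ‖∫ s in (0:ℝ)..t, (P (t - s) (W * Qop P W s f) - W * f)‖ := by
        rw [show ‖t⁻¹ • ∫ s in (0:ℝ)..t, (P (t - s) (W * Qop P W s f) - W * f)‖
            = ‖t⁻¹‖ * ‖∫ s in (0:ℝ)..t, (P (t - s) (W * Qop P W s f) - W * f)‖ from
            norm_smul (β := C(E,ℝ)) t⁻¹ _, Real.norm_eq_abs]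
    _ ≤ |t⁻¹| * (ε/2 * |t - 0|) := by
        apply mul_le_mul_of_nonneg_left _ (abs_nonneg _)
        exact intervalIntegral.norm_integral_le_of_norm_le_const hb
    _ = ε/2 := by
        rw [sub_zero, abs_of_pos htIoi, abs_of_pos (inv_pos.mpr htIoi)]
        field_simp
    _ < ε := by linarith

theorem smul_nonneg_cm {a : ℝ} (ha : 0 ≤ a) {g : C(E,ℝ)} (hg : 0 ≤ g) : 0 ≤ a • g := by
  rw [ContinuousMap.le_def]
  intro x
  have := ContinuousMap.le_def.mp hg x
  simp only [ContinuousMap.zero_apply] at this ⊢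
  rw [ContinuousMap.smul_apply]
  exact mul_nonneg ha this

end Aux8

open Aux8

/-- Lemma 3 (Compensated h-transform), semigroup part: if `G` generates a Feller semigroup
on `C(E)` and `h ∈ D(G)` with `h > 0`, then `Gʰ f := (1/h)(G(hf) - (Gh)f)`, with domain
`{f : h ⬝ f ∈ D(G)}`, generates a Feller semigroup on `C(E)`. -/
theorem statement8 (S : ℝ → C(E, ℝ) →L[ℝ] C(E, ℝ))
    (D : Set C(E, ℝ)) (G : C(E, ℝ) → C(E, ℝ))
    (hS : IsFellerSG S) (hgen : IsGeneratorOf S D G)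
    (h : C(E, ℝ)) (hD : h ∈ D) (hpos : ∀ x : E, 0 < h x) :
    ∃ (S' : ℝ → C(E, ℝ) →L[ℝ] C(E, ℝ)) (G' : C(E, ℝ) → C(E, ℝ)),
      IsFellerSG S' ∧
      IsGeneratorOf S' {f : C(E, ℝ) | h * f ∈ D} G' ∧
      ∀ f : C(E, ℝ), h * f ∈ D →
        ∀ x : E, G' f x = (G (h * f) x - G h x * f x) / h x := by
  obtain ⟨hSG, hSC, hSP, hS1⟩ := hS
  -- `S` is a contraction for `t ≥ 0`
  have hcontr : ∀ t : ℝ, 0 ≤ t → ∀ f : C(E,ℝ), ‖S t f‖ ≤ ‖f‖ := by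
    intro t ht f
    rw [ContinuousMap.norm_le _ (norm_nonneg f)]
    intro x
    have hb : ∀ y : E, |f y| ≤ ‖f‖ := fun y => by
      simpa using ContinuousMap.norm_coe_le_norm f y
    have h1 : (0:C(E,ℝ)) ≤ ‖f‖ • (1:C(E,ℝ)) - f := by
      rw [ContinuousMap.le_def]
      intro y
      have := abs_le.mp (hb y)
      simp only [ContinuousMap.zero_apply, ContinuousMap.sub_apply, ContinuousMap.smul_apply,
        ContinuousMap.one_apply, smul_eq_mul, mul_one]
      linarith [this.2]
    have h2 : (0:C(E,ℝ)) ≤ ‖f‖ • (1:C(E,ℝ)) + f := by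
      rw [ContinuousMap.le_def]
      intro y
      have := abs_le.mp (hb y)
      simp only [ContinuousMap.zero_apply, ContinuousMap.add_apply, ContinuousMap.smul_apply,
        ContinuousMap.one_apply, smul_eq_mul, mul_one]
      linarith [this.1]
    have k1 := hSP t ht _ h1
    have k2 := hSP t ht _ h2
    rw [map_sub, ContinuousLinearMap.map_smul, hS1 t ht] at k1
    rw [map_add, ContinuousLinearMap.map_smul, hS1 t ht] at k2
    have e1 := ContinuousMap.le_def.mp k1 x
    have e2 := ContinuousMap.le_def.mp k2 x
    simp only [ContinuousMap.zero_apply, ContinuousMap.sub_apply, ContinuousMap.add_apply,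
      ContinuousMap.smul_apply, ContinuousMap.one_apply, smul_eq_mul, mul_one] at e1 e2
    rw [Real.norm_eq_abs, abs_le]
    constructor <;> linarith
  -- the clamped semigroup
  set P : ℝ → C(E,ℝ) →L[ℝ] C(E,ℝ) := fun t => S (max t 0) with hPdef
  have hPcont : ∀ f : C(E,ℝ), Continuous fun t => P t f := by
    intro f
    rw [Metric.continuous_iff]
    intro b ε hε
    have hsc := hSC f
    rw [Metric.tendsto_nhdsWithin_nhds] at hsc
    obtain ⟨δ, hδ, hd⟩ := hsc ε hε
    refine ⟨δ, hδ, fun a hab => ?_⟩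
    have key : ∀ u v : ℝ, 0 ≤ v → v ≤ u → u - v < δ → dist (S u f) (S v f) < ε := by
      intro u v hv huv hud
      rcases eq_or_lt_of_le huv with heq | hlt
      · rw [heq]
        simpa [dist_self] using hε
      · have hsplit : S u f = S v (S (u - v) f) := by
          rw [← ContinuousLinearMap.comp_apply, ← hSG.2 v (u - v) hv (by linarith)]
          congr 2
          ring
        rw [dist_eq_norm, hsplit, ← map_sub]
        have hlast : dist (S (u - v) f) f < ε := by
          apply hd (sub_pos.mpr hlt)
          rw [Real.dist_eq, sub_zero, abs_of_pos (sub_pos.mpr hlt)]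
          exact hud
        calc ‖S v (S (u-v) f - f)‖ ≤ ‖S (u-v) f - f‖ := hcontr v hv _
          _ < ε := by rwa [dist_eq_norm] at hlast
    have hab' : |a - b| < δ := by rwa [Real.dist_eq] at hab
    simp only [hPdef]
    rcases le_total (max b 0) (max a 0) with hle | hle
    · apply key _ _ (le_max_right b 0) hle
      have habs : |max a 0 - max b 0| ≤ |a - b| := abs_max_sub_max_le_abs a b 0
      exact lt_of_le_of_lt ((le_abs_self _).trans habs) hab'
    · rw [dist_comm]
      apply key _ _ (le_max_right a 0) hle
      have habs : |max b 0 - max a 0| ≤ |b - a| := abs_max_sub_max_le_abs b a 0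
      rw [abs_sub_comm] at hab'
      exact lt_of_le_of_lt ((le_abs_self _).trans habs) hab'
  have hP : SGData P := by
    refine ⟨?_, ?_, ?_, ?_, hPcont⟩
    · intro t ht
      simp only [hPdef]
      rw [max_eq_right ht]
      exact hSG.1
    · intro s t hs ht
      simp only [hPdef]
      rw [max_eq_left (add_nonneg hs ht), max_eq_left hs, max_eq_left ht]
      exact hSG.2 s t hs ht
    · intro t f
      exact hcontr _ (le_max_right t 0) f
    · intro t f hf
      exact hSP _ (le_max_right t 0) f hf
  -- transfer the generator description to `P`
  have hPev : ∀ f : C(E,ℝ), (fun t : ℝ => t⁻¹ • (P t f - f)) =ᶠ[𝓝[>] (0:ℝ)]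
      (fun t : ℝ => t⁻¹ • (S t f - f)) := by
    intro f
    filter_upwards [self_mem_nhdsWithin] with t ht
    rw [mem_Ioi] at ht
    simp only [hPdef]
    rw [max_eq_left (le_of_lt ht)]
  have hgenP1 : ∀ f ∈ D, Tendsto (fun t : ℝ => t⁻¹ • (P t f - f)) (𝓝[>] (0:ℝ)) (𝓝 (G f)) :=
    fun f hf => ((hgen.1 f hf).congr' (hPev f).symm)
  have hgenP2 : ∀ (f g : C(E,ℝ)),
      Tendsto (fun t : ℝ => t⁻¹ • (P t f - f)) (𝓝[>] (0:ℝ)) (𝓝 g) → f ∈ D :=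
    fun f g hfg => hgen.2 f ⟨g, hfg.congr' (hPev f)⟩
  -- the h-transform data
  have hxne : ∀ x : E, h x ≠ 0 := fun x => (hpos x).ne'
  set k : C(E,ℝ) := ⟨fun x => (h x)⁻¹, (map_continuous h).inv₀ hxne⟩ with hkdef
  have hkapp : ∀ x, k x = (h x)⁻¹ := fun x => rfl
  have hk1 : k * h = 1 := by
    ext x
    simp only [ContinuousMap.mul_apply, ContinuousMap.one_apply, hkapp]
    exact inv_mul_cancel₀ (hxne x)
  have hk2 : h * k = 1 := by rw [mul_comm]; exact hk1
  have hkpos : 0 ≤ k := by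
    rw [ContinuousMap.le_def]
    intro x
    simp only [ContinuousMap.zero_apply, hkapp]
    exact le_of_lt (inv_pos.mpr (hpos x))
  have hh0 : 0 ≤ h := by
    rw [ContinuousMap.le_def]
    intro x
    simpa using le_of_lt (hpos x)
  set V : C(E,ℝ) := k * G h with hVdef
  set c : ℝ := ‖V‖ with hcdef
  set W : C(E,ℝ) := c • (1:C(E,ℝ)) - V with hWdef
  have hW : 0 ≤ W := by
    rw [ContinuousMap.le_def]
    intro x
    have h1 : V x ≤ c := by
      have := ContinuousMap.norm_coe_le_norm V x
      rw [Real.norm_eq_abs] at this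
      exact (le_abs_self _).trans this
    simp only [hWdef, ContinuousMap.zero_apply, ContinuousMap.sub_apply,
      ContinuousMap.smul_apply, ContinuousMap.one_apply, smul_eq_mul, mul_one]
    linarith
  have hWh : W * h = c • h - G h := by
    have hVh : V * h = G h := by
      calc V * h = (k * h) * G h := by rw [hVdef]; ring
        _ = G h := by rw [hk1, one_mul]
    rw [hWdef, sub_mul, smul_mul_assoc, one_mul, hVh]
  have hgh : Tendsto (fun ε : ℝ => ε⁻¹ • (P ε h - h)) (𝓝[>] (0:ℝ)) (𝓝 (G h)) := hgenP1 h hD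
  -- the bundled perturbed semigroup
  set QL : ℝ → C(E,ℝ) →L[ℝ] C(E,ℝ) := fun t =>
    LinearMap.mkContinuous
      { toFun := fun f => Qop P W t f
        map_add' := fun f g => Qop_add hP t f g
        map_smul' := fun c' f => by simpa using Qop_smul hP t c' f }
      (Real.exp (‖W‖ * max t 0)) (fun f => Qop_norm_le hP t f) with hQL
  have hQLapp : ∀ t f, QL t f = Qop P W t f := fun t f => rfl
  set Mh : C(E,ℝ) →L[ℝ] C(E,ℝ) := ContinuousLinearMap.mul ℝ C(E,ℝ) h with hMh
  set Mk : C(E,ℝ) →L[ℝ] C(E,ℝ) := ContinuousLinearMap.mul ℝ C(E,ℝ) k with hMk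
  set S' : ℝ → C(E,ℝ) →L[ℝ] C(E,ℝ) :=
    fun t => Real.exp (-(c * max t 0)) • ((Mk.comp (QL t)).comp Mh) with hS'def
  have hS'app : ∀ t f, S' t f = Real.exp (-(c * max t 0)) • (k * Qop P W t (h * f)) :=
    fun t f => rfl
  set G' : C(E,ℝ) → C(E,ℝ) := fun f => k * (G (h * f) - G h * f) with hG'def
  refine ⟨S', G', ⟨?_, ?_, ?_, ?_⟩, ⟨?_, ?_⟩, ?_⟩
  -- (1a) semigroup law
  · constructor
    · refine ContinuousLinearMap.ext fun f => ?_
      rw [hS'app]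
      show Real.exp (-(c * max 0 0)) • (k * Qop P W 0 (h * f)) = f
      rw [max_self, mul_zero, neg_zero, Real.exp_zero, one_smul, Qop_zero hP,
        ← mul_assoc, hk1, one_mul]
    · intro s t hs ht
      refine ContinuousLinearMap.ext fun f => ?_
      rw [ContinuousLinearMap.comp_apply, hS'app, hS'app, hS'app]
      rw [max_eq_left (add_nonneg hs ht), max_eq_left hs, max_eq_left ht]
      have e1 : h * (Real.exp (-(c * t)) • (k * Qop P W t (h * f)))
          = Real.exp (-(c * t)) • Qop P W t (h * f) := by
        ext x
        simp only [ContinuousMap.mul_apply, ContinuousMap.smul_apply, smul_eq_mul, hkapp]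
        have := hxne x
        field_simp
      rw [e1, Qop_smul hP, Qop_comp hP (h * f) hs ht]
      ext x
      simp only [ContinuousMap.mul_apply, ContinuousMap.smul_apply, smul_eq_mul]
      rw [show -(c * (s + t)) = -(c * s) + -(c * t) from by ring, Real.exp_add]
      ring
  -- (1b) strong continuity
  · intro f
    have hc : Continuous fun t => S' t f := by
      have : (fun t => S' t f)
          = fun t => Real.exp (-(c * max t 0)) • (k * Qop P W t (h * f)) :=
        funext fun t => hS'app t f
      rw [this]
      exact ((Real.continuous_exp.comp
        ((continuous_const.mul (continuous_id.max continuous_const)).neg)).smul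
        (continuous_const.mul (Qop_cont hP (h * f))))
    have hval : S' 0 f = f := by
      rw [hS'app]
      show Real.exp (-(c * max 0 0)) • (k * Qop P W 0 (h * f)) = f
      rw [max_self, mul_zero, neg_zero, Real.exp_zero, one_smul, Qop_zero hP,
        ← mul_assoc, hk1, one_mul]
    have := (hc.tendsto 0).mono_left (nhdsWithin_le_nhds (s := Ioi (0:ℝ)))
    rwa [hval] at this
  -- (1c) positivity
  · intro t ht f hf
    rw [hS'app]
    exact smul_nonneg_cm (le_of_lt (Real.exp_pos _))
      (mul_nonneg_cm hkpos (Qop_nonneg hP hW t (mul_nonneg_cm hh0 hf)))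
  -- (1d) conservativity
  · intro t ht
    rw [hS'app, mul_one, max_eq_left ht, Qop_fixed hP hgh hWh ht]
    ext x
    simp only [ContinuousMap.mul_apply, ContinuousMap.smul_apply, smul_eq_mul, hkapp,
      ContinuousMap.one_apply]
    have hfs : (h x)⁻¹ * (Real.exp (c * t) * h x) = Real.exp (c * t) := by
      rw [mul_comm (Real.exp (c * t)) (h x), ← mul_assoc, inv_mul_cancel₀ (hxne x), one_mul]
    rw [hfs, ← Real.exp_add, show -(c * t) + c * t = 0 from by ring, Real.exp_zero]
  -- (2a) generator on the domain
  · intro f hf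
    have hfD : h * f ∈ D := hf
    set g : C(E,ℝ) := h * f with hgdef
    have hgl : Tendsto (fun t : ℝ => t⁻¹ • (P t g - g)) (𝓝[>] (0:ℝ)) (𝓝 (G g)) :=
      hgenP1 g hfD
    have hqlim : Tendsto (fun t : ℝ => t⁻¹ • (Qop P W t g - g)) (𝓝[>] (0:ℝ))
        (𝓝 (G g + W * g)) := by
      have h2 := Qop_deriv_zero hP g (W := W)
      refine (hgl.add h2).congr' ?_
      filter_upwards [self_mem_nhdsWithin] with t ht
      rw [mem_Ioi] at ht
      rw [volterra hP g (le_of_lt ht), ← smul_add]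
      congr 1
      abel
    have hexp1 : Tendsto (fun t : ℝ => Real.exp (-(c * t))) (𝓝[>] (0:ℝ)) (𝓝 1) := by
      have hcont : Continuous fun t : ℝ => Real.exp (-(c * t)) :=
        Real.continuous_exp.comp (continuous_const.mul continuous_id).neg
      have := (hcont.tendsto 0).mono_left (nhdsWithin_le_nhds (s := Ioi (0:ℝ)))
      simpa using this
    have hsc : Tendsto (fun t : ℝ => t⁻¹ * (Real.exp (-(c * t)) - 1)) (𝓝[>] (0:ℝ))
        (𝓝 (-c)) := by
      have hder : HasDerivAt (fun t : ℝ => Real.exp (-(c * t))) (-c) 0 := by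
        have h1 : HasDerivAt (fun τ : ℝ => -(c * τ)) (-c) 0 := by
          simpa [Pi.neg_def] using ((hasDerivAt_id (0:ℝ)).const_mul c).neg
        have := (Real.hasDerivAt_exp (-(c * 0))).comp 0 h1
        simpa [Function.comp_def] using this
      rw [hasDerivAt_iff_tendsto_slope] at hder
      have hmono : 𝓝[>] (0:ℝ) ≤ 𝓝[≠] (0:ℝ) :=
        nhdsWithin_mono 0 fun x hx => ne_of_gt hx
      refine (hder.mono_left hmono).congr' ?_
      filter_upwards [self_mem_nhdsWithin] with t ht
      rw [slope_def_field]
      rw [mul_zero, neg_zero, Real.exp_zero, sub_zero]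
      rw [div_eq_inv_mul]
    have hinner : Tendsto (fun t : ℝ => Real.exp (-(c * t)) • (t⁻¹ • (Qop P W t g - g))
        + (t⁻¹ * (Real.exp (-(c * t)) - 1)) • g) (𝓝[>] (0:ℝ))
        (𝓝 ((1:ℝ) • (G g + W * g) + (-c) • g)) :=
      (hexp1.smul hqlim).add (hsc.smul_const g)
    have hfinal := ((Mk.continuous.tendsto _).comp hinner)
    have hid : Mk ((1:ℝ) • (G g + W * g) + (-c) • g) = G' f := by
      show k * ((1:ℝ) • (G g + W * g) + (-c) • g) = k * (G (h * f) - G h * f)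
      congr 1
      have hWg : W * g = c • g - G h * f := by
        rw [hWdef, sub_mul, smul_mul_assoc, one_mul]
        congr 1
        calc V * g = (k * h) * (G h * f) := by rw [hVdef, hgdef]; ring
          _ = G h * f := by rw [hk1, one_mul]
      rw [hWg, hgdef]
      module
    rw [hid] at hfinal
    refine hfinal.congr' ?_
    filter_upwards [self_mem_nhdsWithin] with t ht
    rw [mem_Ioi] at ht
    show Mk (Real.exp (-(c * t)) • (t⁻¹ • (Qop P W t g - g))
        + (t⁻¹ * (Real.exp (-(c * t)) - 1)) • g) = t⁻¹ • (S' t f - f)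
    rw [hS'app, max_eq_left (le_of_lt ht)]
    ext x
    simp only [hMk, ContinuousLinearMap.mul_apply', hgdef, ContinuousMap.add_apply,
      ContinuousMap.mul_apply, ContinuousMap.sub_apply, ContinuousMap.smul_apply,
      smul_eq_mul, hkapp]
    have := hxne x
    field_simp
    ring
  -- (2b) maximality of the domain
  · intro f hex
    obtain ⟨g', hg'⟩ := hex
    set g : C(E,ℝ) := h * f with hgdef
    show h * f ∈ D
    have l1 := (Mh.continuous.tendsto _).comp hg'
    have l2 : Tendsto (fun t : ℝ => t⁻¹ • (Real.exp (-(c * t)) • Qop P W t g - g))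
        (𝓝[>] (0:ℝ)) (𝓝 (h * g')) := by
      refine l1.congr' ?_
      filter_upwards [self_mem_nhdsWithin] with t ht
      rw [mem_Ioi] at ht
      show Mh (t⁻¹ • (S' t f - f)) = t⁻¹ • (Real.exp (-(c * t)) • Qop P W t g - g)
      rw [hS'app, max_eq_left (le_of_lt ht)]
      ext x
      simp only [hMh, ContinuousLinearMap.mul_apply', hgdef, ContinuousMap.mul_apply,
        ContinuousMap.sub_apply, ContinuousMap.smul_apply, smul_eq_mul, hkapp]
      have := hxne x
      field_simp
    have hexp2 : Tendsto (fun t : ℝ => Real.exp (c * t)) (𝓝[>] (0:ℝ)) (𝓝 1) := by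
      have hcont : Continuous fun t : ℝ => Real.exp (c * t) :=
        Real.continuous_exp.comp (continuous_const.mul continuous_id)
      have := (hcont.tendsto 0).mono_left (nhdsWithin_le_nhds (s := Ioi (0:ℝ)))
      simpa using this
    have hsc2 : Tendsto (fun t : ℝ => t⁻¹ * (Real.exp (c * t) - 1)) (𝓝[>] (0:ℝ))
        (𝓝 c) := by
      have hder : HasDerivAt (fun t : ℝ => Real.exp (c * t)) c 0 := by
        have h1 : HasDerivAt (fun τ : ℝ => c * τ) c 0 := by
          simpa using (hasDerivAt_id (0:ℝ)).const_mul c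
        have := (Real.hasDerivAt_exp (c * 0)).comp 0 h1
        simpa [Function.comp_def] using this
      rw [hasDerivAt_iff_tendsto_slope] at hder
      have hmono : 𝓝[>] (0:ℝ) ≤ 𝓝[≠] (0:ℝ) :=
        nhdsWithin_mono 0 fun x hx => ne_of_gt hx
      refine (hder.mono_left hmono).congr' ?_
      filter_upwards [self_mem_nhdsWithin] with t ht
      rw [slope_def_field, mul_zero, Real.exp_zero, sub_zero, div_eq_inv_mul]
    have l3 : Tendsto (fun t : ℝ => Real.exp (c * t)
          • (t⁻¹ • (Real.exp (-(c * t)) • Qop P W t g - g))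
        + (t⁻¹ * (Real.exp (c * t) - 1)) • g) (𝓝[>] (0:ℝ))
        (𝓝 ((1:ℝ) • (h * g') + c • g)) :=
      (hexp2.smul l2).add (hsc2.smul_const g)
    have l4 : Tendsto (fun t : ℝ => t⁻¹ • (Qop P W t g - g)) (𝓝[>] (0:ℝ))
        (𝓝 ((1:ℝ) • (h * g') + c • g)) := by
      refine l3.congr' ?_
      filter_upwards [self_mem_nhdsWithin] with t ht
      rw [mem_Ioi] at ht
      have key : Real.exp (c * t) • (Real.exp (-(c * t)) • Qop P W t g - g)
          + (Real.exp (c * t) - 1) • g = Qop P W t g - g := by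
        rw [smul_sub, smul_smul, ← Real.exp_add,
          show c * t + -(c * t) = 0 from by ring, Real.exp_zero, one_smul]
        module
      calc Real.exp (c * t) • (t⁻¹ • (Real.exp (-(c * t)) • Qop P W t g - g))
            + (t⁻¹ * (Real.exp (c * t) - 1)) • g
          = t⁻¹ • (Real.exp (c * t) • (Real.exp (-(c * t)) • Qop P W t g - g)
            + (Real.exp (c * t) - 1) • g) := by
            rw [smul_add, smul_comm t⁻¹ (Real.exp (c * t)), mul_smul]
        _ = t⁻¹ • (Qop P W t g - g) := by rw [key]
    have l5 : Tendsto (fun t : ℝ => t⁻¹ • (P t g - g)) (𝓝[>] (0:ℝ))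
        (𝓝 (((1:ℝ) • (h * g') + c • g) - W * g)) := by
      refine (l4.sub (Qop_deriv_zero hP g (W := W))).congr' ?_
      filter_upwards [self_mem_nhdsWithin] with t ht
      rw [mem_Ioi] at ht
      rw [← smul_sub]
      congr 1
      rw [volterra hP g (le_of_lt ht)]
      abel
    exact hgenP2 g _ l5
  -- (3) the formula for `G'`
  · intro f hf x
    show (k * (G (h * f) - G h * f)) x = _
    rw [ContinuousMap.mul_apply, ContinuousMap.sub_apply, ContinuousMap.mul_apply, hkapp,
      div_eq_mul_inv, mul_comm]
end

section
/- Let G be the generator of a Feller semigroup S on C(E), let h ∈ D(G) satisfy h(x) > 0 for all x ∈ E, and let α, β ∈ C(E) with α ≥ 0. Define G^h f := (1/h)·(G(h·f) − (Gh)·f) with domain D(G^h) := {f ∈ C(E) : h·f ∈ D(G)}. If u : [0,∞) → C(E) is continuously differentiable with u_t ∈ D(G) and ∂u_t/∂t = G u_t + β u_t − α u_t² for all t ≥ 0, then the map u^h : [0,∞) → C(E) defined by u^h_t := u_t/h (pointwise quotient) is continuously differentiable, satisfies u^h_t ∈ D(G^h), and ∂u^h_t/∂t = G^h u^h_t + (β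 + (Gh)/h)·u^h_t − (h·α)·(u^h_t)² for all t ≥ 0, with u^h_0 = u_0/h. -/
open Filter Topology Set MeasureTheory

variable {E : Type*} [TopologicalSpace E] [CompactSpace E] [TopologicalSpace.MetrizableSpace E] [Nonempty E]

/-- Computation in the proof of Lemma 5: if `u` is a classical solution of
`∂u/∂t = G u + β u - α u²` on `[0,∞)` and `uʰ t := u t / h` (pointwise), then `uʰ` is a
classical solution of `∂uʰ/∂t = Gʰ uʰ + (β + (Gh)/h) uʰ - (hα) (uʰ)²`, where
`Gʰ f = (1/h)(G(hf) - (Gh)f)` on `{f : h ⬝ f ∈ D(G)}`, with `uʰ 0 = u 0 / h`. -/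
theorem statement9 (S : ℝ → C(E, ℝ) →L[ℝ] C(E, ℝ))
    (D : Set C(E, ℝ)) (G : C(E, ℝ) → C(E, ℝ))
    (hS : IsFellerSG S) (hgen : IsGeneratorOf S D G)
    (h : C(E, ℝ)) (hD : h ∈ D) (hpos : ∀ x : E, 0 < h x)
    (α β : C(E, ℝ)) (hα : 0 ≤ α)
    -- `u` is a classical solution of `∂u/∂t = G u + β u - α u²` on `[0,∞)`
    (u : ℝ → C(E, ℝ)) (huD : ∀ t ∈ Ici (0 : ℝ), u t ∈ D)
    (hu' : ∀ t ∈ Ici (0 : ℝ),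
      HasDerivWithinAt u (G (u t) + β * u t - α * u t ^ 2) (Ici 0) t)
    (hucont : ContinuousOn (fun t => G (u t) + β * u t - α * u t ^ 2) (Ici 0))
    -- `uh` is the map `uʰ t = u t / h` (pointwise quotient)
    (uh : ℝ → C(E, ℝ)) (huh : ∀ t : ℝ, ∀ x : E, uh t x = u t x / h x) :
    -- `uʰ t` lies in the domain of `Gʰ`, i.e. `h ⬝ uʰ t ∈ D(G)`
    (∀ t ∈ Ici (0 : ℝ), h * uh t ∈ D) ∧
    -- `uʰ 0 = u 0 / h`
    (∀ x : E, uh 0 x = u 0 x / h x) ∧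
    -- `uʰ` is continuously differentiable with
    -- `∂uʰ/∂t = Gʰ uʰ + (β + (Gh)/h) uʰ - (hα) (uʰ)²`
    ∃ uh' : ℝ → C(E, ℝ),
      ContinuousOn uh' (Ici 0) ∧
      (∀ t ∈ Ici (0 : ℝ), HasDerivWithinAt uh (uh' t) (Ici 0) t) ∧
      ∀ t ∈ Ici (0 : ℝ), ∀ x : E,
        uh' t x = (G (h * uh t) x - G h x * uh t x) / h x
          + (β x + G h x / h x) * uh t x - (h x * α x) * uh t x ^ 2 := by
  have hne : ∀ x : E, h x ≠ 0 := fun x => (hpos x).ne'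
  set hinv : C(E, ℝ) := ⟨fun x => (h x)⁻¹, Continuous.inv₀ h.continuous hne⟩ with hinv_def
  have hmul : ∀ t : ℝ, h * uh t = u t := by
    intro t
    ext x
    simp only [ContinuousMap.mul_apply, huh t x]
    rw [mul_div_cancel₀ _ (hne x)]
  have huheq : uh = fun t => hinv * u t := by
    funext t
    ext x
    simp only [ContinuousMap.mul_apply, huh t x, hinv_def, ContinuousMap.coe_mk]
    rw [div_eq_inv_mul]
  refine ⟨fun t ht => by rw [hmul t]; exact huD t ht, fun x => huh 0 x, ?_⟩
  refine ⟨fun t => hinv * (G (u t) + β * u t - α * u t ^ 2), ?_, ?_, ?_⟩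
  · exact fun t ht => continuousWithinAt_const.mul (hucont t ht)
  · intro t ht
    rw [huheq]
    exact (hu' t ht).const_mul hinv
  · intro t ht x
    simp only [ContinuousMap.mul_apply, ContinuousMap.add_apply, ContinuousMap.sub_apply,
      ContinuousMap.pow_apply, hinv_def, ContinuousMap.coe_mk, hmul t, huh t x]
    have hx : h x ≠ 0 := hne x
    field_simp
    ring
end

section
/- Let E be a Polish space, let μ be an atomless Borel measure on E with μ(E) = ∞, and let Z be a random finite measure on E (defined on a probability space (Ω, F, P)) such that P[Z(A) = 0] = e^{−μ(A)} for every Borel set A ⊆ E (with the convention e^{−∞} := 0). Then almost surely supp(Z) is an infinite set; equivalently, P[supp(Z) is finite] = 0. -/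
open MeasureTheory Set

/-- The (topological) support of a measure `ν`: the set of points all of whose open
neighbourhoods have positive measure. -/
def measSupport {E : Type*} [TopologicalSpace E] [MeasurableSpace E] (ν : Measure E) : Set E :=
  {x | ∀ U : Set E, IsOpen U → x ∈ U → 0 < ν U}

open Filter Metric Topology ENNReal

section Aux

variable {E : Type*} [TopologicalSpace E] [MeasurableSpace E]

/-- In a second countable space, the complement of the support of a measure is null. -/
lemma measSupport_compl_null [SecondCountableTopology E] (ν : Measure E) :
    ν (measSupport ν)ᶜ = 0 := by
  obtain ⟨B, hBc, -, hB⟩ := TopologicalSpace.exists_countable_basis E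
  have hnull : ν (⋃ V ∈ {V ∈ B | ν V = 0}, V) = 0 :=
    (measure_biUnion_null_iff (hBc.mono (sep_subset _ _))).mpr fun V hV => hV.2
  refine measure_mono_null ?_ hnull
  · intro x hx
    simp only [mem_compl_iff, measSupport, mem_setOf_eq] at hx
    push_neg at hx
    obtain ⟨U, hU, hxU, hUν⟩ := hx
    obtain ⟨V, hVB, hxV, hVU⟩ := hB.exists_subset_of_mem_open hxU hU
    have hVν : ν V = 0 :=
      le_antisymm ((measure_mono hVU).trans (le_of_not_gt (by simpa using hUν))) (zero_le)
    exact mem_biUnion ⟨hVB, hVν⟩ hxV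

/-- Key splitting lemma: from any Borel set of infinite atomless measure one can chip off a
piece of measure at least 1 while keeping the remainder of infinite measure. -/
lemma exists_chunk [PolishSpace E] [BorelSpace E] (μ : Measure E) [NullSingletonClass μ]
    (S : Set E) (hS : MeasurableSet S) (hSμ : μ S = ∞) :
    ∃ T, T ⊆ S ∧ MeasurableSet T ∧ 1 ≤ μ T ∧ μ (S \ T) = ∞ := by
  by_contra hcon
  push_neg at hcon
  -- no measurable subset of measure in [1, ∞)
  have hfin : ∀ T, T ⊆ S → MeasurableSet T → μ T ≠ ∞ → μ T ≤ 1 := by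
    intro T hTS hTm hTfin
    by_contra h
    have h1 : 1 ≤ μ T := le_of_lt (by simpa using lt_of_not_ge h)
    have hST : μ (S \ T) = ∞ := by
      by_contra hd
      have hsub : S ⊆ (S \ T) ∪ T := by
        intro x hx
        by_cases hxT : x ∈ T
        · exact Or.inr hxT
        · exact Or.inl ⟨hx, hxT⟩
      have : μ S ≤ μ (S \ T) + μ T := (measure_mono hsub).trans (measure_union_le _ _)
      rw [hSμ] at this
      exact (ENNReal.add_ne_top.mpr ⟨hd, hTfin⟩) (top_le_iff.mp this)
    exact hcon T hTS hTm h1 hST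
  -- supremum of finite-measure subsets
  set 𝒯 : Set (Set E) := {T | T ⊆ S ∧ MeasurableSet T ∧ μ T ≠ ∞} with h𝒯
  set c : ℝ≥0∞ := sSup (μ '' 𝒯) with hc
  have hempty : (∅ : Set E) ∈ 𝒯 := ⟨empty_subset S, MeasurableSet.empty, by simp⟩
  have hc1 : c ≤ 1 := by
    apply sSup_le
    rintro b ⟨T, hT, rfl⟩
    exact hfin T hT.1 hT.2.1 hT.2.2
  have hcne : c ≠ ∞ := fun h => by simp [h] at hc1
  -- approximating sequence
  have happrox : ∀ n : ℕ, ∃ T, T ∈ 𝒯 ∧ c ≤ μ T + (n : ℝ≥0∞)⁻¹ := by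
    intro n
    rcases eq_or_ne c 0 with h0 | h0
    · exact ⟨∅, hempty, by simp [h0]⟩
    rcases eq_or_ne (n : ℝ≥0∞)⁻¹ 0 with hn0 | hn0
    · exfalso
      simp only [ENNReal.inv_eq_zero] at hn0
      exact (ENNReal.natCast_ne_top n) hn0
    have hlt : c - (n : ℝ≥0∞)⁻¹ < c := ENNReal.sub_lt_self hcne h0 hn0
    rw [hc] at hlt
    obtain ⟨b, ⟨T, hT, rfl⟩, hb⟩ := lt_sSup_iff.mp hlt
    exact ⟨T, hT, tsub_le_iff_right.mp hb.le⟩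
  choose T hT𝒯 hTapprox using happrox
  -- the union of the approximating sets, via finite partial unions
  set A : ℕ → Set E := fun n => ⋃ i ∈ Finset.range n, T i with hA
  have hA𝒯 : ∀ n, A n ∈ 𝒯 := by
    intro n
    refine ⟨iUnion₂_subset fun i _ => (hT𝒯 i).1, ?_, ?_⟩
    · exact MeasurableSet.biUnion (Finset.range n).countable_toSet fun i _ => (hT𝒯 i).2.1
    · have h1 : μ (A n) ≤ ∑ i ∈ Finset.range n, μ (T i) := measure_biUnion_finset_le _ _
      have h2 : ∑ i ∈ Finset.range n, μ (T i) ≠ ∞ :=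
        (ENNReal.sum_lt_top.mpr fun i _ => lt_top_iff_ne_top.mpr (hT𝒯 i).2.2).ne
      exact fun h => h2 (top_le_iff.mp (h ▸ h1))
  have hAmono : Monotone A := fun m n hmn =>
    biUnion_subset_biUnion_left (Finset.range_subset_range.mpr hmn)
  set W : Set E := ⋃ n, A n with hW
  have hWm : MeasurableSet W := MeasurableSet.iUnion fun n => (hA𝒯 n).2.1
  have hWfin : μ W ≠ ∞ := by
    have h1 : μ W = ⨆ n, μ (A n) := (hAmono.directed_le).measure_iUnion
    have h2 : μ W ≤ c := h1 ▸ iSup_le fun n => le_sSup ⟨A n, hA𝒯 n, rfl⟩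
    exact fun h => hcne (top_le_iff.mp (h ▸ h2))
  have hTW : ∀ n, T n ⊆ W := by
    intro n x hx
    exact mem_iUnion.mpr ⟨n + 1, mem_biUnion (Finset.self_mem_range_succ n) hx⟩
  -- the purely infinite remainder S'
  set S' : Set E := S \ W with hS'
  have hS'm : MeasurableSet S' := hS.diff hWm
  have hS'μ : μ S' = ∞ := by
    by_contra hd
    have hsub : S ⊆ S' ∪ W := by
      intro x hx
      by_cases hxW : x ∈ W
      · exact Or.inr hxW
      · exact Or.inl ⟨hx, hxW⟩
    have : μ S ≤ μ S' + μ W := (measure_mono hsub).trans (measure_union_le _ _)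
    rw [hSμ] at this
    exact (ENNReal.add_ne_top.mpr ⟨hd, hWfin⟩) (top_le_iff.mp this)
  have h0inf : ∀ U, U ⊆ S' → MeasurableSet U → μ U = 0 ∨ μ U = ∞ := by
    intro U hUS' hUm
    rcases eq_or_ne (μ U) ∞ with h | h
    · exact Or.inr h
    left
    by_contra hU0
    have hle : ∀ n : ℕ, μ U ≤ (n : ℝ≥0∞)⁻¹ := by
      intro n
      have hdisj : Disjoint (T n) U := by
        rw [Set.disjoint_left]
        intro x hxT hxU
        exact (hUS' hxU).2 (hTW n hxT)
      have hmem : T n ∪ U ∈ 𝒯 := by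
        refine ⟨union_subset (hT𝒯 n).1 (hUS'.trans diff_subset), (hT𝒯 n).2.1.union hUm, ?_⟩
        rw [measure_union hdisj.symm.symm hUm]
        exact ENNReal.add_ne_top.mpr ⟨(hT𝒯 n).2.2, h⟩
      have h1 : μ (T n) + μ U ≤ c := by
        rw [← measure_union hdisj hUm]
        exact le_sSup ⟨T n ∪ U, hmem, rfl⟩
      have h2 : μ (T n) + μ U ≤ μ (T n) + (n : ℝ≥0∞)⁻¹ := h1.trans (hTapprox n)
      exact (ENNReal.add_le_add_iff_left (hT𝒯 n).2.2).mp h2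
    obtain ⟨n, hn⟩ := ENNReal.exists_inv_nat_lt hU0
    exact absurd (hle n) (not_le.mpr hn)
  -- any subset of S' of infinite measure has null complement in S'
  have hult : ∀ U, U ⊆ S' → MeasurableSet U → μ U = ∞ → μ (S' \ U) = 0 := by
    intro U hUS' hUm hUinf
    rcases h0inf (S' \ U) diff_subset (hS'm.diff hUm) with h | h
    · exact h
    exfalso
    refine hcon U (hUS'.trans diff_subset) hUm (hUinf ▸ le_top) ?_
    have : S' \ U ⊆ S \ U := diff_subset_diff_left diff_subset
    exact top_le_iff.mp (h ▸ measure_mono this)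
  -- metric structure
  letI := TopologicalSpace.upgradeIsCompletelyMetrizable E
  have hne : Nonempty E := ⟨(nonempty_of_measure_ne_zero (hS'μ ▸ ENNReal.top_ne_zero)).some⟩
  obtain ⟨u, hu⟩ := TopologicalSpace.exists_dense_seq E
  -- recursive shrinking of sets of infinite measure into small balls
  have hstep : ∀ (n : ℕ) (C : Set E), C ⊆ S' → MeasurableSet C → μ C = ∞ →
      ∃ i : ℕ, μ (C ∩ closedBall (u i) ((n : ℝ) + 1)⁻¹) = ∞ := by
    intro n C hCS' hCm hCμ
    by_contra hno
    push_neg at hno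
    have hr : (0 : ℝ) < ((n : ℝ) + 1)⁻¹ := by positivity
    have hcover : C ⊆ ⋃ i, C ∩ closedBall (u i) ((n : ℝ) + 1)⁻¹ := by
      intro x hx
      obtain ⟨i, hi⟩ := Metric.denseRange_iff.mp hu x _ hr
      exact mem_iUnion.mpr ⟨i, hx, Metric.mem_closedBall.mpr hi.le⟩
    have hzero : ∀ i : ℕ, μ (C ∩ closedBall (u i) ((n : ℝ) + 1)⁻¹) = 0 := by
      intro i
      rcases h0inf _ ((inter_subset_left).trans hCS')
        (hCm.inter measurableSet_closedBall) with h | h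
      · exact h
      · exact absurd h (hno i)
    have : μ C = 0 := measure_mono_null hcover (measure_iUnion_null hzero)
    rw [hCμ] at this
    exact ENNReal.top_ne_zero this
  choose f hf using hstep
  -- build the decreasing sequence of sets
  let D : ℕ → {C : Set E // C ⊆ S' ∧ MeasurableSet C ∧ μ C = ∞} := fun n =>
    Nat.rec ⟨S', subset_rfl, hS'm, hS'μ⟩
      (fun n p =>
        ⟨p.1 ∩ closedBall (u (f n p.1 p.2.1 p.2.2.1 p.2.2.2)) ((n : ℝ) + 1)⁻¹,
          (inter_subset_left).trans p.2.1,
          p.2.2.1.inter measurableSet_closedBall,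
          hf n p.1 p.2.1 p.2.2.1 p.2.2.2⟩) n
  have hDsucc : ∀ n, (D (n + 1)).1 =
      (D n).1 ∩ closedBall (u (f n (D n).1 (D n).2.1 (D n).2.2.1 (D n).2.2.2)) ((n : ℝ) + 1)⁻¹ :=
    fun n => rfl
  set K : Set E := ⋂ n, (D n).1 with hK
  have hKS' : K ⊆ S' := (iInter_subset _ 0).trans (D 0).2.1
  -- K is a subsingleton
  have hKsub : K.Subsingleton := by
    intro x hx y hy
    have hdist : ∀ n : ℕ, dist x y ≤ 2 * ((n : ℝ) + 1)⁻¹ := by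
      intro n
      have hx' : x ∈ (D (n + 1)).1 := mem_iInter.mp hx (n + 1)
      have hy' : y ∈ (D (n + 1)).1 := mem_iInter.mp hy (n + 1)
      rw [hDsucc n] at hx' hy'
      set ctr := u (f n (D n).1 (D n).2.1 (D n).2.2.1 (D n).2.2.2)
      have h1 : dist x ctr ≤ ((n : ℝ) + 1)⁻¹ := Metric.mem_closedBall.mp hx'.2
      have h2 : dist y ctr ≤ ((n : ℝ) + 1)⁻¹ := Metric.mem_closedBall.mp hy'.2
      calc dist x y ≤ dist x ctr + dist y ctr := dist_triangle_right x y ctr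
        _ ≤ 2 * ((n : ℝ) + 1)⁻¹ := by linarith
    have htend : Tendsto (fun n : ℕ => 2 * ((n : ℝ) + 1)⁻¹) atTop (𝓝 0) := by
      have := tendsto_one_div_add_atTop_nhds_zero_nat.const_mul (2 : ℝ)
      simpa [one_div, mul_zero] using this
    exact dist_le_zero.mp (ge_of_tendsto' htend hdist)
  -- but K has infinite measure
  have hKnull : μ (S' \ K) = 0 := by
    rw [hK, diff_iInter]
    exact measure_iUnion_null fun n => hult _ (D n).2.1 (D n).2.2.1 (D n).2.2.2
  have hKinf : μ K = ∞ := by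
    have hsub : S' ⊆ K ∪ (S' \ K) := by
      intro x hx
      by_cases hxK : x ∈ K
      · exact Or.inl hxK
      · exact Or.inr ⟨hx, hxK⟩
    have : μ S' ≤ μ K + μ (S' \ K) := (measure_mono hsub).trans (measure_union_le _ _)
    rw [hS'μ, hKnull, add_zero] at this
    exact top_le_iff.mp this
  rw [hKsub.measure_zero μ] at hKinf
  exact ENNReal.top_ne_zero hKinf.symm

end Aux

/-- Lemma 35 (Random measures with Poisson support), infinite-intensity case: if `Z` is a
random finite measure on a Polish space `E` with `P[Z(A) = 0] = exp(-μ(A))` for every Borel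
set `A` (with `exp(-∞) := 0`), where `μ` is an atomless measure with `μ(E) = ∞`, then a.s.
`supp(Z)` is infinite. -/
theorem statement14 {E : Type*} [TopologicalSpace E] [PolishSpace E]
    [MeasurableSpace E] [BorelSpace E]
    {Ω : Type*} [MeasurableSpace Ω] (P : Measure Ω) [IsProbabilityMeasure P]
    (μ : Measure E) [NullSingletonClass μ] (hμ : μ Set.univ = ⊤)
    (Z : Ω → Measure E) (hZfin : ∀ ω, IsFiniteMeasure (Z ω))
    (hZmeas : ∀ A : Set E, MeasurableSet A → Measurable fun ω => Z ω A)
    (hZ : ∀ A : Set E, MeasurableSet A →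
      P {ω | Z ω A = 0} =
        if μ A = ⊤ then 0 else ENNReal.ofReal (Real.exp (-(μ A).toReal))) :
    P {ω | (measSupport (Z ω)).Finite} = 0 := by
  classical
  -- build a countable disjoint family of measurable sets each of measure ≥ 1
  choose F hF1 hF2 hF3 hF4 using exists_chunk μ
  let G : ℕ → {S : Set E // MeasurableSet S ∧ μ S = ∞} := fun n =>
    Nat.rec ⟨Set.univ, MeasurableSet.univ, hμ⟩
      (fun _ p => ⟨p.1 \ F p.1 p.2.1 p.2.2,
        p.2.1.diff (hF2 p.1 p.2.1 p.2.2), hF4 p.1 p.2.1 p.2.2⟩) n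
  let T : ℕ → Set E := fun n => F (G n).1 (G n).2.1 (G n).2.2
  have hGsucc : ∀ n, (G (n + 1)).1 = (G n).1 \ T n := fun n => rfl
  have hTsub : ∀ n, T n ⊆ (G n).1 := fun n => hF1 _ _ _
  have hTm : ∀ n, MeasurableSet (T n) := fun n => hF2 _ _ _
  have hT1 : ∀ n, 1 ≤ μ (T n) := fun n => hF3 _ _ _
  have hGanti : ∀ m n, m ≤ n → (G n).1 ⊆ (G m).1 := by
    intro m n
    induction n with
    | zero => intro hmn; obtain rfl := Nat.le_zero.mp hmn; exact subset_rfl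
    | succ k ih =>
      intro hmn
      rcases Nat.eq_or_lt_of_le hmn with h | h
      · subst h; exact subset_rfl
      · have hstep : (G (k + 1)).1 ⊆ (G k).1 := by
          rw [hGsucc k]; exact diff_subset
        exact hstep.trans (ih (Nat.lt_succ_iff.mp h))
  have hdisj : ∀ m n, m ≠ n → Disjoint (T m) (T n) := by
    have key : ∀ m n, m < n → Disjoint (T m) (T n) := by
      intro m n hmn
      rw [Set.disjoint_right]
      intro x hxn hxm
      have : x ∈ (G (m + 1)).1 := hGanti (m + 1) n hmn ((hTsub n) hxn)
      rw [hGsucc m] at this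
      exact this.2 hxm
    intro m n hmn
    rcases lt_or_gt_of_ne hmn with h | h
    · exact key m n h
    · exact (key n m h).symm
  -- group into countably many sets of infinite measure
  let B : ℕ → Set E := fun j => ⋃ n, T (Nat.pair j n)
  have hBm : ∀ j, MeasurableSet (B j) := fun j => MeasurableSet.iUnion fun n => hTm _
  have hBinf : ∀ j, μ (B j) = ⊤ := by
    intro j
    have hd : Pairwise (Function.onFun Disjoint fun n => T (Nat.pair j n)) := by
      intro m n hmn
      exact hdisj _ _ (fun h => hmn (Nat.pair_eq_pair.mp h).2)
    have h1 : μ (B j) = ∑' n, μ (T (Nat.pair j n)) := measure_iUnion hd fun n => hTm _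
    have h2 : (⊤ : ℝ≥0∞) ≤ ∑' n : ℕ, μ (T (Nat.pair j n)) := by
      calc (⊤ : ℝ≥0∞) = ∑' _ : ℕ, (1 : ℝ≥0∞) :=
            (ENNReal.tsum_const_eq_top_of_ne_zero one_ne_zero).symm
        _ ≤ ∑' n : ℕ, μ (T (Nat.pair j n)) := ENNReal.tsum_le_tsum fun n => hT1 _
    rw [h1]
    exact top_le_iff.mp h2
  have hBdisj : ∀ j k, j ≠ k → Disjoint (B j) (B k) := by
    intro j k hjk
    rw [Set.disjoint_iUnion_left]
    intro m
    rw [Set.disjoint_iUnion_right]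
    intro n
    exact hdisj _ _ (fun h => hjk (Nat.pair_eq_pair.mp h).1)
  -- the null event
  have hPN : P (⋃ j, {ω | Z ω (B j) = 0}) = 0 := by
    refine measure_iUnion_null fun j => ?_
    rw [hZ (B j) (hBm j), if_pos (hBinf j)]
  refine measure_mono_null ?_ hPN
  intro ω hω
  simp only [mem_setOf_eq] at hω
  by_contra hno
  simp only [mem_iUnion, mem_setOf_eq] at hno
  push_neg at hno
  -- from each B j pick a support point
  have hsupp : ∀ j, (B j ∩ measSupport (Z ω)).Nonempty := by
    intro j
    rw [Set.nonempty_iff_ne_empty]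
    intro hempty
    have hsub : B j ⊆ (B j ∩ measSupport (Z ω)) ∪ (measSupport (Z ω))ᶜ := by
      intro x hx
      by_cases hxs : x ∈ measSupport (Z ω)
      · exact Or.inl ⟨hx, hxs⟩
      · exact Or.inr hxs
    have : Z ω (B j) ≤ Z ω (B j ∩ measSupport (Z ω)) + Z ω (measSupport (Z ω))ᶜ :=
      (measure_mono hsub).trans (measure_union_le _ _)
    rw [hempty, measure_empty, measSupport_compl_null (Z ω), add_zero] at this
    exact hno j (le_antisymm this (zero_le))
  choose x hx using hsupp
  have hinj : Function.Injective x := by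
    intro j k hjk
    by_contra h
    exact Set.disjoint_left.mp (hBdisj j k h) (hx j).1 (hjk ▸ (hx k).1)
  exact (Set.infinite_of_injective_forall_mem hinj fun j => (hx j).2) hω
end

section
/- Let G be the generator of a Feller semigroup S on C(E), and let α, β ∈ C(E) with α ≥ 0 and β ≤ α pointwise. Then for every f ∈ C(E) with 0 ≤ f ≤ 1, the unique mild solution u of the Cauchy problem ∂u_t/∂t = G u_t + β u_t − α u_t², u_0 = f, satisfies 0 ≤ u_t ≤ 1 for all t ≥ 0. -/
open Filter Topology Set MeasureTheory

variable {E : Type*} [TopologicalSpace E] [CompactSpace E] [TopologicalSpace.MetrizableSpace E] [Nonempty E]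

set_option linter.unusedSectionVars false

namespace Aux16

lemma le_norm_smul_one (g : C(E, ℝ)) : g ≤ ‖g‖ • (1 : C(E, ℝ)) := by
  rw [ContinuousMap.le_def]
  intro x
  simp only [ContinuousMap.smul_apply, ContinuousMap.one_apply, smul_eq_mul, mul_one]
  exact (le_abs_self _).trans (g.norm_coe_le_norm x)

lemma neg_norm_smul_one_le (g : C(E, ℝ)) : -(‖g‖ • (1 : C(E, ℝ))) ≤ g := by
  rw [ContinuousMap.le_def]
  intro x
  simp only [ContinuousMap.neg_apply, ContinuousMap.smul_apply, ContinuousMap.one_apply,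
    smul_eq_mul, mul_one]
  exact neg_le_of_abs_le (g.norm_coe_le_norm x)

lemma sgMono {S : ℝ → C(E, ℝ) →L[ℝ] C(E, ℝ)} (hpos : PositiveSG S) {t : ℝ} (ht : 0 ≤ t)
    {g h : C(E, ℝ)} (hgh : g ≤ h) : S t g ≤ S t h := by
  have := hpos t ht (h - g) (by rwa [sub_nonneg])
  rw [map_sub] at this
  rwa [← sub_nonneg]

lemma sgNorm {S : ℝ → C(E, ℝ) →L[ℝ] C(E, ℝ)} (hpos : PositiveSG S)
    (hone : ∀ t : ℝ, 0 ≤ t → S t 1 = 1) {t : ℝ} (ht : 0 ≤ t) (g : C(E, ℝ)) :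
    ‖S t g‖ ≤ ‖g‖ := by
  rw [ContinuousMap.norm_le _ (norm_nonneg g)]
  intro x
  have h1 : S t g ≤ ‖g‖ • (1 : C(E, ℝ)) := by
    have := sgMono hpos ht (le_norm_smul_one g)
    rwa [_root_.map_smul, hone t ht] at this
  have h2 : -(‖g‖ • (1 : C(E, ℝ))) ≤ S t g := by
    have := sgMono hpos ht (neg_norm_smul_one_le g)
    rwa [map_neg, _root_.map_smul, hone t ht] at this
  rw [ContinuousMap.le_def] at h1 h2
  have e1 := h1 x
  have e2 := h2 x
  simp only [ContinuousMap.smul_apply, ContinuousMap.one_apply, ContinuousMap.neg_apply,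
    smul_eq_mul, mul_one] at e1 e2
  rw [Real.norm_eq_abs, abs_le]
  exact ⟨e2, e1⟩

lemma sgDist {S : ℝ → C(E, ℝ) →L[ℝ] C(E, ℝ)} (hsemi : IsSemigroupOn S) (hpos : PositiveSG S)
    (hone : ∀ t : ℝ, 0 ≤ t → S t 1 = 1) {a b : ℝ} (ha : 0 ≤ a) (hab : a ≤ b) (g : C(E, ℝ)) :
    ‖S b g - S a g‖ ≤ ‖S (b - a) g - g‖ := by
  have hb : S b g = S a (S (b - a) g) := by
    have h := hsemi.2 a (b - a) ha (by linarith)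
    have : a + (b - a) = b := by ring
    rw [this] at h
    rw [h]; rfl
  rw [hb, ← map_sub]
  exact sgNorm hpos hone ha _

lemma sgContOn {S : ℝ → C(E, ℝ) →L[ℝ] C(E, ℝ)} (hsemi : IsSemigroupOn S)
    (hscont : StronglyContinuousSG S) (hpos : PositiveSG S)
    (hone : ∀ t : ℝ, 0 ≤ t → S t 1 = 1) (g : C(E, ℝ)) :
    ContinuousOn (fun t => S t g) (Ici (0 : ℝ)) := by
  rw [Metric.continuousOn_iff]
  intro x hx ε hε
  obtain ⟨δ, hδ, hδ'⟩ := Metric.tendsto_nhdsWithin_nhds.mp (hscont g) ε hε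
  refine ⟨δ, hδ, fun y hy hdy => ?_⟩
  rcases eq_or_ne y x with rfl | hne
  · simpa using hε
  · have key : ∀ a b : ℝ, 0 ≤ a → a < b → b - a < δ → dist (S b g) (S a g) < ε := by
      intro a b ha hab hd
      have h1 : dist (S b g) (S a g) ≤ ‖S (b - a) g - g‖ :=
        (dist_eq_norm _ _).le.trans (sgDist hsemi hpos hone ha hab.le g)
      have h2 : dist (S (b - a) g) g < ε := by
        apply hδ' (by simp [sub_pos.mpr hab]) (by rw [Real.dist_eq]; rw [sub_zero]; rw [abs_of_pos (by linarith)]; exact hd)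
      rw [dist_eq_norm] at h2
      linarith
    rcases lt_or_gt_of_ne hne with h | h
    · rw [dist_comm]
      exact key y x hy h (by rw [Real.dist_eq] at hdy; rw [abs_sub_comm] at hdy; rw [abs_of_pos (by linarith)] at hdy; linarith)
    · exact key x y hx h (by rw [Real.dist_eq, abs_of_pos (by linarith)] at hdy; linarith)



lemma contOn_integrand {S : ℝ → C(E, ℝ) →L[ℝ] C(E, ℝ)} (hsemi : IsSemigroupOn S)
    (hscont : StronglyContinuousSG S) (hpos : PositiveSG S)
    (hone : ∀ t : ℝ, 0 ≤ t → S t 1 = 1) {t : ℝ} (ht : 0 ≤ t) {w : ℝ → C(E, ℝ)}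
    (hw : ContinuousOn w (Icc 0 t)) :
    ContinuousOn (fun s => S (t - s) (w s)) (Icc 0 t) := by
  intro s₀ hs₀
  have hsub : ContinuousWithinAt (fun s => S (t - s) (w s₀)) (Icc 0 t) s₀ := by
    have hmap : MapsTo (fun s : ℝ => t - s) (Icc 0 t) (Ici (0 : ℝ)) := by
      intro s hs; simp only [mem_Ici]; linarith [hs.2]
    exact ((sgContOn hsemi hscont hpos hone (w s₀)) (t - s₀) (hmap hs₀)).comp
      ((continuous_const.sub continuous_id).continuousWithinAt) hmap
  have hd1 : Tendsto (fun s => dist (w s) (w s₀)) (𝓝[Icc 0 t] s₀) (𝓝 0) := by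
    exact tendsto_iff_dist_tendsto_zero.mp (hw s₀ hs₀)
  have hd2 : Tendsto (fun s => dist (S (t - s) (w s₀)) (S (t - s₀) (w s₀)))
      (𝓝[Icc 0 t] s₀) (𝓝 0) := by
    exact tendsto_iff_dist_tendsto_zero.mp hsub
  rw [ContinuousWithinAt, tendsto_iff_dist_tendsto_zero]
  apply squeeze_zero' (Eventually.of_forall fun s => dist_nonneg)
  · filter_upwards [self_mem_nhdsWithin] with s hs
    calc dist (S (t - s) (w s)) (S (t - s₀) (w s₀))
        ≤ dist (S (t - s) (w s)) (S (t - s) (w s₀)) +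
          dist (S (t - s) (w s₀)) (S (t - s₀) (w s₀)) := dist_triangle _ _ _
      _ ≤ dist (w s) (w s₀) + dist (S (t - s) (w s₀)) (S (t - s₀) (w s₀)) := by
          gcongr
          rw [dist_eq_norm, dist_eq_norm, ← map_sub]
          exact sgNorm hpos hone (by linarith [hs.2, hs.1] : (0:ℝ) ≤ t - s) _
  · simpa using hd1.add hd2

lemma ii_of_contOn {X : Type*} [NormedAddCommGroup X] {t : ℝ} (ht : 0 ≤ t) {w : ℝ → X}
    (hw : ContinuousOn w (Icc 0 t)) : IntervalIntegrable w MeasureTheory.volume 0 t := by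
  apply ContinuousOn.intervalIntegrable
  rwa [uIcc_of_le ht]

lemma integral_apply {t : ℝ} {w : ℝ → C(E, ℝ)} (hw : IntervalIntegrable w MeasureTheory.volume 0 t)
    (x : E) : (∫ s in (0:ℝ)..t, w s) x = ∫ s in (0:ℝ)..t, w s x :=
  ((ContinuousMap.evalCLM (R := ℝ) x).intervalIntegral_comp_comm hw).symm

lemma integral_nonneg_cm {t : ℝ} (ht : 0 ≤ t) {w : ℝ → C(E, ℝ)}
    (hw : ContinuousOn w (Icc 0 t)) (h : ∀ s ∈ Icc 0 t, 0 ≤ w s) :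
    0 ≤ ∫ s in (0:ℝ)..t, w s := by
  rw [ContinuousMap.le_def]
  intro x
  have hev : ContinuousOn (fun s => w s x) (Icc 0 t) :=
    (continuous_eval_const x).comp_continuousOn hw
  rw [ContinuousMap.zero_apply, integral_apply (ii_of_contOn ht hw) x]
  apply intervalIntegral.integral_nonneg ht
  intro s hs
  exact (ContinuousMap.le_def.mp (h s hs)) x

lemma integral_le_smul_one {t : ℝ} (ht : 0 ≤ t) {w : ℝ → C(E, ℝ)} {c : ℝ → ℝ}
    (hw : ContinuousOn w (Icc 0 t)) (hc : Continuous c)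
    (h : ∀ s ∈ Icc 0 t, w s ≤ c s • (1 : C(E, ℝ))) :
    ∫ s in (0:ℝ)..t, w s ≤ (∫ s in (0:ℝ)..t, c s) • (1 : C(E, ℝ)) := by
  rw [ContinuousMap.le_def]
  intro x
  have hev : ContinuousOn (fun s => w s x) (Icc 0 t) :=
    (continuous_eval_const x).comp_continuousOn hw
  simp only [ContinuousMap.smul_apply, ContinuousMap.one_apply, smul_eq_mul, mul_one]
  rw [integral_apply (ii_of_contOn ht hw) x]
  apply intervalIntegral.integral_mono_on ht (ii_of_contOn ht hev) (hc.intervalIntegrable 0 t)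
  intro s hs
  have := ContinuousMap.le_def.mp (h s hs) x
  simpa using this

noncomputable def clampCM (g : C(E, ℝ)) : C(E, ℝ) := (g ⊔ 0) ⊓ 1

lemma clampCM_apply (g : C(E, ℝ)) (x : E) : clampCM g x = min (max (g x) 0) 1 := by
  simp [clampCM, ContinuousMap.inf_apply, ContinuousMap.sup_apply]

lemma clampCM_nonneg (g : C(E, ℝ)) : 0 ≤ clampCM g := by
  rw [ContinuousMap.le_def]; intro x
  rw [ContinuousMap.zero_apply, clampCM_apply]
  simp [le_min_iff, le_max_iff]

lemma clampCM_le_one (g : C(E, ℝ)) : clampCM g ≤ 1 := by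
  rw [ContinuousMap.le_def]; intro x
  rw [ContinuousMap.one_apply, clampCM_apply]
  exact min_le_right _ _

lemma real_clamp_nearest {a z : ℝ} (h0 : 0 ≤ z) (h1 : z ≤ 1) :
    |a - min (max a 0) 1| ≤ |a - z| := by
  rcases le_total a 0 with h | h
  · rw [max_eq_right h, min_eq_left (by norm_num : (0:ℝ) ≤ 1)]
    rw [abs_of_nonpos (by linarith), abs_of_nonpos (by linarith)]
    linarith
  · rw [max_eq_left h]
    rcases le_total a 1 with h' | h'
    · rw [min_eq_left h']
      simp [abs_nonneg]
    · rw [min_eq_right h']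
      rw [abs_of_nonneg (by linarith), abs_of_nonneg (by linarith)]
      linarith

lemma norm_sub_clampCM_le {g z : C(E, ℝ)} (h0 : 0 ≤ z) (h1 : z ≤ 1) :
    ‖g - clampCM g‖ ≤ ‖g - z‖ := by
  rw [ContinuousMap.norm_le _ (norm_nonneg _)]
  intro x
  have h := real_clamp_nearest (a := g x) (ContinuousMap.le_def.mp h0 x) (ContinuousMap.le_def.mp h1 x)
  calc ‖(g - clampCM g) x‖ = |g x - min (max (g x) 0) 1| := by
        rw [ContinuousMap.sub_apply, clampCM_apply]; rfl
    _ ≤ |g x - z x| := h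
    _ ≤ ‖g - z‖ := by
        have := (g - z).norm_coe_le_norm x
        simpa [ContinuousMap.sub_apply] using this

lemma clampCM_lipschitz (a b : C(E, ℝ)) : ‖clampCM a - clampCM b‖ ≤ ‖a - b‖ := by
  rw [ContinuousMap.norm_le _ (norm_nonneg _)]
  intro x
  rw [ContinuousMap.sub_apply, clampCM_apply, clampCM_apply]
  calc ‖min (max (a x) 0) 1 - min (max (b x) 0) 1‖
      = |min (max (a x) 0) 1 - min (max (b x) 0) 1| := rfl
    _ ≤ max |max (a x) 0 - max (b x) 0| |(1:ℝ) - 1| := abs_min_sub_min_le_max _ _ _ _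
    _ ≤ |max (a x) 0 - max (b x) 0| := by simp
    _ ≤ |a x - b x| := abs_max_sub_max_le_abs _ _ _
    _ ≤ ‖a - b‖ := by
        have := (a - b).norm_coe_le_norm x
        simpa [ContinuousMap.sub_apply] using this

lemma expInt (lam t r : ℝ) :
    ∫ s in r..t, lam * Real.exp (-(lam * (t - s))) = 1 - Real.exp (-(lam * (t - r))) := by
  have hd : ∀ s ∈ uIcc r t,
      HasDerivAt (fun s => Real.exp (-(lam * (t - s)))) (lam * Real.exp (-(lam * (t - s)))) s := by
    intro s _
    have h1 : HasDerivAt (fun s : ℝ => -(lam * (t - s))) lam s := by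
      have : HasDerivAt (fun s : ℝ => lam * s - lam * t) lam s := by
        simpa using ((hasDerivAt_id s).const_mul lam).sub_const (lam * t)
      convert this using 2 with s
      ring
    have := h1.exp
    simpa [mul_comm] using this
  have hint : IntervalIntegrable (fun s => lam * Real.exp (-(lam * (t - s))))
      MeasureTheory.volume r t := (Continuous.intervalIntegrable (by continuity) r t)
  have := intervalIntegral.integral_eq_sub_of_hasDerivAt hd hint
  rw [this]
  simp

lemma cont_primitive {X : Type*} [NormedAddCommGroup X] [NormedSpace ℝ X] [CompleteSpace X]
    {w : ℝ → X} (hw : Continuous w) : ∀ s : ℝ, HasDerivAt (fun s => ∫ r in (0:ℝ)..s, w r) (w s) s :=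
  fun s => intervalIntegral.integral_hasDerivAt_right (hw.intervalIntegrable 0 s)
    (hw.stronglyMeasurable.stronglyMeasurableAtFilter) hw.continuousAt

lemma swap_sep {c : ℝ → ℝ} (hc : Continuous c) {w : ℝ → C(E, ℝ)} (hw : Continuous w) (t : ℝ) :
    ∫ s in (0:ℝ)..t, c s • (∫ r in (0:ℝ)..s, w r) =
      ∫ r in (0:ℝ)..t, (∫ s in r..t, c s) • w r := by
  set Cf : ℝ → ℝ := fun s => ∫ x in (0:ℝ)..s, c x with hCf
  set W : ℝ → C(E, ℝ) := fun s => ∫ r in (0:ℝ)..s, w r with hW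
  have hCd : ∀ s : ℝ, HasDerivAt Cf (c s) s := cont_primitive hc
  have hWd : ∀ s : ℝ, HasDerivAt W (w s) s := cont_primitive hw
  have hCc : Continuous Cf := continuous_iff_continuousAt.mpr fun s => (hCd s).continuousAt
  have hWc : Continuous W := continuous_iff_continuousAt.mpr fun s => (hWd s).continuousAt
  have hP : ∀ s ∈ uIcc (0:ℝ) t, HasDerivAt (fun s => Cf s • W s) (Cf s • w s + c s • W s) s :=
    fun s _ => by simpa [add_comm] using (hCd s).fun_smul (hWd s)
  have hint : IntervalIntegrable (fun s => Cf s • w s + c s • W s) MeasureTheory.volume 0 t :=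
    ((hCc.smul hw).add (hc.smul hWc)).intervalIntegrable 0 t
  have key := intervalIntegral.integral_eq_sub_of_hasDerivAt hP hint
  have hC0 : Cf 0 = 0 := intervalIntegral.integral_same
  rw [intervalIntegral.integral_add ((hCc.fun_smul hw).intervalIntegrable 0 t)
    ((hc.fun_smul hWc).intervalIntegrable 0 t), hC0, zero_smul, sub_zero] at key
  have lhs_eq : ∫ s in (0:ℝ)..t, c s • W s = Cf t • W t - ∫ s in (0:ℝ)..t, Cf s • w s := by
    rw [← key]; abel
  have rhs_eq : ∫ r in (0:ℝ)..t, (∫ s in r..t, c s) • w r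
      = Cf t • W t - ∫ s in (0:ℝ)..t, Cf s • w s := by
    have h1 : ∀ r : ℝ, (∫ s in r..t, c s) = Cf t - Cf r := by
      intro r
      rw [hCf]
      rw [← intervalIntegral.integral_interval_sub_left (hc.intervalIntegrable 0 t)
        (hc.intervalIntegrable 0 r)]
    calc ∫ r in (0:ℝ)..t, (∫ s in r..t, c s) • w r
        = ∫ r in (0:ℝ)..t, (Cf t • w r - Cf r • w r) := by
          apply intervalIntegral.integral_congr
          intro r _
          dsimp only
          rw [h1 r, sub_smul]
      _ = Cf t • W t - ∫ s in (0:ℝ)..t, Cf s • w s := by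
          rw [intervalIntegral.integral_sub ((continuous_const.fun_smul hw).intervalIntegrable 0 t)
            ((hCc.fun_smul hw).intervalIntegrable 0 t), intervalIntegral.integral_smul, hW]
  rw [lhs_eq, rhs_eq]

lemma lam_id {S : ℝ → C(E, ℝ) →L[ℝ] C(E, ℝ)} (hsemi : IsSemigroupOn S)
    (hscont : StronglyContinuousSG S) (hpos : PositiveSG S)
    (hone : ∀ t : ℝ, 0 ≤ t → S t 1 = 1) {α β f : C(E, ℝ)} {u : ℝ → C(E, ℝ)}
    (hu : IsMildSolution S α β f u) (lam : ℝ) {t : ℝ} (ht : 0 ≤ t) :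
    u t = Real.exp (-(lam * t)) • S t f +
      ∫ s in (0:ℝ)..t, Real.exp (-(lam * (t - s))) •
        S (t - s) (lam • u s + (β * u s - α * u s ^ 2)) := by
  set g : ℝ → C(E, ℝ) := fun s => β * u s - α * u s ^ 2 with hg
  have huc : ContinuousOn u (Icc 0 t) := hu.1.mono Icc_subset_Ici_self
  have hgc : ContinuousOn g (Icc 0 t) :=
    (continuousOn_const.mul huc).sub (continuousOn_const.mul (huc.pow 2))
  set π : ℝ → ℝ := fun r => min (max r 0) t with hπ
  have hπc : Continuous π := (continuous_id.max continuous_const).min continuous_const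
  have hπmem : ∀ r, π r ∈ Icc 0 t := fun r =>
    ⟨le_min (le_max_right _ _) ht, min_le_right _ _⟩
  have hπid : ∀ r ∈ Icc (0:ℝ) t, π r = r := fun r hr => by
    rw [hπ]; dsimp only; rw [max_eq_left hr.1, min_eq_left hr.2]
  set wex : ℝ → C(E, ℝ) := fun r => S (t - π r) (g (π r)) with hwex
  have hwex_cont : Continuous wex :=
    (contOn_integrand hsemi hscont hpos hone ht hgc).comp_continuous hπc hπmem
  have hwex_eq : ∀ r ∈ Icc (0:ℝ) t, wex r = S (t - r) (g r) := fun r hr => by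
    rw [hwex]; dsimp only; rw [hπid r hr]
  -- step 1
  have eq1 : ∀ s ∈ Icc (0:ℝ) t, S (t - s) (u s) = S t f + ∫ r in (0:ℝ)..s, wex r := by
    intro s hs
    rw [hu.2 s hs.1, map_add]
    congr 1
    · have h := hsemi.2 (t - s) s (by linarith [hs.2]) hs.1
      have h2 : (t - s) + s = t := by ring
      rw [h2] at h
      rw [h]; rfl
    · have hii : IntervalIntegrable (fun r => S (s - r) (g r)) MeasureTheory.volume 0 s :=
        ii_of_contOn hs.1 (contOn_integrand hsemi hscont hpos hone hs.1
          (hgc.mono (Icc_subset_Icc le_rfl hs.2)))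
      rw [← ContinuousLinearMap.intervalIntegral_comp_comm _ hii]
      apply intervalIntegral.integral_congr
      intro r hr
      rw [uIcc_of_le hs.1] at hr
      have h := hsemi.2 (t - s) (s - r) (by linarith [hs.2]) (by linarith [hr.1, hr.2])
      have h2 : (t - s) + (s - r) = t - r := by ring
      rw [h2] at h
      dsimp only
      rw [hwex_eq r ⟨hr.1, le_trans hr.2 hs.2⟩, h]
      rfl
  -- notation for scalars
  set c1 : ℝ → ℝ := fun s => lam * Real.exp (-(lam * (t - s))) with hc1def
  set c2 : ℝ → ℝ := fun s => Real.exp (-(lam * (t - s))) with hc2def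
  have hc2c : Continuous c2 :=
    Real.continuous_exp.comp (continuous_const.mul (continuous_const.sub continuous_id)).neg
  have hc1c : Continuous c1 := continuous_const.mul hc2c
  set W : ℝ → C(E, ℝ) := fun s => ∫ r in (0:ℝ)..s, wex r with hWdef
  have hWc : Continuous W :=
    continuous_iff_continuousAt.mpr fun s => (cont_primitive hwex_cont s).continuousAt
  -- integrand identity
  have e_int : ∀ s ∈ uIcc (0:ℝ) t,
      c2 s • S (t - s) (lam • u s + g s)
        = c1 s • S t f + (c1 s • W s + c2 s • wex s) := by
    intro s hs
    rw [uIcc_of_le ht] at hs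
    rw [map_add, _root_.map_smul, eq1 s hs, ← hwex_eq s hs]
    rw [hc1def]
    dsimp only
    rw [hc2def]
    dsimp only
    module
  -- split the integral
  have hsplit : ∫ s in (0:ℝ)..t, c2 s • S (t - s) (lam • u s + g s)
      = (∫ s in (0:ℝ)..t, c1 s • S t f) +
        ((∫ s in (0:ℝ)..t, c1 s • W s) + ∫ s in (0:ℝ)..t, c2 s • wex s) := by
    rw [intervalIntegral.integral_congr e_int]
    rw [intervalIntegral.integral_add ((hc1c.fun_smul continuous_const).intervalIntegrable 0 t)
      (((hc1c.fun_smul hWc).fun_add (hc2c.fun_smul hwex_cont)).intervalIntegrable 0 t)]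
    rw [intervalIntegral.integral_add ((hc1c.fun_smul hWc).intervalIntegrable 0 t)
      ((hc2c.fun_smul hwex_cont).intervalIntegrable 0 t)]
  have I1 : ∫ s in (0:ℝ)..t, c1 s • S t f = (1 - Real.exp (-(lam * t))) • S t f := by
    rw [intervalIntegral.integral_smul_const]
    rw [hc1def]
    dsimp only
    rw [expInt lam t 0]
    norm_num
  have I2 : (∫ s in (0:ℝ)..t, c1 s • W s)
      = ∫ r in (0:ℝ)..t, ((1:ℝ) - Real.exp (-(lam * (t - r)))) • wex r := by
    rw [hWdef]
    have := swap_sep hc1c hwex_cont t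
    dsimp only at this ⊢
    rw [this]
    apply intervalIntegral.integral_congr
    intro r _
    rw [hc1def]
    dsimp only
    rw [expInt lam t r]
  have I23 : (∫ s in (0:ℝ)..t, c1 s • W s) + (∫ s in (0:ℝ)..t, c2 s • wex s)
      = ∫ r in (0:ℝ)..t, wex r := by
    rw [I2, ← intervalIntegral.integral_add
      (((continuous_const.fun_sub hc2c).fun_smul hwex_cont).intervalIntegrable 0 t)
      ((hc2c.fun_smul hwex_cont).intervalIntegrable 0 t)]
    apply intervalIntegral.integral_congr
    intro r _
    rw [hc2def]
    dsimp only
    module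
  have Iwex : ∫ r in (0:ℝ)..t, wex r = u t - S t f := by
    have h := hu.2 t ht
    have : ∫ r in (0:ℝ)..t, wex r = ∫ s in (0:ℝ)..t, S (t - s) (β * u s - α * u s ^ 2) := by
      apply intervalIntegral.integral_congr
      intro r hr
      rw [uIcc_of_le ht] at hr
      exact hwex_eq r hr
    rw [this, h]
    abel
  rw [hsplit, I1, I23, Iwex]
  module

lemma smul_nonneg_cm {c : ℝ} (hc : 0 ≤ c) {g : C(E, ℝ)} (h : 0 ≤ g) : 0 ≤ c • g := by
  rw [ContinuousMap.le_def]; intro x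
  simp only [ContinuousMap.zero_apply, ContinuousMap.smul_apply, smul_eq_mul]
  exact mul_nonneg hc (ContinuousMap.le_def.mp h x)

lemma smul_mono_cm {c : ℝ} (hc : 0 ≤ c) {g h : C(E, ℝ)} (hle : g ≤ h) : c • g ≤ c • h := by
  rw [ContinuousMap.le_def]; intro x
  simp only [ContinuousMap.smul_apply, smul_eq_mul]
  exact mul_le_mul_of_nonneg_left (ContinuousMap.le_def.mp hle x) hc

lemma norm_le_one_cm {g : C(E, ℝ)} (h0 : 0 ≤ g) (h1 : g ≤ 1) : ‖g‖ ≤ 1 := by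
  rw [ContinuousMap.norm_le _ zero_le_one]
  intro x
  rw [Real.norm_eq_abs, abs_le]
  constructor
  · have := ContinuousMap.le_def.mp h0 x; simp at this; linarith
  · have := ContinuousMap.le_def.mp h1 x; simpa using this

lemma phi_range {α β : C(E, ℝ)} (hα : 0 ≤ α) (hβα : β ≤ α) {y : C(E, ℝ)}
    (h0 : 0 ≤ y) (h1 : y ≤ 1) :
    0 ≤ (‖α‖ + ‖β‖) • y + (β * y - α * y ^ 2) ∧
      (‖α‖ + ‖β‖) • y + (β * y - α * y ^ 2) ≤ (‖α‖ + ‖β‖) • (1 : C(E, ℝ)) := by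
  constructor <;> rw [ContinuousMap.le_def] <;> intro x <;>
  · have ha0 : 0 ≤ α x := ContinuousMap.le_def.mp hα x
    have hba : β x ≤ α x := ContinuousMap.le_def.mp hβα x
    have hb : |β x| ≤ ‖β‖ := by
      have := β.norm_coe_le_norm x; rwa [Real.norm_eq_abs] at this
    have ha : |α x| ≤ ‖α‖ := by
      have := α.norm_coe_le_norm x; rwa [Real.norm_eq_abs] at this
    rw [abs_le] at hb ha
    have hy0 : 0 ≤ y x := by simpa using ContinuousMap.le_def.mp h0 x
    have hy1 : y x ≤ 1 := by simpa using ContinuousMap.le_def.mp h1 x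
    simp only [ContinuousMap.zero_apply, ContinuousMap.add_apply, ContinuousMap.smul_apply,
      ContinuousMap.sub_apply, ContinuousMap.mul_apply, ContinuousMap.pow_apply,
      ContinuousMap.one_apply, smul_eq_mul, mul_one]
    nlinarith [mul_nonneg hy0 hy0, mul_nonneg (mul_nonneg ha0 hy0) hy0,
      mul_le_mul_of_nonneg_right hba hy0, mul_nonneg ha0 hy0,
      mul_le_mul_of_nonneg_right (mul_le_mul_of_nonneg_right hy1 ha0) hy0,
      mul_nonneg (sub_nonneg.mpr hy1) (sub_nonneg.mpr (by nlinarith : α x * y x ≤ ‖α‖ + ‖β‖))]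

lemma phi_lip (α β : C(E, ℝ)) (lam : ℝ) (a b : C(E, ℝ)) :
    ‖(lam • a + (β * a - α * a ^ 2)) - (lam • b + (β * b - α * b ^ 2))‖
      ≤ (|lam| + ‖β‖ + ‖α‖ * (‖a‖ + ‖b‖)) * ‖a - b‖ := by
  have key : (lam • a + (β * a - α * a ^ 2)) - (lam • b + (β * b - α * b ^ 2))
      = lam • (a - b) + (β * (a - b) - α * ((a + b) * (a - b))) := by
    ext x
    simp only [ContinuousMap.add_apply, ContinuousMap.sub_apply, ContinuousMap.smul_apply,
      ContinuousMap.mul_apply, ContinuousMap.pow_apply, smul_eq_mul]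
    ring
  rw [key]
  have h1 : ‖lam • (a - b)‖ = |lam| * ‖a - b‖ := by
    have := norm_smul lam (a - b)
    rwa [Real.norm_eq_abs] at this
  have h2 : ‖β * (a - b)‖ ≤ ‖β‖ * ‖a - b‖ := norm_mul_le _ _
  have h3 : ‖α * ((a + b) * (a - b))‖ ≤ ‖α‖ * ((‖a‖ + ‖b‖) * ‖a - b‖) := by
    calc ‖α * ((a + b) * (a - b))‖ ≤ ‖α‖ * ‖(a + b) * (a - b)‖ := norm_mul_le _ _
      _ ≤ ‖α‖ * (‖a + b‖ * ‖a - b‖) := by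
          gcongr
          exact norm_mul_le _ _
      _ ≤ ‖α‖ * ((‖a‖ + ‖b‖) * ‖a - b‖) := by
          gcongr
          exact norm_add_le _ _
  calc ‖lam • (a - b) + (β * (a - b) - α * ((a + b) * (a - b)))‖
      ≤ ‖lam • (a - b)‖ + ‖β * (a - b) - α * ((a + b) * (a - b))‖ := norm_add_le _ _
    _ ≤ ‖lam • (a - b)‖ + (‖β * (a - b)‖ + ‖α * ((a + b) * (a - b))‖) := by
        gcongr
        exact norm_sub_le _ _
    _ ≤ |lam| * ‖a - b‖ + (‖β‖ * ‖a - b‖ + ‖α‖ * ((‖a‖ + ‖b‖) * ‖a - b‖)) := by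
        rw [h1]; gcongr
    _ = (|lam| + ‖β‖ + ‖α‖ * (‖a‖ + ‖b‖)) * ‖a - b‖ := by ring

lemma add_le_add_cm {a b c d : C(E, ℝ)} (h1 : a ≤ b) (h2 : c ≤ d) : a + c ≤ b + d := by
  rw [ContinuousMap.le_def]; intro x
  simp only [ContinuousMap.add_apply]
  exact add_le_add (ContinuousMap.le_def.mp h1 x) (ContinuousMap.le_def.mp h2 x)

lemma add_nonneg_cm {a b : C(E, ℝ)} (h1 : 0 ≤ a) (h2 : 0 ≤ b) : 0 ≤ a + b := by
  have := add_le_add_cm h1 h2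
  simpa using this

end Aux16

open Aux16

/-- Used in the proof of Lemma 1: if `β ≤ α` and `0 ≤ f ≤ 1`, then the mild solution of
`∂u/∂t = G u + β u - α u²`, `u 0 = f`, satisfies `0 ≤ u t ≤ 1` for all `t ≥ 0`. -/
theorem statement16 (S : ℝ → C(E, ℝ) →L[ℝ] C(E, ℝ))
    (D : Set C(E, ℝ)) (G : C(E, ℝ) → C(E, ℝ))
    (hS : IsFellerSG S) (hgen : IsGeneratorOf S D G)
    (α β : C(E, ℝ)) (hα : 0 ≤ α) (hβα : β ≤ α)
    (f : C(E, ℝ)) (hf0 : 0 ≤ f) (hf1 : f ≤ 1)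
    (u : ℝ → C(E, ℝ)) (hu : IsMildSolution S α β f u) :
    ∀ t ∈ Ici (0 : ℝ), 0 ≤ u t ∧ u t ≤ 1 := by
  obtain ⟨hsemi, hscont, hpos, hone⟩ := hS
  intro T hT
  rw [mem_Ici] at hT
  set lam : ℝ := ‖α‖ + ‖β‖ with hlam
  have hlam0 : 0 ≤ lam := by positivity
  have hucT : ContinuousOn u (Icc 0 T) := hu.1.mono Icc_subset_Ici_self
  obtain ⟨B, hB⟩ := (isCompact_Icc (a := (0:ℝ)) (b := T)).exists_bound_of_continuousOn hucT
  have hB0 : 0 ≤ B := le_trans (norm_nonneg (u 0)) (hB 0 ⟨le_refl 0, hT⟩)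
  set K : ℝ := lam + ‖β‖ + ‖α‖ * (B + 1) with hK
  have hK0 : 0 ≤ K := by positivity
  set v : ℝ → C(E, ℝ) := fun s => clampCM (u s) with hv
  set eps : ℝ → ℝ := fun s => ‖u s - v s‖ with heps
  have heps_nonneg : ∀ s, 0 ≤ eps s := fun s => norm_nonneg _
  have hclip : LipschitzWith 1 (clampCM (E := E)) := LipschitzWith.of_dist_le_mul fun a b => by
    rw [NNReal.coe_one, one_mul, dist_eq_norm, dist_eq_norm]; exact clampCM_lipschitz a b
  have hvcT : ContinuousOn v (Icc 0 T) := hclip.continuous.comp_continuousOn hucT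
  have hepscT : ContinuousOn eps (Icc 0 T) := (hucT.sub hvcT).norm
  have hv0 : ∀ s, 0 ≤ v s := fun s => clampCM_nonneg (u s)
  have hv1 : ∀ s, v s ≤ 1 := fun s => clampCM_le_one (u s)
  -- the key estimate
  have key : ∀ t ∈ Icc (0:ℝ) T, eps t ≤ K * ∫ s in (0:ℝ)..t, eps s := by
    intro t htm
    obtain ⟨ht0, htT⟩ := htm
    have hsub : Icc (0:ℝ) t ⊆ Icc 0 T := Icc_subset_Icc le_rfl htT
    have huct : ContinuousOn u (Icc 0 t) := hucT.mono hsub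
    have hvct : ContinuousOn v (Icc 0 t) := hvcT.mono hsub
    have hepsct : ContinuousOn eps (Icc 0 t) := hepscT.mono hsub
    have hΦu : ContinuousOn (fun s => lam • u s + (β * u s - α * u s ^ 2)) (Icc 0 t) :=
      (huct.const_smul lam).add
        ((continuousOn_const.mul huct).sub (continuousOn_const.mul (huct.pow 2)))
    have hΦv : ContinuousOn (fun s => lam • v s + (β * v s - α * v s ^ 2)) (Icc 0 t) :=
      (hvct.const_smul lam).add
        ((continuousOn_const.mul hvct).sub (continuousOn_const.mul (hvct.pow 2)))
    have hc2c : Continuous (fun s : ℝ => Real.exp (-(lam * (t - s)))) :=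
      Real.continuous_exp.comp (continuous_const.mul (continuous_const.sub continuous_id)).neg
    have hwu : ContinuousOn
        (fun s => Real.exp (-(lam * (t - s))) •
          S (t - s) (lam • u s + (β * u s - α * u s ^ 2))) (Icc 0 t) :=
      (hc2c.continuousOn).smul (contOn_integrand hsemi hscont hpos hone ht0 hΦu)
    have hwv : ContinuousOn
        (fun s => Real.exp (-(lam * (t - s))) •
          S (t - s) (lam • v s + (β * v s - α * v s ^ 2))) (Icc 0 t) :=
      (hc2c.continuousOn).smul (contOn_integrand hsemi hscont hpos hone ht0 hΦv)
    set z : C(E, ℝ) := Real.exp (-(lam * t)) • S t f +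
      ∫ s in (0:ℝ)..t, Real.exp (-(lam * (t - s))) •
        S (t - s) (lam • v s + (β * v s - α * v s ^ 2)) with hz
    have hφv_bounds : ∀ s, 0 ≤ lam • v s + (β * v s - α * v s ^ 2) ∧
        lam • v s + (β * v s - α * v s ^ 2) ≤ lam • (1 : C(E, ℝ)) := fun s =>
      phi_range hα hβα (hv0 s) (hv1 s)
    have hz0 : 0 ≤ z := by
      have h1 : 0 ≤ Real.exp (-(lam * t)) • S t f :=
        smul_nonneg_cm (Real.exp_nonneg _) (hpos t ht0 f hf0)
      have h2 : 0 ≤ ∫ s in (0:ℝ)..t, Real.exp (-(lam * (t - s))) •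
          S (t - s) (lam • v s + (β * v s - α * v s ^ 2)) := by
        apply integral_nonneg_cm ht0 hwv
        intro s hs
        exact smul_nonneg_cm (Real.exp_nonneg _)
          (hpos (t - s) (by linarith [hs.2]) _ (hφv_bounds s).1)
      rw [hz]
      exact add_nonneg_cm h1 h2
    have hz1 : z ≤ 1 := by
      have h1 : Real.exp (-(lam * t)) • S t f ≤ Real.exp (-(lam * t)) • (1 : C(E, ℝ)) := by
        apply smul_mono_cm (Real.exp_nonneg _)
        have := sgMono hpos ht0 hf1
        rwa [hone t ht0] at this
      have h2 : (∫ s in (0:ℝ)..t, Real.exp (-(lam * (t - s))) •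
            S (t - s) (lam • v s + (β * v s - α * v s ^ 2)))
          ≤ (∫ s in (0:ℝ)..t, lam * Real.exp (-(lam * (t - s)))) • (1 : C(E, ℝ)) := by
        apply integral_le_smul_one ht0 hwv (continuous_const.fun_mul hc2c)
        intro s hs
        have hts : (0:ℝ) ≤ t - s := by linarith [hs.2]
        have hm := sgMono hpos hts (hφv_bounds s).2
        rw [_root_.map_smul, hone (t - s) hts] at hm
        have h3 := smul_mono_cm (Real.exp_nonneg (-(lam * (t - s)))) hm
        apply h3.trans
        rw [smul_smul, mul_comm]
      have hsum := add_le_add_cm h1 h2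
      rw [hz]
      apply hsum.trans
      rw [expInt lam t 0, sub_zero, ← add_smul]
      norm_num
    have hnear : eps t ≤ ‖u t - z‖ := norm_sub_clampCM_le hz0 hz1
    have hid := lam_id hsemi hscont hpos hone hu lam ht0
    have hdiff : u t - z = ∫ s in (0:ℝ)..t,
        (Real.exp (-(lam * (t - s))) • S (t - s) (lam • u s + (β * u s - α * u s ^ 2)) -
          Real.exp (-(lam * (t - s))) • S (t - s) (lam • v s + (β * v s - α * v s ^ 2))) := by
      rw [intervalIntegral.integral_sub (ii_of_contOn ht0 hwu) (ii_of_contOn ht0 hwv), hz]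
      conv_lhs => rw [hid]
      abel
    have hbound : ‖u t - z‖ ≤ K * ∫ s in (0:ℝ)..t, eps s := by
      rw [hdiff]
      have hKeps_ii : IntervalIntegrable (fun s => K * eps s) MeasureTheory.volume 0 t :=
        ii_of_contOn ht0 (continuousOn_const.mul hepsct)
      have hptw : ∀ s ∈ Set.uIoc (0:ℝ) t,
          ‖Real.exp (-(lam * (t - s))) • S (t - s) (lam • u s + (β * u s - α * u s ^ 2)) -
            Real.exp (-(lam * (t - s))) • S (t - s) (lam • v s + (β * v s - α * v s ^ 2))‖
          ≤ K * eps s := by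
        intro s hs
        rw [uIoc_of_le ht0] at hs
        have hsmem : s ∈ Icc (0:ℝ) t := ⟨hs.1.le, hs.2⟩
        have hts : (0:ℝ) ≤ t - s := by linarith [hs.2]
        rw [← smul_sub, ← map_sub]
        have hns := norm_smul (Real.exp (-(lam * (t - s))))
          (S (t - s) ((lam • u s + (β * u s - α * u s ^ 2)) -
            (lam • v s + (β * v s - α * v s ^ 2))))
        rw [hns]
        have he1 : ‖Real.exp (-(lam * (t - s)))‖ ≤ 1 := by
          rw [Real.norm_eq_abs, abs_of_nonneg (Real.exp_nonneg _)]
          apply Real.exp_le_one_iff.mpr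
          simp only [neg_nonpos]
          positivity
        have hlip : ‖S (t - s) ((lam • u s + (β * u s - α * u s ^ 2)) -
            (lam • v s + (β * v s - α * v s ^ 2)))‖ ≤ K * eps s := by
          have hn1 := sgNorm hpos hone hts ((lam • u s + (β * u s - α * u s ^ 2)) -
            (lam • v s + (β * v s - α * v s ^ 2)))
          have hn2 := phi_lip α β lam (u s) (v s)
          have hus : ‖u s‖ ≤ B := hB s (hsub hsmem)
          have hvs : ‖v s‖ ≤ 1 := norm_le_one_cm (hv0 s) (hv1 s)
          have hco : (|lam| + ‖β‖ + ‖α‖ * (‖u s‖ + ‖v s‖)) * ‖u s - v s‖ ≤ K * eps s := by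
            rw [heps]
            apply mul_le_mul_of_nonneg_right _ (norm_nonneg _)
            rw [abs_of_nonneg hlam0, hK]
            have : ‖α‖ * (‖u s‖ + ‖v s‖) ≤ ‖α‖ * (B + 1) := by
              apply mul_le_mul_of_nonneg_left _ (norm_nonneg α)
              linarith
            linarith
          exact hn1.trans (hn2.trans hco)
        calc ‖Real.exp (-(lam * (t - s)))‖ * ‖S (t - s) ((lam • u s + (β * u s - α * u s ^ 2)) -
              (lam • v s + (β * v s - α * v s ^ 2)))‖
            ≤ 1 * (K * eps s) := by
              apply mul_le_mul he1 hlip (norm_nonneg _) zero_le_one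
          _ = K * eps s := one_mul _
      calc ‖∫ s in (0:ℝ)..t,
          (Real.exp (-(lam * (t - s))) • S (t - s) (lam • u s + (β * u s - α * u s ^ 2)) -
            Real.exp (-(lam * (t - s))) • S (t - s) (lam • v s + (β * v s - α * v s ^ 2)))‖
          ≤ |∫ s in (0:ℝ)..t, K * eps s| :=
            intervalIntegral.norm_integral_le_abs_of_norm_le
              (ae_restrict_of_forall_mem measurableSet_uIoc hptw) hKeps_ii
        _ = K * ∫ s in (0:ℝ)..t, eps s := by
            rw [abs_of_nonneg, intervalIntegral.integral_const_mul]
            apply intervalIntegral.integral_nonneg ht0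
            intro s _
            exact mul_nonneg hK0 (heps_nonneg s)
    linarith [hnear, hbound]
  -- Gronwall
  set π : ℝ → ℝ := fun r => min (max r 0) T with hπdef
  have hπc : Continuous π := (continuous_id.max continuous_const).min continuous_const
  have hπmem : ∀ r, π r ∈ Icc 0 T := fun r =>
    ⟨le_min (le_max_right _ _) hT, min_le_right _ _⟩
  have hπid : ∀ r ∈ Icc (0:ℝ) T, π r = r := fun r hr => by
    rw [hπdef]; dsimp only; rw [max_eq_left hr.1, min_eq_left hr.2]
  set epsT : ℝ → ℝ := fun s => eps (π s) with hepsT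
  have hepsTc : Continuous epsT := hepscT.comp_continuous hπc hπmem
  have hepsT_eq : ∀ s ∈ Icc (0:ℝ) T, epsT s = eps s := fun s hs => by
    rw [hepsT]; dsimp only; rw [hπid s hs]
  set ψ : ℝ → ℝ := fun x => ∫ s in (0:ℝ)..x, epsT s with hψdef
  have hψd : ∀ x : ℝ, HasDerivAt ψ (epsT x) x := cont_primitive hepsTc
  have hψc : Continuous ψ := continuous_iff_continuousAt.mpr fun x => (hψd x).continuousAt
  have hψ_eq : ∀ x ∈ Icc (0:ℝ) T, ψ x = ∫ s in (0:ℝ)..x, eps s := by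
    intro x hx
    apply intervalIntegral.integral_congr
    intro s hs
    rw [uIcc_of_le hx.1] at hs
    exact hepsT_eq s ⟨hs.1, le_trans hs.2 hx.2⟩
  have hψ_nonneg : ∀ x ∈ Icc (0:ℝ) T, 0 ≤ ψ x := by
    intro x hx
    apply intervalIntegral.integral_nonneg hx.1
    intro s _
    exact heps_nonneg _
  have bound : ∀ x ∈ Ico (0:ℝ) T, ‖epsT x‖ ≤ K * ‖ψ x‖ + 0 := by
    intro x hx
    have hxm : x ∈ Icc (0:ℝ) T := ⟨hx.1, hx.2.le⟩
    rw [Real.norm_eq_abs, abs_of_nonneg (by rw [hepsT_eq x hxm]; exact heps_nonneg x),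
      hepsT_eq x hxm, add_zero, Real.norm_eq_abs, abs_of_nonneg (hψ_nonneg x hxm)]
    rw [hψ_eq x hxm]
    exact key x hxm
  have gron := norm_le_gronwallBound_of_norm_deriv_right_le (δ := 0) (K := K) (ε := 0)
    (hψc.continuousOn)
    (fun x _ => (hψd x).hasDerivWithinAt) (by
      simp [hψdef, intervalIntegral.integral_same]) bound
  have hψT : ψ T = 0 := by
    have := gron T ⟨hT, le_refl T⟩
    rw [gronwallBound_ε0_δ0] at this
    have h0 := hψ_nonneg T ⟨hT, le_refl T⟩
    rw [Real.norm_eq_abs, abs_of_nonneg h0] at this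
    linarith
  have hepsT0 : eps T = 0 := by
    have h1 := key T ⟨hT, le_refl T⟩
    rw [← hψ_eq T ⟨hT, le_refl T⟩, hψT, mul_zero] at h1
    linarith [heps_nonneg T]
  have huv : u T = v T := by
    rw [heps] at hepsT0
    have := norm_sub_eq_zero_iff.mp (by dsimp only at hepsT0 ⊢; exact hepsT0)
    exact this
  rw [huv]
  exact ⟨hv0 T, hv1 T⟩
end
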